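/- arXiv:1607.00781 — 11 statements merged into one kernel-verified Lean document; each statement's English description precedes it below -/
import Mathlib

section
/- Let γ₁, η₁ > 0 and a, c ∈ (0,1), and set γ_n = γ₁ n^{−a}, η_n = η₁ n^{−c}, H_n = η₁ + ⋯ + η_n, Γ_n = γ₁ + ⋯ + γ_n. Then (η_n, γ_n) is an averaging system, i.e.: H_n → +∞ and Γ_n → +∞ as n → ∞; ∑_{n≥2} (1/H_n)·max(η_n/γ_n − η_{n−1}/γ_{n−1}, 0) < +∞; and ∑_{n≥1} (η_n/(H_n √γ_n))² < +∞. -/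
open Filter

private lemma aux_sum_lower {b p : ℝ} (hb : 0 < b) (hp : p ≤ 0) {f : ℕ → ℝ}
    (hf : ∀ k : ℕ, 1 ≤ k → f k = b * (k : ℝ) ^ p) {n : ℕ} (hn : 1 ≤ n) :
    b * (n : ℝ) ^ (1 + p) ≤ ∑ k ∈ Finset.Icc 1 n, f k := by
  have hnp : (0 : ℝ) < (n : ℝ) := by exact_mod_cast hn
  have h1 : b * (n : ℝ) ^ (1 + p) = ∑ _k ∈ Finset.Icc 1 n, b * (n : ℝ) ^ p := by
    rw [Finset.sum_const, Nat.card_Icc, Real.rpow_add hnp, Real.rpow_one]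
    simp only [Nat.add_sub_cancel, nsmul_eq_mul]
    ring
  rw [h1]
  apply Finset.sum_le_sum
  intro k hk
  rw [Finset.mem_Icc] at hk
  rw [hf k hk.1]
  have hkp : (0 : ℝ) < (k : ℝ) := by exact_mod_cast hk.1
  have : (n : ℝ) ^ p ≤ (k : ℝ) ^ p :=
    Real.rpow_le_rpow_of_nonpos hkp (by exact_mod_cast hk.2) hp
  exact mul_le_mul_of_nonneg_left this hb.le

private lemma aux_summable {p : ℝ} (hp : p < -1) :
    Summable (fun n : ℕ => ((n : ℝ) + 1) ^ p) := by
  have h := (Real.summable_nat_rpow (p := p)).mpr hp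
  have h2 := (summable_nat_add_iff 1).mpr h
  simpa using h2

private lemma aux_tendsto {b q : ℝ} (hb : 0 < b) (hq : 0 < q) :
    Tendsto (fun n : ℕ => b * (n : ℝ) ^ q) atTop atTop :=
  ((tendsto_rpow_atTop hq).comp tendsto_natCast_atTop_atTop).const_mul_atTop hb

/-- For polynomially decaying steps `γ n = γ₁ n^{-a}` and weights `η n = η₁ n^{-c}`
with `a, c ∈ (0,1)`, the pair `(η, γ)` is an averaging system. -/
theorem stmt_0 (γ₁ η₁ a c : ℝ) (hγ₁ : 0 < γ₁) (hη₁ : 0 < η₁)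
    (ha : a ∈ Set.Ioo (0 : ℝ) 1) (hc : c ∈ Set.Ioo (0 : ℝ) 1)
    (γ η H Γ : ℕ → ℝ)
    (hγ : ∀ n : ℕ, 1 ≤ n → γ n = γ₁ * (n : ℝ) ^ (-a))
    (hη : ∀ n : ℕ, 1 ≤ n → η n = η₁ * (n : ℝ) ^ (-c))
    (hH : ∀ n : ℕ, H n = ∑ k ∈ Finset.Icc 1 n, η k)
    (hΓ : ∀ n : ℕ, Γ n = ∑ k ∈ Finset.Icc 1 n, γ k) :
    Tendsto H atTop atTop ∧ Tendsto Γ atTop atTop ∧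
    Summable (fun n : ℕ => (1 / H (n + 2)) *
      max (η (n + 2) / γ (n + 2) - η (n + 1) / γ (n + 1)) 0) ∧
    Summable (fun n : ℕ => (η (n + 1) / (H (n + 1) * Real.sqrt (γ (n + 1)))) ^ 2) := by
  obtain ⟨ha0, ha1⟩ := ha
  obtain ⟨hc0, hc1⟩ := hc
  have hHlb : ∀ n : ℕ, 1 ≤ n → η₁ * (n : ℝ) ^ (1 + -c) ≤ H n := by
    intro n hn
    rw [hH]
    exact aux_sum_lower hη₁ (by linarith) hη hn
  have hΓlb : ∀ n : ℕ, 1 ≤ n → γ₁ * (n : ℝ) ^ (1 + -a) ≤ Γ n := by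
    intro n hn
    rw [hΓ]
    exact aux_sum_lower hγ₁ (by linarith) hγ hn
  have hHpos : ∀ n : ℕ, 1 ≤ n → 0 < H n := by
    intro n hn
    refine lt_of_lt_of_le ?_ (hHlb n hn)
    have hnp : (0 : ℝ) < (n : ℝ) := by exact_mod_cast hn
    positivity
  have htH : Tendsto H atTop atTop := by
    refine tendsto_atTop_mono' atTop ?_ (aux_tendsto hη₁ (by linarith : (0:ℝ) < 1 + -c))
    exact eventually_atTop.2 ⟨1, hHlb⟩
  have htΓ : Tendsto Γ atTop atTop := by
    refine tendsto_atTop_mono' atTop ?_ (aux_tendsto hγ₁ (by linarith : (0:ℝ) < 1 + -a))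
    exact eventually_atTop.2 ⟨1, hΓlb⟩
  refine ⟨htH, htΓ, ?_, ?_⟩
  · -- third component
    have hratio : ∀ k : ℕ, 1 ≤ k → η k / γ k = (η₁ / γ₁) * (k : ℝ) ^ (a - c) := by
      intro k hk
      have hk0 : (0 : ℝ) < (k : ℝ) := by exact_mod_cast hk
      rw [hγ k hk, hη k hk, mul_div_mul_comm, ← Real.rpow_sub hk0]
      congr 1
      ring
    refine Summable.of_nonneg_of_le (fun n => ?_) (fun n => ?_)
      ((aux_summable (p := a - 2) (by linarith)).mul_left (1 / γ₁))
    · have := hHpos (n + 2) (by omega)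
      positivity
    · have hx : (0 : ℝ) < (n : ℝ) + 1 := by positivity
      have hcast1 : ((n + 1 : ℕ) : ℝ) = (n : ℝ) + 1 := by push_cast; ring
      have hcast2 : ((n + 2 : ℕ) : ℝ) = ((n : ℝ) + 1) + 1 := by push_cast; ring
      have hr1 := hratio (n + 1) (by omega)
      have hr2 := hratio (n + 2) (by omega)
      rw [hcast1] at hr1
      rw [hcast2] at hr2
      set x : ℝ := (n : ℝ) + 1 with hxdef
      by_cases hac : a ≤ c
      · -- difference nonpositive, so max = 0
        have hle : η (n + 2) / γ (n + 2) - η (n + 1) / γ (n + 1) ≤ 0 := by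
          rw [hr1, hr2, sub_nonpos]
          have : (x + 1) ^ (a - c) ≤ x ^ (a - c) :=
            Real.rpow_le_rpow_of_nonpos hx (by linarith) (by linarith)
          have hηγ : 0 ≤ η₁ / γ₁ := by positivity
          exact mul_le_mul_of_nonneg_left this hηγ
        rw [max_eq_right hle]
        have : (0:ℝ) ≤ 1 / γ₁ * ((n:ℝ) + 1) ^ (a - 2) := by positivity
        simpa using this
      · push_neg at hac
        set p : ℝ := a - c with hpdef
        have hp0 : 0 < p := by simp [hpdef]; linarith
        have hp1 : p < 1 := by simp [hpdef]; linarith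
        -- Bernoulli: (x+1)^p ≤ x^p + p * x^(p-1)
        have hbern : (x + 1) ^ p ≤ x ^ p + p * x ^ (p - 1) := by
          have h1 : (1 + 1 / x) ^ p ≤ 1 + p * (1 / x) :=
            rpow_one_add_le_one_add_mul_self (by have := one_div_pos.mpr hx; linarith) hp0.le hp1.le
          have hrw : x + 1 = x * (1 + 1 / x) := by field_simp
          calc (x + 1) ^ p = x ^ p * (1 + 1 / x) ^ p := by
                rw [hrw, Real.mul_rpow hx.le (by positivity)]
            _ ≤ x ^ p * (1 + p * (1 / x)) :=
                mul_le_mul_of_nonneg_left h1 (by positivity)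
            _ = x ^ p + p * (x ^ p / x) := by ring
            _ = x ^ p + p * x ^ (p - 1) := by
                have hxe : x ^ (p - 1) = x ^ p / x := by
                  rw [Real.rpow_sub hx, Real.rpow_one]
                rw [hxe]
        have hdiff : η (n + 2) / γ (n + 2) - η (n + 1) / γ (n + 1)
            ≤ (η₁ / γ₁) * (p * x ^ (p - 1)) := by
          rw [hr1, hr2, ← mul_sub]
          have : (x + 1) ^ p - x ^ p ≤ p * x ^ (p - 1) := by linarith
          exact mul_le_mul_of_nonneg_left this (by positivity)
        have hmax : max (η (n + 2) / γ (n + 2) - η (n + 1) / γ (n + 1)) 0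
            ≤ (η₁ / γ₁) * (p * x ^ (p - 1)) := by
          apply max_le hdiff
          positivity
        have hHinv : 1 / H (n + 2) ≤ (1 / η₁) * x ^ (c - 1) := by
          have hlb := hHlb (n + 2) (by omega)
          rw [hcast2] at hlb
          have hx1 : (0:ℝ) < x + 1 := by positivity
          have hlb2 : η₁ * x ^ (1 + -c) ≤ H (n + 2) := by
            refine le_trans ?_ hlb
            have : x ^ (1 + -c) ≤ (x + 1) ^ (1 + -c) :=
              Real.rpow_le_rpow hx.le (by linarith) (by linarith)
            exact mul_le_mul_of_nonneg_left this hη₁.le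
          have hpos : (0:ℝ) < η₁ * x ^ (1 + -c) := by positivity
          have := one_div_le_one_div_of_le hpos hlb2
          refine le_trans this (le_of_eq ?_)
          rw [one_div, mul_inv, ← Real.rpow_neg hx.le, one_div]
          congr 1
          ring
        have hHp := hHpos (n + 2) (by omega)
        have hmax0 : 0 ≤ max (η (n + 2) / γ (n + 2) - η (n + 1) / γ (n + 1)) 0 :=
          le_max_right _ _
        calc (1 / H (n + 2)) * max (η (n + 2) / γ (n + 2) - η (n + 1) / γ (n + 1)) 0
            ≤ ((1 / η₁) * x ^ (c - 1)) * ((η₁ / γ₁) * (p * x ^ (p - 1))) := by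
              apply mul_le_mul hHinv hmax hmax0
              positivity
          _ = (p / γ₁) * (x ^ (c - 1) * x ^ (p - 1)) := by
              field_simp
          _ = (p / γ₁) * x ^ (a - 2) := by
              rw [← Real.rpow_add hx]
              congr 1
              simp [hpdef]; ring
          _ ≤ (1 / γ₁) * ((n : ℝ) + 1) ^ (a - 2) := by
              rw [hxdef]
              gcongr
  · -- fourth component
    refine Summable.of_nonneg_of_le (fun n => ?_) (fun n => ?_)
      ((aux_summable (p := a - 2) (by linarith)).mul_left (1 / γ₁))
    · positivity
    · have hx : (0 : ℝ) < (n : ℝ) + 1 := by positivity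
      have hcast1 : ((n + 1 : ℕ) : ℝ) = (n : ℝ) + 1 := by push_cast; ring
      set x : ℝ := (n : ℝ) + 1 with hxdef
      have hη' : η (n + 1) = η₁ * x ^ (-c) := by rw [hη (n + 1) (by omega), hcast1]
      have hγ' : γ (n + 1) = γ₁ * x ^ (-a) := by rw [hγ (n + 1) (by omega), hcast1]
      have hHlb' : η₁ * x ^ (1 + -c) ≤ H (n + 1) := by
        have := hHlb (n + 1) (by omega)
        rwa [hcast1] at this
      have hHp' : (0:ℝ) < η₁ * x ^ (1 + -c) := by positivity
      have hsq : Real.sqrt (γ (n + 1)) = Real.sqrt γ₁ * x ^ (-a / 2) := by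
        rw [hγ', Real.sqrt_mul hγ₁.le]
        congr 1
        rw [show (-a / 2 : ℝ) = -a * (1 / 2) by ring, Real.rpow_mul hx.le,
          ← Real.sqrt_eq_rpow]
      have hsγ : (0 : ℝ) < Real.sqrt γ₁ := Real.sqrt_pos.mpr hγ₁
      have hHp' : (0 : ℝ) < H (n + 1) := lt_of_lt_of_le (by positivity) hHlb'
      have hbound : η (n + 1) / (H (n + 1) * Real.sqrt (γ (n + 1)))
          ≤ (1 / Real.sqrt γ₁) * x ^ (a / 2 - 1) := by
        rw [hη', hsq]
        have h1 : η₁ * x ^ (-c) / (H (n + 1) * (Real.sqrt γ₁ * x ^ (-a / 2)))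
            ≤ η₁ * x ^ (-c) / (η₁ * x ^ (1 + -c) * (Real.sqrt γ₁ * x ^ (-a / 2))) := by
          gcongr
        refine h1.trans (le_of_eq ?_)
        have e : x ^ (-c) = x ^ (a / 2 - 1) * (x ^ (1 + -c) * x ^ (-a / 2)) := by
          rw [← Real.rpow_add hx, ← Real.rpow_add hx]
          congr 1
          ring
        rw [e]
        have p1 : (0 : ℝ) < x ^ (1 + -c) := by positivity
        have p2 : (0 : ℝ) < x ^ (-a / 2) := by positivity
        field_simp
      have hnn : 0 ≤ η (n + 1) / (H (n + 1) * Real.sqrt (γ (n + 1))) := by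
        rw [hη', hsq]
        positivity
      calc (η (n + 1) / (H (n + 1) * Real.sqrt (γ (n + 1)))) ^ 2
          ≤ ((1 / Real.sqrt γ₁) * x ^ (a / 2 - 1)) ^ 2 := by
            exact pow_le_pow_left₀ hnn hbound 2
        _ = (1 / γ₁) * ((n : ℝ) + 1) ^ (a - 2) := by
            rw [mul_pow, div_pow, one_pow, Real.sq_sqrt hγ₁.le,
              ← Real.rpow_natCast (x ^ (a / 2 - 1)) 2, ← Real.rpow_mul hx.le]
            push_cast
            rw [show (a / 2 - 1) * 2 = a - 2 by ring, hxdef]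
end

section
/- Fix an integer R ≥ 2, an integer M ≥ 2, a real a ∈ (0,1), and positive reals q₁,…,q_R with q₁ + ⋯ + q_R = 1 such that the nodes x_r := M^{−(r−2)} (q₁/q_r)^a, r = 2,…,R, are pairwise distinct. Then the weight system has a unique solution (W₁,…,W_R), and it is given by W₁ = 1 and, for r = 2,…,R, W_r = M^{r−2} (q_r/q₁)^a · ∑_{k=0}^∞ M^{−k} ∏_{s=2, s≠r}^{R} (1 − M^{s−2−k}(q_s/q₁)^a)/(1 − M^{s−r}(q_s/q_r)^a), where the series converges absolutely. -/
open Finset Polynomial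

/-! Auxiliary Lagrange interpolation lemmas. -/

lemma eval_lag_basis {s : Finset ℕ} {v : ℕ → ℝ} (i : ℕ) (t : ℝ) :
    (Lagrange.basis s v i).eval t = ∏ j ∈ s.erase i, (t - v j) / (v i - v j) := by
  rw [Lagrange.basis, eval_prod]
  refine Finset.prod_congr rfl fun j _ => ?_
  simp [Lagrange.basisDivisor, inv_mul_eq_div]

lemma lag_repro {s : Finset ℕ} {v : ℕ → ℝ} (hv : Set.InjOn v s) {j : ℕ} (hj : j < s.card)
    (t : ℝ) : ∑ r ∈ s, v r ^ j * ∏ i ∈ s.erase r, (t - v i) / (v r - v i) = t ^ j := by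
  have hdeg : (X ^ j : ℝ[X]).degree < s.card := by
    rw [degree_X_pow]; exact_mod_cast hj
  have h := Lagrange.eq_interpolate hv hdeg
  have h2 := congrArg (eval t) h
  rw [Lagrange.interpolate_apply, eval_pow, eval_X, eval_finset_sum] at h2
  rw [h2]
  refine Finset.sum_congr rfl fun r hr => ?_
  rw [eval_mul, eval_C, eval_pow, eval_X, eval_lag_basis]

lemma vand_ker {s : Finset ℕ} {v : ℕ → ℝ} (hv : Set.InjOn v s) (V : ℕ → ℝ)
    (h : ∀ j < s.card, ∑ r ∈ s, V r * v r ^ j = 0) : ∀ r ∈ s, V r = 0 := by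
  intro r hr
  have hd : (Lagrange.basis s v r).natDegree < s.card := by
    rw [Lagrange.natDegree_basis hv hr]
    exact Nat.sub_lt (Finset.card_pos.mpr ⟨r, hr⟩) one_pos
  have key : ∑ t ∈ s, V t * (Lagrange.basis s v r).eval (v t) = V r := by
    rw [← Finset.add_sum_erase _ _ hr, Lagrange.eval_basis_self hv hr]
    rw [Finset.sum_eq_zero, mul_one, add_zero]
    intro t ht
    rw [Lagrange.eval_basis_of_ne (Finset.ne_of_mem_erase ht).symm (Finset.mem_of_mem_erase ht),
      mul_zero]
  rw [← key, Finset.sum_congr rfl (fun t _ => by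
    rw [eval_eq_sum_range' hd (v t), Finset.mul_sum])]
  rw [Finset.sum_comm]
  refine Finset.sum_eq_zero fun j hj => ?_
  have hzero := h j (Finset.mem_range.mp hj)
  calc ∑ t ∈ s, V t * ((Lagrange.basis s v r).coeff j * v t ^ j)
      = (Lagrange.basis s v r).coeff j * ∑ t ∈ s, V t * v t ^ j := by
        rw [Finset.mul_sum]; exact Finset.sum_congr rfl fun t _ => by ring
    _ = 0 := by rw [hzero, mul_zero]

/-! The nodes and the series terms. -/

noncomputable def xnode (M : ℕ) (q : ℕ → ℝ) (a : ℝ) (r : ℕ) : ℝ :=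
  (M : ℝ) ^ (-((r : ℝ) - 2)) * (q 1 / q r) ^ a

noncomputable def gterm (M R : ℕ) (q : ℕ → ℝ) (a : ℝ) (r k : ℕ) : ℝ :=
  ((M:ℝ)⁻¹) ^ k * ∏ i ∈ (Icc 2 R).erase r,
    (((M:ℝ)⁻¹) ^ k - xnode M q a i) / (xnode M q a r - xnode M q a i)

section
variable {M R : ℕ} {q : ℕ → ℝ} {a : ℝ}

lemma xnode_pos (hM : 2 ≤ M) {r : ℕ} (h1 : 0 < q 1) (hr : 0 < q r) : 0 < xnode M q a r := by
  have hM0 : (0:ℝ) < M := by positivity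
  unfold xnode; positivity

lemma tk_eq (hM : 2 ≤ M) (k : ℕ) : ((M:ℝ)⁻¹) ^ k = (M:ℝ) ^ (-(k:ℝ)) := by
  have hM0 : (0:ℝ) < M := by positivity
  rw [Real.rpow_neg hM0.le, Real.rpow_natCast, inv_pow]

lemma factA (hM : 2 ≤ M) {i : ℕ} (h1 : 0 < q 1) (hi : 0 < q i) (k : ℕ) :
    (M:ℝ) ^ ((i:ℝ) - 2 - (k:ℝ)) * (q i / q 1) ^ a = ((M:ℝ)⁻¹) ^ k / xnode M q a i := by
  have hxi := xnode_pos (a := a) hM h1 hi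
  have hM0 : (0:ℝ) < M := by positivity
  rw [tk_eq hM, eq_div_iff hxi.ne']
  have e1 : (q i / q 1) ^ a * (q 1 / q i) ^ a = 1 := by
    rw [← Real.mul_rpow (by positivity) (by positivity),
      show q i / q 1 * (q 1 / q i) = 1 by field_simp, Real.one_rpow]
  rw [xnode]
  calc (M:ℝ)^((i:ℝ)-2-(k:ℝ)) * (q i / q 1)^a * ((M:ℝ)^(-((i:ℝ)-2)) * (q 1 / q i)^a)
      = ((M:ℝ)^((i:ℝ)-2-(k:ℝ)) * (M:ℝ)^(-((i:ℝ)-2))) * ((q i / q 1)^a * (q 1 / q i)^a) := by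
        ring
    _ = (M:ℝ)^(-(k:ℝ)) := by
        rw [e1, mul_one, ← Real.rpow_add hM0,
          show (i:ℝ)-2-(k:ℝ) + -((i:ℝ)-2) = -(k:ℝ) by ring]

lemma factB (hM : 2 ≤ M) {i r : ℕ} (h1 : 0 < q 1) (hi : 0 < q i) (hr : 0 < q r) :
    (M:ℝ) ^ ((i:ℝ) - (r:ℝ)) * (q i / q r) ^ a = xnode M q a r / xnode M q a i := by
  have hxi := xnode_pos (a := a) hM h1 hi
  have hM0 : (0:ℝ) < M := by positivity
  rw [eq_div_iff hxi.ne']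
  have e1 : (q i / q r) ^ a * (q 1 / q i) ^ a = (q 1 / q r) ^ a := by
    rw [← Real.mul_rpow (by positivity) (by positivity),
      show q i / q r * (q 1 / q i) = q 1 / q r by field_simp]
  rw [xnode, xnode]
  calc (M:ℝ)^((i:ℝ)-(r:ℝ)) * (q i / q r)^a * ((M:ℝ)^(-((i:ℝ)-2)) * (q 1 / q i)^a)
      = ((M:ℝ)^((i:ℝ)-(r:ℝ)) * (M:ℝ)^(-((i:ℝ)-2))) * ((q i / q r)^a * (q 1 / q i)^a) := by
        ring
    _ = (M:ℝ)^(-((r:ℝ)-2)) * (q 1 / q r)^a := by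
        rw [e1, ← Real.rpow_add hM0,
          show (i:ℝ)-(r:ℝ) + -((i:ℝ)-2) = -((r:ℝ)-2) by ring]

lemma xnode_inv (hM : 2 ≤ M) {r : ℕ} (h1 : 0 < q 1) (hr : 0 < q r) :
    (M:ℝ) ^ ((r:ℝ) - 2) * (q r / q 1) ^ a = (xnode M q a r)⁻¹ := by
  have hM0 : (0:ℝ) < M := by positivity
  rw [xnode, mul_inv, ← Real.rpow_neg hM0.le, neg_neg,
    ← Real.inv_rpow (by positivity : (0:ℝ) ≤ q 1 / q r), inv_div]

lemma ratio_eq (hM : 2 ≤ M) {i r : ℕ} (h1 : 0 < q 1) (hi : 0 < q i) (hr : 0 < q r)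
    (hne : xnode M q a i ≠ xnode M q a r) (k : ℕ) :
    (1 - (M:ℝ) ^ ((i:ℝ) - 2 - (k:ℝ)) * (q i / q 1) ^ a) /
      (1 - (M:ℝ) ^ ((i:ℝ) - (r:ℝ)) * (q i / q r) ^ a) =
    (((M:ℝ)⁻¹) ^ k - xnode M q a i) / (xnode M q a r - xnode M q a i) := by
  have hxi := xnode_pos (a := a) hM h1 hi
  have hxr := xnode_pos (a := a) hM h1 hr
  rw [factA hM h1 hi k, factB hM h1 hi hr]
  have h2 : xnode M q a r - xnode M q a i ≠ 0 := sub_ne_zero.mpr (Ne.symm hne)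
  have h1' : 1 - xnode M q a r / xnode M q a i ≠ 0 := by
    rw [sub_ne_zero]
    intro h
    exact h2 (by field_simp [hxi.ne'] at h; linarith)
  rw [div_eq_div_iff h1' h2]
  field_simp
  ring

lemma term_eq (hM : 2 ≤ M) (h1 : 0 < q 1) (hqs : ∀ i ∈ Icc 2 R, 0 < q i)
    (hinj : Set.InjOn (xnode M q a) (Icc 2 R)) {r : ℕ} (hr : r ∈ Icc 2 R) (k : ℕ) :
    (M:ℝ) ^ (-(k:ℝ)) * ∏ s ∈ (Icc 2 R).erase r,
      (1 - (M:ℝ) ^ ((s:ℝ) - 2 - (k:ℝ)) * (q s / q 1) ^ a) /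
        (1 - (M:ℝ) ^ ((s:ℝ) - (r:ℝ)) * (q s / q r) ^ a) = gterm M R q a r k := by
  rw [gterm, ← tk_eq hM k]
  congr 1
  refine prod_congr rfl fun i hi => ?_
  have hiI := mem_of_mem_erase hi
  have hne : xnode M q a i ≠ xnode M q a r := fun h => (ne_of_mem_erase hi) (hinj hiI hr h)
  exact ratio_eq hM h1 (hqs i hiI) (hqs r hr) hne k

lemma gterm_summable (hM : 2 ≤ M) {r : ℕ} (h1 : 0 < q 1)
    (hqs : ∀ i ∈ Icc 2 R, 0 < q i) (hr : r ∈ Icc 2 R)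
    (hinj : Set.InjOn (xnode M q a) (Icc 2 R)) :
    Summable (gterm M R q a r) := by
  have hM0 : (0:ℝ) < M := by positivity
  have hM2 : (1:ℝ) < M := by exact_mod_cast by omega
  have hM1 : (M:ℝ)⁻¹ < 1 := inv_lt_one_of_one_lt₀ hM2
  set C : ℝ := ∏ i ∈ (Icc 2 R).erase r,
    (1 + xnode M q a i) / |xnode M q a r - xnode M q a i| with hC
  apply Summable.of_abs
  refine Summable.of_nonneg_of_le (fun k => abs_nonneg _) ?_
    ((summable_geometric_of_lt_one (by positivity) hM1).mul_left C)
  · intro k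
    have htk0 : (0:ℝ) ≤ ((M:ℝ)⁻¹) ^ k := by positivity
    have htk1 : ((M:ℝ)⁻¹) ^ k ≤ 1 := pow_le_one₀ (by positivity) hM1.le
    rw [gterm, abs_mul, abs_of_nonneg htk0, mul_comm]
    gcongr ?_ * _
    rw [Finset.abs_prod]
    apply Finset.prod_le_prod (fun i _ => abs_nonneg _)
    intro i hi
    have hii := hqs i (mem_of_mem_erase hi)
    have hxi := xnode_pos (a := a) hM h1 hii
    have hne : xnode M q a r ≠ xnode M q a i := fun h =>
      (ne_of_mem_erase hi).symm (hinj hr (mem_coe.mpr (mem_of_mem_erase hi)) h)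
    rw [abs_div]
    have hden : (0:ℝ) < |xnode M q a r - xnode M q a i| :=
      abs_pos.mpr (sub_ne_zero.mpr hne)
    gcongr
    exact abs_le.mpr ⟨by linarith, by linarith⟩

lemma powfact (hM : 2 ≤ M) {r : ℕ} (h1 : 0 < q 1) (hr : 0 < q r) (b : ℝ) :
    (M:ℝ) ^ (-(((r:ℝ) - 2) * b)) * q r ^ (-(a * b)) =
      q 1 ^ (-(a * b)) * (xnode M q a r) ^ b := by
  have hM0 : (0:ℝ) < M := by positivity
  rw [xnode, Real.mul_rpow (by positivity) (by positivity),
    show -(((r:ℝ)-2) * b) = (-((r:ℝ)-2)) * b by ring,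
    ← Real.rpow_mul hM0.le, ← Real.rpow_mul (by positivity),
    Real.div_rpow h1.le hr.le, Real.rpow_neg h1.le, Real.rpow_neg hr.le]
  have e1 : q 1 ^ (a*b) ≠ 0 := by positivity
  have e2 : q r ^ (a*b) ≠ 0 := by positivity
  field_simp

lemma eqn_iff (hM : 2 ≤ M) (h1 : 0 < q 1) (hqs : ∀ i ∈ Icc 2 R, 0 < q i)
    (W : ℕ → ℝ) {ℓ : ℕ} (hℓ : ℓ ∈ Icc 2 R) :
    (q 1 ^ (-(a * ((ℓ:ℝ) - 1))) +
      ((M:ℝ) ^ ((1:ℝ) - (ℓ:ℝ)) - 1) *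
        ∑ r ∈ Icc 2 R, W r * (M:ℝ) ^ (-(((r:ℝ) - 2) * ((ℓ:ℝ) - 1))) *
          q r ^ (-(a * ((ℓ:ℝ) - 1))) = 0) ↔
    ∑ r ∈ Icc 2 R, (W r * xnode M q a r) * xnode M q a r ^ (ℓ - 2) =
      (1 - ((M:ℝ)⁻¹) ^ (ℓ - 1))⁻¹ := by
  obtain ⟨hℓ2, hℓR⟩ := mem_Icc.mp hℓ
  have hM0 : (0:ℝ) < M := by positivity
  have hcast : ((ℓ:ℝ) - 1) = ((ℓ - 1 : ℕ) : ℝ) := by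
    have h : (1:ℕ) ≤ ℓ := by omega
    rw [Nat.cast_sub h]; norm_num
  have hsum : ∑ r ∈ Icc 2 R, W r * (M:ℝ)^(-(((r:ℝ)-2)*((ℓ:ℝ)-1))) * q r ^ (-(a*((ℓ:ℝ)-1)))
      = q 1 ^ (-(a*((ℓ:ℝ)-1))) *
        ∑ r ∈ Icc 2 R, (W r * xnode M q a r) * xnode M q a r ^ (ℓ-2) := by
    rw [mul_sum]
    refine sum_congr rfl fun r hr => ?_
    have hqr := hqs r hr
    have hx := xnode_pos (a:=a) hM h1 hqr
    have hp := powfact (a:=a) hM h1 hqr ((ℓ:ℝ)-1)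
    have hxp : xnode M q a r ^ ((ℓ:ℝ)-1) = xnode M q a r * xnode M q a r ^ (ℓ-2 : ℕ) := by
      rw [hcast, Real.rpow_natCast, show ℓ - 1 = (ℓ - 2) + 1 by omega, pow_succ]
      ring
    calc W r * (M:ℝ)^(-(((r:ℝ)-2)*((ℓ:ℝ)-1))) * q r ^ (-(a*((ℓ:ℝ)-1)))
        = W r * ((M:ℝ)^(-(((r:ℝ)-2)*((ℓ:ℝ)-1))) * q r ^ (-(a*((ℓ:ℝ)-1)))) := by ring
      _ = W r * (q 1 ^ (-(a*((ℓ:ℝ)-1))) * xnode M q a r ^ ((ℓ:ℝ)-1)) := by rw [hp]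
      _ = q 1 ^ (-(a*((ℓ:ℝ)-1))) * (W r * xnode M q a r * xnode M q a r ^ (ℓ-2)) := by
          rw [hxp]; ring
  rw [hsum]
  set S := ∑ r ∈ Icc 2 R, (W r * xnode M q a r) * xnode M q a r ^ (ℓ-2) with hSdef
  set q1p := q 1 ^ (-(a*((ℓ:ℝ)-1))) with hq1pdef
  have hq1pos : 0 < q1p := Real.rpow_pos_of_pos h1 _
  set c := ((M:ℝ)⁻¹) ^ (ℓ - 1) with hc
  have hcM : (M:ℝ) ^ ((1:ℝ) - (ℓ:ℝ)) = c := by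
    rw [hc, tk_eq hM (ℓ-1), ← hcast, show -((ℓ:ℝ) - 1) = (1:ℝ) - (ℓ:ℝ) by ring]
  have hclt : c < 1 := by
    have hi : (M:ℝ)⁻¹ < 1 := inv_lt_one_of_one_lt₀ (by exact_mod_cast by omega : (1:ℝ) < M)
    exact pow_lt_one₀ (by positivity) hi (by omega)
  have hne : (1:ℝ) - c ≠ 0 := ne_of_gt (by linarith)
  rw [hcM]
  constructor
  · intro h
    have h2 : q1p * (1 + (c - 1) * S) = 0 := by linear_combination h
    have h3 : 1 + (c - 1) * S = 0 := by
      rcases mul_eq_zero.mp h2 with h' | h'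
      · exact absurd h' hq1pos.ne'
      · exact h'
    rw [inv_eq_one_div, eq_div_iff hne]
    linear_combination -h3
  · intro h
    have h3 : S * (1 - c) = 1 := by rw [h]; field_simp
    linear_combination (-q1p) * h3

lemma main_identity (hM : 2 ≤ M) (h1 : 0 < q 1) (hqs : ∀ i ∈ Icc 2 R, 0 < q i)
    (hinj : Set.InjOn (xnode M q a) (Icc 2 R)) {j : ℕ} (hj : j < (Icc 2 R).card) :
    ∑ r ∈ Icc 2 R, (∑' k, gterm M R q a r k) * xnode M q a r ^ j =
      (1 - ((M:ℝ)⁻¹) ^ (j+1))⁻¹ := by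
  have hM0 : (0:ℝ) < M := by positivity
  have hM2 : (1:ℝ) < M := by exact_mod_cast by omega
  have hMi1 : (M:ℝ)⁻¹ < 1 := inv_lt_one_of_one_lt₀ hM2
  have hsumm : ∀ r ∈ Icc 2 R, Summable (fun k => gterm M R q a r k * xnode M q a r ^ j) :=
    fun r hr => (gterm_summable hM h1 hqs hr hinj).mul_right _
  calc ∑ r ∈ Icc 2 R, (∑' k, gterm M R q a r k) * xnode M q a r ^ j
      = ∑ r ∈ Icc 2 R, ∑' k, gterm M R q a r k * xnode M q a r ^ j := by
        exact sum_congr rfl fun r hr => (tsum_mul_right).symm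
    _ = ∑' k : ℕ, ∑ r ∈ Icc 2 R, gterm M R q a r k * xnode M q a r ^ j :=
        (Summable.tsum_finsetSum hsumm).symm
    _ = ∑' k : ℕ, (((M:ℝ)⁻¹) ^ (j+1)) ^ k := by
        refine tsum_congr fun k => ?_
        have hrepro := lag_repro (s := Icc 2 R) hinj hj (((M:ℝ)⁻¹)^k)
        calc ∑ r ∈ Icc 2 R, gterm M R q a r k * xnode M q a r ^ j
            = ((M:ℝ)⁻¹)^k * ∑ r ∈ Icc 2 R, xnode M q a r ^ j *
                ∏ i ∈ (Icc 2 R).erase r,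
                  (((M:ℝ)⁻¹)^k - xnode M q a i) / (xnode M q a r - xnode M q a i) := by
              rw [mul_sum]; refine sum_congr rfl fun r hr => ?_; rw [gterm]; ring
          _ = ((M:ℝ)⁻¹)^k * (((M:ℝ)⁻¹)^k) ^ j := by rw [hrepro]
          _ = (((M:ℝ)⁻¹) ^ (j+1)) ^ k := by
              rw [← pow_succ', ← pow_mul, mul_comm k (j+1), pow_mul]
    _ = (1 - ((M:ℝ)⁻¹) ^ (j+1))⁻¹ :=
        tsum_geometric_of_lt_one (by positivity) (pow_lt_one₀ (by positivity) hMi1 (Nat.succ_ne_zero j))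

end

/-- Existence and uniqueness of the solution of the ML2Rgodic weight system, together
with the closed form of the weights as absolutely convergent series. -/
theorem stmt_1 (R M : ℕ) (hR : 2 ≤ R) (hM : 2 ≤ M) (a : ℝ) (ha : a ∈ Set.Ioo (0 : ℝ) 1)
    (q : ℕ → ℝ) (hq : ∀ r ∈ Icc 1 R, 0 < q r) (hqsum : ∑ r ∈ Icc 1 R, q r = 1)
    (hnodes : ∀ r ∈ Icc 2 R, ∀ s ∈ Icc 2 R, r ≠ s →
      (M : ℝ) ^ (-((r : ℝ) - 2)) * (q 1 / q r) ^ a ≠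
        (M : ℝ) ^ (-((s : ℝ) - 2)) * (q 1 / q s) ^ a) :
    (∃! W : ℕ → ℝ, (∀ r, r ∉ Icc 1 R → W r = 0) ∧ W 1 = 1 ∧
      ∀ ℓ ∈ Icc 2 R,
        W 1 * q 1 ^ (-(a * ((ℓ : ℝ) - 1))) +
          ((M : ℝ) ^ ((1 : ℝ) - (ℓ : ℝ)) - 1) *
            ∑ r ∈ Icc 2 R, W r * (M : ℝ) ^ (-(((r : ℝ) - 2) * ((ℓ : ℝ) - 1))) *
              q r ^ (-(a * ((ℓ : ℝ) - 1))) = 0) ∧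
    (∀ W : ℕ → ℝ,
      ((∀ r, r ∉ Icc 1 R → W r = 0) ∧ W 1 = 1 ∧
        ∀ ℓ ∈ Icc 2 R,
          W 1 * q 1 ^ (-(a * ((ℓ : ℝ) - 1))) +
            ((M : ℝ) ^ ((1 : ℝ) - (ℓ : ℝ)) - 1) *
              ∑ r ∈ Icc 2 R, W r * (M : ℝ) ^ (-(((r : ℝ) - 2) * ((ℓ : ℝ) - 1))) *
                q r ^ (-(a * ((ℓ : ℝ) - 1))) = 0) →
      ∀ r ∈ Icc 2 R,
        Summable (fun k : ℕ => (M : ℝ) ^ (-(k : ℝ)) *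
          ∏ s ∈ (Icc 2 R).erase r,
            (1 - (M : ℝ) ^ ((s : ℝ) - 2 - (k : ℝ)) * (q s / q 1) ^ a) /
              (1 - (M : ℝ) ^ ((s : ℝ) - (r : ℝ)) * (q s / q r) ^ a)) ∧
        W r = (M : ℝ) ^ ((r : ℝ) - 2) * (q r / q 1) ^ a *
          ∑' k : ℕ, (M : ℝ) ^ (-(k : ℝ)) *
            ∏ s ∈ (Icc 2 R).erase r,
              (1 - (M : ℝ) ^ ((s : ℝ) - 2 - (k : ℝ)) * (q s / q 1) ^ a) /
                (1 - (M : ℝ) ^ ((s : ℝ) - (r : ℝ)) * (q s / q r) ^ a)) := by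
  have h1 : 0 < q 1 := hq 1 (mem_Icc.mpr ⟨le_rfl, by omega⟩)
  have hqs : ∀ i ∈ Icc 2 R, 0 < q i := by
    intro i hi
    obtain ⟨h2, h3⟩ := mem_Icc.mp hi
    exact hq i (mem_Icc.mpr ⟨by omega, h3⟩)
  have hinj : Set.InjOn (xnode M q a) (Icc 2 R) := by
    intro r hr s hs hxy
    by_contra hne
    exact hnodes r (mem_coe.mp hr) s (mem_coe.mp hs) hne hxy
  have hsummable : ∀ r ∈ Icc 2 R, Summable (gterm M R q a r) :=
    fun r hr => gterm_summable hM h1 hqs hr hinj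
  have hcard : (Icc 2 R).card = R - 1 := by rw [Nat.card_Icc]; omega
  have hmain := fun j (hj : j < (Icc 2 R).card) => main_identity (a := a) hM h1 hqs hinj hj
  -- any solution is given by the series on `Icc 2 R`
  have hSolve : ∀ W : ℕ → ℝ,
      ((∀ r, r ∉ Icc 1 R → W r = 0) ∧ W 1 = 1 ∧
        ∀ ℓ ∈ Icc 2 R,
          W 1 * q 1 ^ (-(a * ((ℓ : ℝ) - 1))) +
            ((M : ℝ) ^ ((1 : ℝ) - (ℓ : ℝ)) - 1) *
              ∑ r ∈ Icc 2 R, W r * (M : ℝ) ^ (-(((r : ℝ) - 2) * ((ℓ : ℝ) - 1))) *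
                q r ^ (-(a * ((ℓ : ℝ) - 1))) = 0) →
      ∀ r ∈ Icc 2 R, W r * xnode M q a r = ∑' k, gterm M R q a r k := by
    rintro W ⟨hWz, hW1, hWeq⟩ r hr
    have hVand : ∀ j < (Icc 2 R).card,
        ∑ r' ∈ Icc 2 R,
          (W r' * xnode M q a r' - ∑' k, gterm M R q a r' k) * xnode M q a r' ^ j = 0 := by
      intro j hj
      have hjR : j + 2 ∈ Icc 2 R := mem_Icc.mpr ⟨by omega, by rw [hcard] at hj; omega⟩
      have heq := hWeq (j+2) hjR
      rw [hW1, one_mul] at heq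
      have h2 := (eqn_iff hM h1 hqs W hjR).mp heq
      rw [show j + 2 - 2 = j by omega, show j + 2 - 1 = j + 1 by omega] at h2
      have h3 := hmain j hj
      simp only [sub_mul]
      rw [sum_sub_distrib, h2, h3, sub_self]
    have := vand_ker hinj
      (fun r' => W r' * xnode M q a r' - ∑' k, gterm M R q a r' k) hVand r hr
    have h0 : W r * xnode M q a r - ∑' k, gterm M R q a r k = 0 := this
    linarith
  set Wst : ℕ → ℝ := fun r =>
    if r ∈ Icc 2 R then (∑' k, gterm M R q a r k) / xnode M q a r
    else if r = 1 then 1 else 0 with hWstdef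
  have h1notin : (1 : ℕ) ∉ Icc 2 R := by simp [mem_Icc]
  have hWst1 : Wst 1 = 1 := by
    simp only [hWstdef]
    rw [if_neg h1notin]
    norm_num
  have hWstP : (∀ r, r ∉ Icc 1 R → Wst r = 0) ∧ Wst 1 = 1 ∧
      ∀ ℓ ∈ Icc 2 R,
        Wst 1 * q 1 ^ (-(a * ((ℓ : ℝ) - 1))) +
          ((M : ℝ) ^ ((1 : ℝ) - (ℓ : ℝ)) - 1) *
            ∑ r ∈ Icc 2 R, Wst r * (M : ℝ) ^ (-(((r : ℝ) - 2) * ((ℓ : ℝ) - 1))) *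
              q r ^ (-(a * ((ℓ : ℝ) - 1))) = 0 := by
    refine ⟨?_, hWst1, ?_⟩
    · intro r hrn
      simp only [hWstdef]
      rw [if_neg, if_neg]
      · intro h
        exact hrn (h ▸ mem_Icc.mpr ⟨le_rfl, by omega⟩)
      · intro h
        obtain ⟨h2, h3⟩ := mem_Icc.mp h
        exact hrn (mem_Icc.mpr ⟨by omega, h3⟩)
    · intro ℓ hℓ
      rw [hWst1, one_mul]
      apply (eqn_iff hM h1 hqs Wst hℓ).mpr
      obtain ⟨hl2, hlR⟩ := mem_Icc.mp hℓ
      have hj : ℓ - 2 < (Icc 2 R).card := by rw [hcard]; omega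
      have h3 := hmain (ℓ-2) hj
      rw [show ℓ - 2 + 1 = ℓ - 1 by omega] at h3
      rw [← h3]
      refine sum_congr rfl fun r hr => ?_
      have hx := xnode_pos (a:=a) hM h1 (hqs r hr)
      congr 1
      simp only [hWstdef]
      rw [if_pos hr, div_mul_cancel₀ _ hx.ne']
  refine ⟨⟨Wst, hWstP, ?_⟩, ?_⟩
  · intro W hPW
    funext r
    by_cases hr2 : r ∈ Icc 2 R
    · have hw := hSolve W hPW r hr2
      have hx := xnode_pos (a:=a) hM h1 (hqs r hr2)
      simp only [hWstdef]
      rw [if_pos hr2, eq_div_iff hx.ne']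
      exact hw
    · by_cases hr1 : r = 1
      · subst hr1; rw [hPW.2.1, hWst1]
      · have hrn : r ∉ Icc 1 R := by
          intro h
          obtain ⟨h1', h2'⟩ := mem_Icc.mp h
          exact hr2 (mem_Icc.mpr ⟨by omega, h2'⟩)
        rw [hPW.1 r hrn]
        simp only [hWstdef]
        rw [if_neg hr2, if_neg hr1]
  · intro W hPW r hr
    have hterm' := term_eq (a := a) hM h1 hqs hinj hr
    constructor
    · exact (summable_congr fun k => hterm' k).mpr (hsummable r hr)
    · have hW := hSolve W hPW r hr
      have hx := xnode_pos (a:=a) hM h1 (hqs r hr)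
      have ht : (∑' k : ℕ, (M : ℝ) ^ (-(k : ℝ)) *
            ∏ s ∈ (Icc 2 R).erase r,
              (1 - (M : ℝ) ^ ((s : ℝ) - 2 - (k : ℝ)) * (q s / q 1) ^ a) /
                (1 - (M : ℝ) ^ ((s : ℝ) - (r : ℝ)) * (q s / q r) ^ a))
          = ∑' k, gterm M R q a r k := tsum_congr fun k => hterm' k
      rw [ht, xnode_inv hM h1 (hqs r hr), ← hW]
      field_simp
end

section
/- Fix an integer R ≥ 2, an integer M ≥ 2, a real a ∈ (0,1), and positive reals q₁,…,q_R with q₁ + ⋯ + q_R = 1 such that the nodes x_r := M^{−(r−2)} (q₁/q_r)^a, r = 2,…,R, are pairwise distinct. Let (W₁,…,W_R) be the unique solution of the weight system. Then the coefficient W̃_{R+1} := W₁ q₁^{−aR} + (M^{−R} − 1) ∑_{r=2}^R W_r M^{−(r−2)R} q_r^{−aR} satisfies W̃_{R+1} = (1 − M^{−R}) q₁^{−aR} ∑_{k=0}^∞ M^{−kR} ∏_{r=0}^{R−2} (1 − M^{k−r}(q₁/q_{r+2})^a). -/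
open Finset

/-- Closed form of the coefficient `W̃_{R+1}` for any solution of the weight system. -/
theorem stmt_2 (R M : ℕ) (hR : 2 ≤ R) (hM : 2 ≤ M) (a : ℝ) (ha : a ∈ Set.Ioo (0 : ℝ) 1)
    (q : ℕ → ℝ) (hq : ∀ r ∈ Icc 1 R, 0 < q r) (hqsum : ∑ r ∈ Icc 1 R, q r = 1)
    (hnodes : ∀ r ∈ Icc 2 R, ∀ s ∈ Icc 2 R, r ≠ s →
      (M : ℝ) ^ (-((r : ℝ) - 2)) * (q 1 / q r) ^ a ≠
        (M : ℝ) ^ (-((s : ℝ) - 2)) * (q 1 / q s) ^ a)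
    (W : ℕ → ℝ) (hW1 : W 1 = 1)
    (hWsys : ∀ ℓ ∈ Icc 2 R,
      W 1 * q 1 ^ (-(a * ((ℓ : ℝ) - 1))) +
        ((M : ℝ) ^ ((1 : ℝ) - (ℓ : ℝ)) - 1) *
          ∑ r ∈ Icc 2 R, W r * (M : ℝ) ^ (-(((r : ℝ) - 2) * ((ℓ : ℝ) - 1))) *
            q r ^ (-(a * ((ℓ : ℝ) - 1))) = 0) :
    W 1 * q 1 ^ (-(a * (R : ℝ))) +
      ((M : ℝ) ^ (-(R : ℝ)) - 1) *
        ∑ r ∈ Icc 2 R, W r * (M : ℝ) ^ (-(((r : ℝ) - 2) * (R : ℝ))) *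
          q r ^ (-(a * (R : ℝ)))
    = (1 - (M : ℝ) ^ (-(R : ℝ))) * q 1 ^ (-(a * (R : ℝ))) *
        ∑' k : ℕ, (M : ℝ) ^ (-((k : ℝ) * (R : ℝ))) *
          ∏ r ∈ Finset.range (R - 1),
            (1 - (M : ℝ) ^ ((k : ℝ) - (r : ℝ)) * (q 1 / q (r + 2)) ^ a) := by
  set b : ℝ := (M : ℝ) with hbdef
  have hb0 : (0:ℝ) < b := by
    rw [hbdef]
    have : (0:ℕ) < M := by omega
    exact_mod_cast this
  have hb1 : (1:ℝ) < b := by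
    rw [hbdef]
    have : (1:ℕ) < M := by omega
    exact_mod_cast this
  have hq1 : 0 < q 1 := hq 1 (mem_Icc.mpr ⟨le_refl 1, by omega⟩)
  have hqr : ∀ r ∈ Icc 2 R, 0 < q r := by
    intro r hr
    rw [mem_Icc] at hr
    exact hq r (mem_Icc.mpr ⟨by omega, hr.2⟩)
  set x : ℕ → ℝ := fun r => b ^ (-((r:ℝ) - 2)) * (q 1 / q r) ^ a with hxdef
  have powpow : ∀ (c : ℝ), 0 ≤ c → ∀ (e : ℝ) (m : ℕ), (c ^ e) ^ m = c ^ (e * (m:ℝ)) := by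
    intro c hc e m
    rw [← Real.rpow_natCast (c ^ e) m, ← Real.rpow_mul hc]
  have htcard : (Icc 2 R).card = R - 1 := by rw [Nat.card_Icc]; omega
  -- key pointwise identity
  have keyx : ∀ (m : ℕ), ∀ r ∈ Icc 2 R,
      b ^ (-(((r:ℝ) - 2) * (m:ℝ))) * q r ^ (-(a * (m:ℝ)))
        = x r ^ m * q 1 ^ (-(a * (m:ℝ))) := by
    intro m r hr
    have hqrp := hqr r hr
    have h1 : x r ^ m = b ^ (-(((r:ℝ)-2) * (m:ℝ)))
        * (q 1 ^ (a*(m:ℝ)) * q r ^ (-(a*(m:ℝ)))) := by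
      rw [hxdef]
      rw [mul_pow, powpow b hb0.le, powpow _ (div_pos hq1 hqrp).le]
      rw [Real.div_rpow hq1.le hqrp.le, Real.rpow_neg hqrp.le, div_eq_mul_inv]
      congr 2
      ring
    have h3 : q 1 ^ (a*(m:ℝ)) * q 1 ^ (-(a*(m:ℝ))) = 1 := by
      rw [← Real.rpow_add hq1]; simp
    rw [h1]
    linear_combination (-(b ^ (-(((r:ℝ)-2) * (m:ℝ))) * q r ^ (-(a*(m:ℝ))))) * h3
  set S : ℕ → ℝ := fun m => ∑ r ∈ Icc 2 R, W r * x r ^ m with hSdef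
  -- the weight system in terms of x
  have hS : ∀ m : ℕ, 1 ≤ m → m + 1 ≤ R → (1 - b ^ (-(m:ℝ))) * S m = 1 := by
    intro m hm1 hmR
    have hmem : m + 1 ∈ Icc 2 R := mem_Icc.mpr ⟨by omega, hmR⟩
    have hsys := hWsys (m+1) hmem
    have hc1 : ((m+1:ℕ):ℝ) - 1 = (m:ℝ) := by push_cast; ring
    have hc2 : (1:ℝ) - ((m+1:ℕ):ℝ) = -(m:ℝ) := by push_cast; ring
    rw [hc1, hc2, hW1] at hsys
    have hsum : ∑ r ∈ Icc 2 R, W r * b ^ (-(((r:ℝ)-2)*(m:ℝ))) * q r ^ (-(a*(m:ℝ)))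
        = S m * q 1 ^ (-(a*(m:ℝ))) := by
      rw [hSdef, Finset.sum_mul]
      refine Finset.sum_congr rfl fun r hr => ?_
      rw [mul_assoc, keyx m r hr]
      ring
    rw [hsum] at hsys
    have hQ : (0:ℝ) < q 1 ^ (-(a*(m:ℝ))) := Real.rpow_pos_of_pos hq1 _
    have h5 : q 1 ^ (-(a*(m:ℝ))) * ((1 - b ^ (-(m:ℝ))) * S m - 1) = 0 := by
      linear_combination -hsys
    rcases mul_eq_zero.mp h5 with h | h
    · exact absurd h hQ.ne'
    · linarith
  -- expansion of products of linear factors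
  have expand : ∀ u v : ℝ, (∏ s ∈ Icc 2 R, (v - u * x s))
      = ∑ A ∈ (Icc 2 R).powerset,
          ((-1:ℝ) ^ A.card * ∏ s ∈ A, x s) * (u ^ A.card * v ^ (R - 1 - A.card)) := by
    intro u v
    calc ∏ s ∈ Icc 2 R, (v - u * x s)
        = ∏ s ∈ Icc 2 R, ((-(u * x s)) + v) := Finset.prod_congr rfl (by intros; ring)
      _ = ∑ A ∈ (Icc 2 R).powerset, (∏ s ∈ A, -(u * x s)) * ∏ _s ∈ Icc 2 R \ A, v :=
          Finset.prod_add _ _ _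
      _ = _ := by
          refine Finset.sum_congr rfl fun A hA => ?_
          rw [Finset.prod_const, Finset.card_sdiff_of_subset (Finset.mem_powerset.mp hA), htcard]
          have h6 : ∏ s ∈ A, -(u * x s) = ((-1:ℝ)^A.card * ∏ s ∈ A, x s) * u ^ A.card := by
            calc ∏ s ∈ A, -(u * x s) = ∏ s ∈ A, ((-u) * x s) :=
                  Finset.prod_congr rfl (by intros; ring)
              _ = (∏ _s ∈ A, (-u)) * ∏ s ∈ A, x s := Finset.prod_mul_distrib
              _ = _ := by rw [Finset.prod_const, neg_pow]; ring
          rw [h6]; ring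
  have hcardle : ∀ A ∈ (Icc 2 R).powerset, A.card ≤ R - 1 := fun A hA =>
    le_trans (Finset.card_le_card (Finset.mem_powerset.mp hA)) (le_of_eq htcard)
  -- geometric ratio facts
  have hra : ∀ A ∈ (Icc 2 R).powerset,
      0 < b ^ (-(((R - A.card : ℕ)):ℝ)) ∧ b ^ (-(((R - A.card : ℕ)):ℝ)) < 1 := by
    intro A hA
    refine ⟨Real.rpow_pos_of_pos hb0 _, ?_⟩
    apply Real.rpow_lt_one_of_one_lt_of_neg hb1
    have h7 : 1 ≤ R - A.card := by have := hcardle A hA; omega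
    have h8 : (1:ℝ) ≤ ((R - A.card : ℕ):ℝ) := by exact_mod_cast h7
    linarith
  -- pointwise expansion of the series terms
  have hpoint : ∀ k : ℕ, (b ^ (-(R:ℝ)))^k * ∏ s ∈ Icc 2 R, ((1:ℝ) - b^k * x s)
      = ∑ A ∈ (Icc 2 R).powerset,
          ((-1:ℝ)^A.card * ∏ s ∈ A, x s) * (b ^ (-(((R - A.card : ℕ)):ℝ)))^k := by
    intro k
    rw [expand (b^k) 1, Finset.mul_sum]
    refine Finset.sum_congr rfl fun A hA => ?_
    have hle : A.card ≤ R := le_trans (hcardle A hA) (by omega)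
    have h1 : (b^(-(R:ℝ)))^k * ((b:ℝ)^k)^A.card = (b ^ (-(((R - A.card : ℕ)):ℝ)))^k := by
      rw [pow_right_comm, ← mul_pow]
      congr 1
      rw [← Real.rpow_natCast b A.card, ← Real.rpow_add hb0]
      congr 1
      have h9 : ((R - A.card : ℕ):ℝ) = (R:ℝ) - (A.card:ℝ) := by
        push_cast [Nat.cast_sub hle]; ring
      rw [h9]; ring
    rw [one_pow, mul_one, ← h1]
    ring
  -- the tsum
  have hT : ∑' k:ℕ, ((b ^ (-(R:ℝ)))^k * ∏ s ∈ Icc 2 R, ((1:ℝ) - b^k * x s))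
      = ∑ A ∈ (Icc 2 R).powerset,
          ((-1:ℝ)^A.card * ∏ s ∈ A, x s) * (1 - b ^ (-(((R - A.card : ℕ)):ℝ)))⁻¹ := by
    rw [tsum_congr hpoint, Summable.tsum_finsetSum (fun A hA =>
      (summable_geometric_of_lt_one (hra A hA).1.le (hra A hA).2).mul_left _)]
    refine Finset.sum_congr rfl fun A hA => ?_
    rw [tsum_mul_left, tsum_geometric_of_lt_one (hra A hA).1.le (hra A hA).2]
  -- Vandermonde-type vanishing identity
  have hzero : ∑ A ∈ (Icc 2 R).powerset,
      ((-1:ℝ)^A.card * ∏ s ∈ A, x s) * S (R - A.card) = 0 := by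
    have hswap : ∑ A ∈ (Icc 2 R).powerset,
        ((-1:ℝ)^A.card * ∏ s ∈ A, x s) * S (R - A.card)
        = ∑ r ∈ Icc 2 R, ∑ A ∈ (Icc 2 R).powerset,
            ((-1:ℝ)^A.card * ∏ s ∈ A, x s) * (W r * x r ^ (R - A.card)) := by
      rw [Finset.sum_comm]
      refine Finset.sum_congr rfl fun A hA => ?_
      rw [hSdef, Finset.mul_sum]
    rw [hswap]
    refine Finset.sum_eq_zero fun r hr => ?_
    have hinner : ∑ A ∈ (Icc 2 R).powerset,
        ((-1:ℝ)^A.card * ∏ s ∈ A, x s) * (W r * x r ^ (R - A.card))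
        = (W r * x r) * ∑ A ∈ (Icc 2 R).powerset,
            ((-1:ℝ)^A.card * ∏ s ∈ A, x s) * ((1:ℝ)^A.card * x r ^ (R - 1 - A.card)) := by
      rw [Finset.mul_sum]
      refine Finset.sum_congr rfl fun A hA => ?_
      have h10 : R - A.card = (R - 1 - A.card) + 1 := by have := hcardle A hA; omega
      rw [h10, pow_succ, one_pow]
      ring
    rw [hinner, ← expand 1 (x r)]
    have : ∏ s ∈ Icc 2 R, (x r - 1 * x s) = 0 := by
      apply Finset.prod_eq_zero hr
      ring
    rw [this, mul_zero]
  -- Rewrite goal LHS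
  have hLsum : ∑ r ∈ Icc 2 R, W r * b ^ (-(((r:ℝ)-2)*(R:ℝ))) * q r ^ (-(a*(R:ℝ)))
      = S R * q 1 ^ (-(a*(R:ℝ))) := by
    rw [hSdef, Finset.sum_mul]
    refine Finset.sum_congr rfl fun r hr => ?_
    rw [mul_assoc, keyx R r hr]
    ring
  -- Rewrite goal RHS tsum into the canonical form
  have htsum_eq : ∀ k : ℕ, b ^ (-((k:ℝ) * (R:ℝ))) *
      ∏ r ∈ Finset.range (R - 1), (1 - b ^ ((k:ℝ) - (r:ℝ)) * (q 1 / q (r + 2)) ^ a)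
      = (b ^ (-(R:ℝ)))^k * ∏ s ∈ Icc 2 R, ((1:ℝ) - b^k * x s) := by
    intro k
    have h11 : b ^ (-((k:ℝ) * (R:ℝ))) = (b ^ (-(R:ℝ)))^k := by
      rw [powpow b hb0.le]
      congr 1
      ring
    have h12 : ∏ s ∈ Icc 2 R, ((1:ℝ) - b^k * x s)
        = ∏ r ∈ Finset.range (R - 1), (1 - b ^ ((k:ℝ) - (r:ℝ)) * (q 1 / q (r + 2)) ^ a) := by
      rw [← Finset.Ico_add_one_right_eq_Icc, Finset.prod_Ico_eq_prod_range]
      have h13 : R + 1 - 2 = R - 1 := by omega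
      rw [h13]
      refine Finset.prod_congr rfl fun i _ => ?_
      have h14 : 2 + i = i + 2 := by omega
      rw [h14]
      congr 1
      rw [hxdef]
      have h15 : (((i+2:ℕ)):ℝ) - 2 = (i:ℝ) := by push_cast; ring
      show b^k * (b ^ (-((((i+2:ℕ)):ℝ) - 2)) * (q 1 / q (i+2)) ^ a) = _
      rw [h15, ← mul_assoc, ← Real.rpow_natCast b k, ← Real.rpow_add hb0]
      congr 2
    rw [h11, h12]
  rw [tsum_congr htsum_eq, hT, hLsum, hW1]
  -- split off the empty set
  have hmem0 : (∅ : Finset ℕ) ∈ (Icc 2 R).powerset := Finset.empty_mem_powerset _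
  have hsplit : ∀ f : Finset ℕ → ℝ, ∑ A ∈ (Icc 2 R).powerset, f A
      = ∑ A ∈ (Icc 2 R).powerset.erase ∅, f A + f ∅ := fun f =>
    (Finset.sum_erase_add _ _ hmem0).symm
  have hf0 : ((-1:ℝ)^(∅:Finset ℕ).card * ∏ s ∈ (∅:Finset ℕ), x s) = 1 := by simp
  have hrest : ∑ A ∈ (Icc 2 R).powerset.erase ∅,
      ((-1:ℝ)^A.card * ∏ s ∈ A, x s) * (1 - b ^ (-(((R - A.card : ℕ)):ℝ)))⁻¹
      = ∑ A ∈ (Icc 2 R).powerset.erase ∅,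
      ((-1:ℝ)^A.card * ∏ s ∈ A, x s) * S (R - A.card) := by
    refine Finset.sum_congr rfl fun A hA => ?_
    have hAp : A ∈ (Icc 2 R).powerset := Finset.mem_of_mem_erase hA
    have hA0 : A ≠ ∅ := Finset.ne_of_mem_erase hA
    have hc1 : 1 ≤ A.card := Finset.card_pos.mpr (Finset.nonempty_of_ne_empty hA0)
    have hm1 : 1 ≤ R - A.card := by have := hcardle A hAp; omega
    have hm2 : (R - A.card) + 1 ≤ R := by have := hcardle A hAp; omega
    have := hS (R - A.card) hm1 hm2
    have hne : (1 : ℝ) - b ^ (-(((R - A.card : ℕ)):ℝ)) ≠ 0 := by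
      have := (hra A hAp).2; linarith
    congr 1
    field_simp
    linarith [this]
  have hzero' : ∑ A ∈ (Icc 2 R).powerset.erase ∅,
      ((-1:ℝ)^A.card * ∏ s ∈ A, x s) * S (R - A.card) = - S R := by
    have := hzero
    rw [hsplit (fun A => ((-1:ℝ)^A.card * ∏ s ∈ A, x s) * S (R - A.card))] at this
    simp only [Finset.card_empty, pow_zero, Finset.prod_empty, mul_one, one_mul,
      Nat.sub_zero] at this
    linarith
  rw [hsplit, hrest, hzero', hf0]
  have h16 : ((R - (∅:Finset ℕ).card : ℕ):ℝ) = (R:ℝ) := by simp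
  rw [Finset.card_empty, Nat.sub_zero]
  have hne : (1 : ℝ) - b ^ (-((R:ℕ):ℝ)) ≠ 0 := by
    have := (hra ∅ hmem0).2
    simp only [Finset.card_empty, Nat.sub_zero] at this
    linarith
  have hRcast : b ^ (-((R:ℕ):ℝ)) = b ^ (-(R:ℝ)) := by norm_cast
  rw [hRcast] at hne ⊢
  have hinv : (1 - b ^ (-(R:ℝ))) * (1 - b ^ (-(R:ℝ)))⁻¹ = 1 := mul_inv_cancel₀ hne
  linear_combination (-(q 1 ^ (-(a * (R:ℝ))))) * hinv
end

section
/- Fix an integer R ≥ 2, an integer M ≥ 2, a real a ∈ (0,1), and positive reals q₁,…,q_R with q₁ + ⋯ + q_R = 1 such that the nodes x_r := M^{−(r−2)} (q₁/q_r)^a, r = 2,…,R, are pairwise distinct. Let (W₁,…,W_R) be the unique solution of the weight system. Then the coefficient W̃_{R+2} := W₁ q₁^{−a(R+1)} + (M^{−R−1} − 1) ∑_{r=2}^R W_r M^{−(r−2)(R+1)} q_r^{−a(R+1)} satisfies W̃_{R+2} = (1 − M^{−(R+1)}) q₁^{−a(R+1)} ∑_{k=0}^∞ M^{−k(R+1)}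 (1 + ∑_{r=0}^{R−2} M^{k−r}(q₁/q_{r+2})^a) ∏_{r=0}^{R−2} (1 − M^{k−r}(q₁/q_{r+2})^a). -/
open Finset Polynomial

lemma core (n : ℕ) (hn : 1 ≤ n) (m : ℝ) (hm : 1 < m) (u x : ℕ → ℝ)
    (hsys : ∀ s ∈ Finset.range n,
      ∑ j ∈ Finset.range n, u j * x j ^ s = (1 - (m⁻¹) ^ (s + 1))⁻¹) :
    ∑' k : ℕ, ((m⁻¹ ^ (n + 2)) ^ k * (1 + ∑ j ∈ Finset.range n, m ^ k * x j) *
      ∏ j ∈ Finset.range n, (1 - m ^ k * x j))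
    = (1 - m⁻¹ ^ (n + 2))⁻¹ - ∑ j ∈ Finset.range n, u j * x j ^ (n + 1) := by
  have hm0 : (0:ℝ) < m := lt_trans one_pos hm
  have hmne : m ≠ 0 := ne_of_gt hm0
  have hinv0 : (0:ℝ) < m⁻¹ := inv_pos.mpr hm0
  have hinv1 : m⁻¹ < 1 := inv_lt_one_of_one_lt₀ hm
  set e : ℝ := ∑ j ∈ Finset.range n, x j with he
  set Q : ℝ[X] := ∏ j ∈ Finset.range n, (X - C (x j)) with hQ
  have hQmonic : Q.Monic := monic_prod_of_monic _ _ fun _ _ => monic_X_sub_C _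
  have hQdeg : Q.natDegree = n := by
    rw [hQ, natDegree_prod _ _ fun i _ => X_sub_C_ne_zero (x i)]
    simp
  set P : ℝ[X] := X ^ (n + 1) - (X + C e) * Q with hP
  have hmul_monic : ((X + C e) * Q).Monic := (monic_X_add_C e).mul hQmonic
  have hmul_deg : ((X + C e) * Q).natDegree = n + 1 := by
    rw [natDegree_mul (monic_X_add_C e).ne_zero hQmonic.ne_zero, natDegree_X_add_C, hQdeg,
      add_comm]
  have hPdeg : P.natDegree < n := by
    have hle : P.natDegree ≤ n - 1 := by
      rw [natDegree_le_iff_coeff_eq_zero]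
      intro N hN
      rcases show N = n ∨ N = n + 1 ∨ n + 1 < N by omega with h | h | h
      · have h1 : ((X + C e) * Q).coeff N = 0 := by
          have h2 : ((X + C e) * Q).nextCoeff = 0 := by
            rw [(monic_X_add_C e).nextCoeff_mul hQmonic, nextCoeff_X_add_C,
              hQ, prod_X_sub_C_nextCoeff, ← he, add_neg_cancel]
          have h3 := nextCoeff_of_natDegree_pos (by rw [hmul_deg]; omega :
            0 < ((X + C e) * Q).natDegree)
          rw [hmul_deg] at h3
          simpa [h, h3] using h2
        rw [hP, coeff_sub, coeff_X_pow, if_neg (by omega), h1, sub_zero]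
      · have h1 : ((X + C e) * Q).coeff N = 1 := by
          rw [h, ← hmul_deg]; exact hmul_monic.coeff_natDegree
        rw [hP, coeff_sub, coeff_X_pow, if_pos h, h1, sub_self]
      · rw [hP, coeff_sub, coeff_X_pow, if_neg (by omega),
          coeff_eq_zero_of_natDegree_lt (by omega : ((X + C e) * Q).natDegree < N)]
        ring
    omega
  have hPeval : ∀ j ∈ Finset.range n, P.eval (x j) = x j ^ (n + 1) := by
    intro j hj
    have hQ0 : Q.eval (x j) = 0 := by
      rw [hQ, eval_prod]
      exact Finset.prod_eq_zero hj (by simp)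
    simp [hP, hQ0]
  have hcoeff : ∀ z : ℝ, P.eval z = ∑ s ∈ Finset.range n, P.coeff s * z ^ s :=
    fun z => eval_eq_sum_range' hPdeg z
  have hterm : ∀ k : ℕ,
      (m⁻¹ ^ (n + 2)) ^ k * (1 + ∑ j ∈ Finset.range n, m ^ k * x j) *
        ∏ j ∈ Finset.range n, (1 - m ^ k * x j)
      = (m⁻¹ ^ (n + 2)) ^ k - ∑ s ∈ Finset.range n, P.coeff s * (m⁻¹ ^ (s + 1)) ^ k := by
    intro k
    set z : ℝ := (m⁻¹) ^ k with hz
    set G : ℝ := ∏ j ∈ Finset.range n, (1 - m ^ k * x j) with hG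
    have hzmul : m ^ k * z = 1 := by
      rw [hz, inv_pow, mul_inv_cancel₀ (pow_ne_zero _ hmne)]
    have hfac : ∀ j : ℕ, z - x j = z * (1 - m ^ k * x j) := by
      intro j
      have h4 : z * (m ^ k * x j) = x j := by
        rw [← mul_assoc, mul_comm z, hzmul, one_mul]
      rw [mul_sub, mul_one, h4]
    have hQz : Q.eval z = z ^ n * G := by
      rw [hQ, eval_prod]
      simp only [eval_sub, eval_X, eval_C]
      rw [Finset.prod_congr rfl fun j _ => hfac j, Finset.prod_mul_distrib,
        Finset.prod_const, hG, Finset.card_range]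
    have hPz : P.eval z = z ^ (n + 1) - (z + e) * (z ^ n * G) := by
      simp [hP, hQz]
    have h1 : (m⁻¹ ^ (n + 2)) ^ k = z ^ (n + 2) := by
      rw [hz, ← pow_mul, ← pow_mul, Nat.mul_comm]
    have h2 : ∀ s : ℕ, (m⁻¹ ^ (s + 1)) ^ k = z ^ (s + 1) := fun s => by
      rw [hz, ← pow_mul, ← pow_mul, Nat.mul_comm]
    have h3 : ∑ s ∈ Finset.range n, P.coeff s * (m⁻¹ ^ (s + 1)) ^ k = z * P.eval z := by
      rw [hcoeff z, Finset.mul_sum]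
      exact Finset.sum_congr rfl fun s _ => by rw [h2]; ring
    have hA : ∑ j ∈ Finset.range n, m ^ k * x j = m ^ k * e := by
      rw [he, Finset.mul_sum]
    rw [h1, h3, hPz, hA]
    linear_combination (z ^ (n + 1) * e * G) * hzmul
  have hgeo : ∀ i : ℕ, 0 < i → Summable (fun k : ℕ => ((m⁻¹) ^ i) ^ k) ∧
      (∑' k : ℕ, ((m⁻¹) ^ i) ^ k) = (1 - (m⁻¹) ^ i)⁻¹ := by
    intro i hi
    have h0 : (0:ℝ) ≤ (m⁻¹) ^ i := pow_nonneg hinv0.le i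
    have h1 : (m⁻¹) ^ i < 1 := pow_lt_one₀ hinv0.le hinv1 hi.ne'
    exact ⟨summable_geometric_of_lt_one h0 h1, tsum_geometric_of_lt_one h0 h1⟩
  have hsum2 : Summable (fun k : ℕ => ∑ s ∈ Finset.range n, P.coeff s * (m⁻¹ ^ (s + 1)) ^ k) :=
    summable_sum fun s _ => ((hgeo (s + 1) (Nat.succ_pos s)).1).mul_left _
  have hfin : ∑ s ∈ Finset.range n, P.coeff s * (1 - m⁻¹ ^ (s + 1))⁻¹
      = ∑ j ∈ Finset.range n, u j * x j ^ (n + 1) := by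
    calc ∑ s ∈ Finset.range n, P.coeff s * (1 - m⁻¹ ^ (s + 1))⁻¹
        = ∑ s ∈ Finset.range n, ∑ j ∈ Finset.range n, P.coeff s * (u j * x j ^ s) := by
          refine Finset.sum_congr rfl fun s hs => ?_
          rw [← Finset.mul_sum, hsys s hs]
      _ = ∑ j ∈ Finset.range n, ∑ s ∈ Finset.range n, P.coeff s * (u j * x j ^ s) :=
          Finset.sum_comm
      _ = ∑ j ∈ Finset.range n, u j * P.eval (x j) := by
          refine Finset.sum_congr rfl fun j _ => ?_
          rw [hcoeff (x j), Finset.mul_sum]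
          exact Finset.sum_congr rfl fun s _ => by ring
      _ = _ := Finset.sum_congr rfl fun j hj => by rw [hPeval j hj]
  calc ∑' k : ℕ, ((m⁻¹ ^ (n + 2)) ^ k * (1 + ∑ j ∈ Finset.range n, m ^ k * x j) *
        ∏ j ∈ Finset.range n, (1 - m ^ k * x j))
      = ∑' k : ℕ, ((m⁻¹ ^ (n + 2)) ^ k
          - ∑ s ∈ Finset.range n, P.coeff s * (m⁻¹ ^ (s + 1)) ^ k) := tsum_congr hterm
    _ = (∑' k : ℕ, (m⁻¹ ^ (n + 2)) ^ k)
          - ∑' k : ℕ, ∑ s ∈ Finset.range n, P.coeff s * (m⁻¹ ^ (s + 1)) ^ k :=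
        Summable.tsum_sub (hgeo (n + 2) (by omega)).1 hsum2
    _ = (1 - m⁻¹ ^ (n + 2))⁻¹ - ∑ s ∈ Finset.range n, P.coeff s * (1 - m⁻¹ ^ (s + 1))⁻¹ := by
        rw [(hgeo (n + 2) (by omega)).2, Summable.tsum_finsetSum fun s _ =>
          ((hgeo (s + 1) (Nat.succ_pos s)).1).mul_left _]
        congr 1
        exact Finset.sum_congr rfl fun s _ => by
          rw [tsum_mul_left, (hgeo (s + 1) (Nat.succ_pos s)).2]
    _ = _ := by rw [hfin]

open Finset

/-- Closed form of the coefficient `W̃_{R+2}` for any solution of the weight system. -/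
theorem stmt_3 (R M : ℕ) (hR : 2 ≤ R) (hM : 2 ≤ M) (a : ℝ) (ha : a ∈ Set.Ioo (0 : ℝ) 1)
    (q : ℕ → ℝ) (hq : ∀ r ∈ Icc 1 R, 0 < q r) (hqsum : ∑ r ∈ Icc 1 R, q r = 1)
    (hnodes : ∀ r ∈ Icc 2 R, ∀ s ∈ Icc 2 R, r ≠ s →
      (M : ℝ) ^ (-((r : ℝ) - 2)) * (q 1 / q r) ^ a ≠
        (M : ℝ) ^ (-((s : ℝ) - 2)) * (q 1 / q s) ^ a)
    (W : ℕ → ℝ) (hW1 : W 1 = 1)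
    (hWsys : ∀ ℓ ∈ Icc 2 R,
      W 1 * q 1 ^ (-(a * ((ℓ : ℝ) - 1))) +
        ((M : ℝ) ^ ((1 : ℝ) - (ℓ : ℝ)) - 1) *
          ∑ r ∈ Icc 2 R, W r * (M : ℝ) ^ (-(((r : ℝ) - 2) * ((ℓ : ℝ) - 1))) *
            q r ^ (-(a * ((ℓ : ℝ) - 1))) = 0) :
    W 1 * q 1 ^ (-(a * ((R : ℝ) + 1))) +
      ((M : ℝ) ^ (-(R : ℝ) - 1) - 1) *
        ∑ r ∈ Icc 2 R, W r * (M : ℝ) ^ (-(((r : ℝ) - 2) * ((R : ℝ) + 1))) *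
          q r ^ (-(a * ((R : ℝ) + 1)))
    = (1 - (M : ℝ) ^ (-((R : ℝ) + 1))) * q 1 ^ (-(a * ((R : ℝ) + 1))) *
        ∑' k : ℕ, (M : ℝ) ^ (-((k : ℝ) * ((R : ℝ) + 1))) *
          (1 + ∑ r ∈ Finset.range (R - 1),
            (M : ℝ) ^ ((k : ℝ) - (r : ℝ)) * (q 1 / q (r + 2)) ^ a) *
          ∏ r ∈ Finset.range (R - 1),
            (1 - (M : ℝ) ^ ((k : ℝ) - (r : ℝ)) * (q 1 / q (r + 2)) ^ a) := by
  have hm : (1:ℝ) < (M:ℝ) := by exact_mod_cast (by omega : 1 < M)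
  set m : ℝ := (M:ℝ) with hmdef
  have hm0 : (0:ℝ) < m := lt_trans one_pos hm
  have hq1 : 0 < q 1 := hq 1 (by rw [Finset.mem_Icc]; omega)
  set n := R - 1 with hn
  have hRn : n + 1 = R := by omega
  set x : ℕ → ℝ := fun j => (m⁻¹) ^ j * (q 1 / q (j + 2)) ^ a with hx
  set u : ℕ → ℝ := fun j => W (j + 2) * x j with hu
  -- conversion of the inner sums
  have hconv : ∀ t : ℕ,
      ∑ r ∈ Icc 2 R, W r * m ^ (-(((r:ℝ) - 2) * ((t:ℕ):ℝ))) * q r ^ (-(a * ((t:ℕ):ℝ)))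
      = (∑ j ∈ Finset.range n, W (j + 2) * x j ^ t) * q 1 ^ (-(a * ((t:ℕ):ℝ))) := by
    intro t
    rw [← Finset.Ico_add_one_right_eq_Icc, Finset.sum_Ico_eq_sum_range,
      show R + 1 - 2 = n by omega, Finset.sum_mul]
    refine Finset.sum_congr rfl fun j hj => ?_
    rw [Finset.mem_range] at hj
    have hqj : 0 < q (j + 2) := hq (j + 2) (by rw [Finset.mem_Icc]; omega)
    have hq1a : (0:ℝ) < q 1 ^ a := Real.rpow_pos_of_pos hq1 a
    have hqja : (0:ℝ) < q (j + 2) ^ a := Real.rpow_pos_of_pos hqj a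
    have e1 : (((j + 2 : ℕ) : ℝ) - 2) = (j : ℝ) := by push_cast; ring
    have e2 : m ^ (-((j:ℝ) * ((t:ℕ):ℝ))) = ((m⁻¹) ^ j) ^ t := by
      rw [show -((j:ℝ) * ((t:ℕ):ℝ)) = -(((j * t : ℕ):ℕ):ℝ) by push_cast; ring,
        Real.rpow_neg hm0.le, Real.rpow_natCast, ← inv_pow, pow_mul]
    have e3 : ∀ y : ℝ, 0 < y → y ^ (-(a * ((t:ℕ):ℝ))) = ((y ^ a) ^ t)⁻¹ := fun y hy => by
      rw [Real.rpow_neg hy.le, Real.rpow_mul hy.le, Real.rpow_natCast]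
    rw [Nat.add_comm 2 j, e1, e2, e3 _ hqj, e3 _ hq1, hx]
    simp only
    rw [Real.div_rpow hq1.le hqj.le, mul_pow, div_pow]
    field_simp
  -- the linear system in power-sum form
  have hsys : ∀ s ∈ Finset.range n,
      ∑ j ∈ Finset.range n, u j * x j ^ s = (1 - (m⁻¹) ^ (s + 1))⁻¹ := by
    intro s hs
    rw [Finset.mem_range] at hs
    have hmem : s + 2 ∈ Icc 2 R := by rw [Finset.mem_Icc]; omega
    have h := hWsys (s + 2) hmem
    have ecast : ((s + 2 : ℕ) : ℝ) - 1 = (((s + 1 : ℕ) : ℕ) : ℝ) := by push_cast; ring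
    rw [ecast, hconv (s + 1), hW1] at h
    have eB : m ^ ((1:ℝ) - ((s + 2 : ℕ):ℝ)) = (m⁻¹) ^ (s + 1) := by
      rw [show (1:ℝ) - ((s + 2 : ℕ):ℝ) = -(((s + 1 : ℕ):ℕ):ℝ) by push_cast; ring,
        Real.rpow_neg hm0.le, Real.rpow_natCast, inv_pow]
    rw [eB] at h
    set B : ℝ := (m⁻¹) ^ (s + 1) with hB
    set S : ℝ := ∑ j ∈ Finset.range n, W (j + 2) * x j ^ (s + 1) with hS
    set T : ℝ := q 1 ^ (-(a * (((s + 1 : ℕ):ℕ):ℝ))) with hT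
    have hT0 : 0 < T := Real.rpow_pos_of_pos hq1 _
    have hB1 : B < 1 := by
      apply pow_lt_one₀ (by positivity) _ (Nat.succ_ne_zero s)
      exact inv_lt_one_of_one_lt₀ hm
    have hBne : (1:ℝ) - B ≠ 0 := by linarith
    have h5 : (1 + (B - 1) * S) * T = 0 := by linear_combination h
    have h6 : 1 + (B - 1) * S = 0 := by
      rcases mul_eq_zero.mp h5 with h6 | h6
      · exact h6
      · exact absurd h6 hT0.ne'
    have hSval : S = (1 - B)⁻¹ := by
      rw [← one_div, eq_div_iff hBne]
      linear_combination -h6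
    rw [← hSval, hS]
    refine Finset.sum_congr rfl fun j _ => ?_
    rw [hu]; simp only
    ring
  have hcore := core n (by omega) m hm u x hsys
  -- rewrite the LHS
  have ecastR : (R:ℝ) + 1 = (((R + 1 : ℕ):ℕ):ℝ) := by push_cast; ring
  have hconvR := hconv (R + 1)
  rw [show (((R + 1 : ℕ):ℕ):ℝ) = (R:ℝ) + 1 by push_cast; ring] at hconvR
  rw [hconvR, hW1]
  have hMR : m ^ (-(R:ℝ) - 1) = (m⁻¹) ^ (R + 1) := by
    rw [show -(R:ℝ) - 1 = -(((R + 1 : ℕ):ℕ):ℝ) by push_cast; ring,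
      Real.rpow_neg hm0.le, Real.rpow_natCast, inv_pow]
  have hMR2 : m ^ (-((R:ℝ) + 1)) = (m⁻¹) ^ (R + 1) := by
    rw [show -((R:ℝ) + 1) = -(((R + 1 : ℕ):ℕ):ℝ) by push_cast; ring,
      Real.rpow_neg hm0.le, Real.rpow_natCast, inv_pow]
  rw [hMR, hMR2]
  -- rewrite the tsum using the core identity
  have htsum : ∑' k : ℕ, m ^ (-((k : ℝ) * ((R : ℝ) + 1))) *
      (1 + ∑ r ∈ Finset.range (R - 1), m ^ ((k : ℝ) - (r : ℝ)) * (q 1 / q (r + 2)) ^ a) *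
      ∏ r ∈ Finset.range (R - 1), (1 - m ^ ((k : ℝ) - (r : ℝ)) * (q 1 / q (r + 2)) ^ a)
      = (1 - m⁻¹ ^ (n + 2))⁻¹ - ∑ j ∈ Finset.range n, u j * x j ^ (n + 1) := by
    rw [← hcore]
    refine tsum_congr fun k => ?_
    have g1 : m ^ (-((k : ℝ) * ((R : ℝ) + 1))) = (m⁻¹ ^ (n + 2)) ^ k := by
      rw [show -((k:ℝ) * ((R:ℝ) + 1)) = -((((R + 1) * k : ℕ):ℕ):ℝ) by push_cast; ring,
        Real.rpow_neg hm0.le, Real.rpow_natCast, ← inv_pow, pow_mul,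
        show n + 2 = R + 1 by omega]
    have g2 : ∀ r : ℕ, m ^ ((k : ℝ) - (r : ℝ)) * (q 1 / q (r + 2)) ^ a = m ^ k * x r := by
      intro r
      rw [Real.rpow_sub hm0, Real.rpow_natCast, Real.rpow_natCast, hx]
      simp only
      rw [div_eq_mul_inv, ← inv_pow]
      ring
    rw [g1, show R - 1 = n from hn.symm]
    congr 1
    · congr 2
      exact Finset.sum_congr rfl fun r _ => g2 r
    · exact Finset.prod_congr rfl fun r _ => by rw [g2 r]
  rw [htsum]
  -- final algebra
  have hsum_eq : ∑ j ∈ Finset.range n, u j * x j ^ (n + 1)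
      = ∑ j ∈ Finset.range n, W (j + 2) * x j ^ (R + 1) := by
    refine Finset.sum_congr rfl fun j _ => ?_
    rw [hu]; simp only
    rw [show R + 1 = n + 2 by omega]
    ring
  rw [hsum_eq, show n + 2 = R + 1 by omega]
  set B : ℝ := (m⁻¹) ^ (R + 1) with hB
  set S : ℝ := ∑ j ∈ Finset.range n, W (j + 2) * x j ^ (R + 1) with hS
  set T : ℝ := q 1 ^ (-(a * ((R:ℝ) + 1))) with hT
  have hB1 : B < 1 := by
    apply pow_lt_one₀ (by positivity) _ (Nat.succ_ne_zero R)
    exact inv_lt_one_of_one_lt₀ hm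
  have hBne : (1:ℝ) - B ≠ 0 := by linarith
  have h7 : (1 - B) * (1 - B)⁻¹ = 1 := mul_inv_cancel₀ hBne
  have h8 : (1 - B) * T * ((1 - B)⁻¹ - S) = T * (1 - (1 - B) * S) := by
    linear_combination T * h7
  rw [h8]; ring
end

section
/- Fix an integer R ≥ 2, an integer M ≥ 2 and a real a ∈ (0,1), and take uniform re-sizers q₁ = ⋯ = q_R = 1/R. Then the weight system has a unique solution (W₁,…,W_R) given by W_r = w_r + w_{r+1} + ⋯ + w_R for r = 1,…,R, where w_s = ∏_{u=1, u≠s}^{R} 1/(1 − M^{u−s}). -/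
open Finset Polynomial

lemma lc_basisDivisor (x y : ℝ) (h : x ≠ y) :
    (Lagrange.basisDivisor x y).leadingCoeff = (x - y)⁻¹ := by
  rw [Lagrange.basisDivisor, leadingCoeff_mul, leadingCoeff_C, (monic_X_sub_C y).leadingCoeff,
    mul_one]

lemma coeff_basis {ι : Type*} [DecidableEq ι] (s : Finset ι) (v : ι → ℝ)
    (hvs : Set.InjOn v s) {i : ι} (hi : i ∈ s) :
    (Lagrange.basis s v i).coeff (#s - 1) = ∏ j ∈ s.erase i, (v i - v j)⁻¹ := by
  have hd := Lagrange.natDegree_basis hvs hi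
  rw [← hd, coeff_natDegree, Lagrange.basis, leadingCoeff_prod]
  refine prod_congr rfl fun j hj => ?_
  refine lc_basisDivisor _ _ fun h => ?_
  obtain ⟨hji, hjs⟩ := mem_erase.mp hj
  exact hji (hvs hjs hi h.symm)

lemma lagA {ι : Type*} [DecidableEq ι] (s : Finset ι) (v : ι → ℝ) (hvs : Set.InjOn v s)
    (m : ℕ) (hm : m < #s) :
    ∑ i ∈ s, (v i) ^ m * ∏ j ∈ s.erase i, (v i - v j)⁻¹ =
      if m = #s - 1 then 1 else 0 := by
  have h1 : (X ^ m : ℝ[X]) = Lagrange.interpolate s v fun i => (v i) ^ m := by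
    have := Lagrange.eq_interpolate (f := (X ^ m : ℝ[X])) hvs
      (by simpa [degree_X_pow] using hm)
    simpa using this
  have h2 := congrArg (fun p : ℝ[X] => p.coeff (#s - 1)) h1
  simp only [Lagrange.interpolate_apply, finset_sum_coeff, coeff_C_mul, coeff_X_pow] at h2
  have h3 : (if m = #s - 1 then (1:ℝ) else 0) = if #s - 1 = m then 1 else 0 := by
    by_cases h : m = #s - 1 <;> simp [h, eq_comm]
  rw [h3, h2]
  exact sum_congr rfl fun i hi => by rw [coeff_basis s v hvs hi]

lemma pow_helper (c : ℝ) (hc : c ≠ 0) (t m k : ℕ) :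
    (c ^ (t + 1)) ^ (m + k) * ((c ^ k)⁻¹) ^ t = c ^ k * (c ^ (t + 1)) ^ m := by
  rw [inv_pow, ← pow_mul, ← pow_mul, ← pow_mul, inv_eq_one_div, mul_one_div,
    div_eq_iff (pow_ne_zero _ hc), ← pow_add, ← pow_add]
  congr 1
  ring

noncomputable def wfun (R M : ℕ) : ℕ → ℝ :=
  fun s => ∏ u ∈ (Icc 1 R).erase s, (1 - (M : ℝ) ^ ((u : ℝ) - (s : ℝ)))⁻¹

noncomputable def Wst (R M : ℕ) : ℕ → ℝ :=
  fun r => if r ∈ Icc 1 R then ∑ s ∈ Icc r R, wfun R M s else 0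

section Main

variable {R M : ℕ} (hR : 2 ≤ R) (hM : 2 ≤ M)

lemma hM1 (hM : 2 ≤ M) : (1 : ℝ) < (M : ℝ) := by exact_mod_cast hM

lemma hMpos (hM : 2 ≤ M) : (0 : ℝ) < (M : ℝ) := lt_trans one_pos (hM1 hM)

lemma powInj (hM : 2 ≤ M) : Function.Injective (fun u : ℕ => (M : ℝ) ^ u) :=
  (strictMono_nat_of_lt_succ (fun n => by
    have h1 := hM1 hM
    calc (M:ℝ)^n = (M:ℝ)^n * 1 := (mul_one _).symm
    _ < (M:ℝ)^n * M := by
        apply mul_lt_mul_of_pos_left h1 (pow_pos (lt_trans one_pos h1) n)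
    _ = (M:ℝ)^(n+1) := (pow_succ _ _).symm)).injective

lemma bridge (hM : 2 ≤ M) {u s : ℕ} (hus : u ≠ s) :
    (1 - (M : ℝ) ^ ((u : ℝ) - (s : ℝ)))⁻¹ = (M : ℝ) ^ s * ((M : ℝ) ^ s - (M : ℝ) ^ u)⁻¹ := by
  have hM0 := hMpos hM
  have hs : ((M : ℝ) ^ s) ≠ 0 := pow_ne_zero _ hM0.ne'
  have hsu : (M : ℝ) ^ s - (M : ℝ) ^ u ≠ 0 := sub_ne_zero.mpr fun h => hus (powInj hM h.symm)
  rw [Real.rpow_sub hM0, Real.rpow_natCast, Real.rpow_natCast]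
  have h1 : (1 : ℝ) - (M : ℝ) ^ u / (M : ℝ) ^ s = ((M : ℝ) ^ s - (M : ℝ) ^ u) / (M : ℝ) ^ s := by
    field_simp
  rw [h1, inv_div, div_eq_mul_inv]

lemma w_eq (hR : 2 ≤ R) (hM : 2 ≤ M) {s : ℕ} (hs : s ∈ Icc 1 R) :
    wfun R M s = ((M : ℝ) ^ s) ^ (R - 1) *
      ∏ u ∈ (Icc 1 R).erase s, ((M : ℝ) ^ s - (M : ℝ) ^ u)⁻¹ := by
  unfold wfun
  rw [show ∏ u ∈ (Icc 1 R).erase s, (1 - (M : ℝ) ^ ((u : ℝ) - (s : ℝ)))⁻¹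
      = ∏ u ∈ (Icc 1 R).erase s, ((M : ℝ) ^ s * ((M : ℝ) ^ s - (M : ℝ) ^ u)⁻¹) from
    prod_congr rfl fun u hu => bridge hM (mem_erase.mp hu).1]
  rw [prod_mul_distrib, prod_const, card_erase_of_mem hs, Nat.card_Icc]
  norm_num [pow_mul]

lemma keyId (hR : 2 ≤ R) (hM : 2 ≤ M) (m : ℕ) (hm : m < R) :
    ∑ s ∈ Icc 1 R, ((M : ℝ) ^ s) ^ m * ∏ u ∈ (Icc 1 R).erase s, ((M : ℝ) ^ s - (M : ℝ) ^ u)⁻¹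
      = if m = R - 1 then 1 else 0 := by
  have hcard : #(Icc 1 R) = R := by rw [Nat.card_Icc]; omega
  have := lagA (Icc 1 R) (fun u : ℕ => (M : ℝ) ^ u) ((powInj hM).injOn) m (by omega)
  rw [hcard] at this
  exact this

lemma L1 (hR : 2 ≤ R) (hM : 2 ≤ M) : ∑ s ∈ Icc 1 R, wfun R M s = 1 := by
  rw [show ∑ s ∈ Icc 1 R, wfun R M s = ∑ s ∈ Icc 1 R, ((M : ℝ) ^ s) ^ (R - 1) *
      ∏ u ∈ (Icc 1 R).erase s, ((M : ℝ) ^ s - (M : ℝ) ^ u)⁻¹ from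
    sum_congr rfl fun s hs => w_eq hR hM hs]
  rw [keyId hR hM (R - 1) (by omega), if_pos rfl]

lemma L2 (hR : 2 ≤ R) (hM : 2 ≤ M) {k : ℕ} (hk1 : 1 ≤ k) (hk2 : k ≤ R - 1) :
    ∑ s ∈ Icc 1 R, wfun R M s * (((M : ℝ) ^ k)⁻¹) ^ (s - 1) = 0 := by
  have hMne : (M : ℝ) ≠ 0 := (hMpos hM).ne'
  have hstep : ∀ s ∈ Icc 1 R, wfun R M s * (((M : ℝ) ^ k)⁻¹) ^ (s - 1)
      = (M : ℝ) ^ k * (((M : ℝ) ^ s) ^ (R - 1 - k) *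
        ∏ u ∈ (Icc 1 R).erase s, ((M : ℝ) ^ s - (M : ℝ) ^ u)⁻¹) := by
    intro s hs
    obtain ⟨hs1, hs2⟩ := mem_Icc.mp hs
    obtain ⟨t, rfl⟩ : ∃ t, s = t + 1 := ⟨s - 1, by omega⟩
    rw [w_eq hR hM hs]
    have hm : R - 1 = (R - 1 - k) + k := by omega
    rw [hm]
    have := pow_helper (M : ℝ) hMne t (R - 1 - k) k
    simp only [Nat.add_sub_cancel]
    rw [mul_right_comm, this]
    ring
  rw [sum_congr rfl hstep, ← mul_sum, keyId hR hM (R - 1 - k) (by omega),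
    if_neg (by omega), mul_zero]

lemma hsplit (hR : 2 ≤ R) (f : ℕ → ℝ) :
    ∑ s ∈ Icc 1 R, f s = f 1 + ∑ s ∈ Icc 2 R, f s := by
  rw [show Icc 1 R = insert 1 (Icc 2 R) from by
    ext z; simp only [mem_Icc, mem_insert]; omega]
  rw [sum_insert (by simp [mem_Icc])]

lemma L3 (hR : 2 ≤ R) (hM : 2 ≤ M) {k : ℕ} (hk1 : 1 ≤ k) (hk2 : k ≤ R - 1) :
    1 + ((((M : ℝ) ^ k)⁻¹) - 1) *
      ∑ r ∈ Icc 2 R, Wst R M r * (((M : ℝ) ^ k)⁻¹) ^ (r - 2) = 0 := by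
  set x : ℝ := ((M : ℝ) ^ k)⁻¹ with hx
  have h1 : ∀ r ∈ Icc 2 R, Wst R M r * x ^ (r - 2)
      = ∑ s ∈ Icc 2 R, (if r ≤ s then wfun R M s * x ^ (r - 2) else 0) := by
    intro r hr
    obtain ⟨hr2, hrR⟩ := mem_Icc.mp hr
    simp only [Wst]
    rw [if_pos (show r ∈ Icc 1 R from mem_Icc.mpr ⟨by omega, hrR⟩), sum_mul, ← sum_filter]
    rw [show filter (fun s => r ≤ s) (Icc 2 R) = Icc r R from by
      ext z; simp only [mem_Icc, mem_filter]; omega]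
  have h2 : ∀ s ∈ Icc 2 R, (∑ r ∈ Icc 2 R, if r ≤ s then wfun R M s * x ^ (r - 2) else 0)
      = wfun R M s * ∑ j ∈ range (s - 1), x ^ j := by
    intro s hs
    obtain ⟨hs2, hsR⟩ := mem_Icc.mp hs
    rw [← sum_filter]
    rw [show filter (fun r => r ≤ s) (Icc 2 R) = Icc 2 s from by
      ext z; simp only [mem_Icc, mem_filter]; omega]
    rw [mul_sum]
    refine sum_nbij' (fun r => r - 2) (fun j => j + 2) ?_ ?_ ?_ ?_ ?_
    · intro b hb; simp only [mem_Icc] at hb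
      show b - 2 ∈ range (s - 1); simp only [mem_range]; omega
    · intro b hb; simp only [mem_range] at hb
      show b + 2 ∈ Icc 2 s; simp only [mem_Icc]; omega
    · intro b hb; simp only [mem_Icc] at hb; show b - 2 + 2 = b; omega
    · intro b hb; simp only [mem_range] at hb; show b + 2 - 2 = b; omega
    · intro b hb; rfl
  have hS : ∑ r ∈ Icc 2 R, Wst R M r * x ^ (r - 2)
      = ∑ s ∈ Icc 2 R, wfun R M s * ∑ j ∈ range (s - 1), x ^ j := by
    rw [sum_congr rfl h1, sum_comm, sum_congr rfl h2]
  rw [hS, mul_sum]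
  have h3 : ∀ s ∈ Icc 2 R, (x - 1) * (wfun R M s * ∑ j ∈ range (s - 1), x ^ j)
      = wfun R M s * x ^ (s - 1) - wfun R M s := by
    intro s hs
    have := mul_geom_sum x (s - 1)
    calc (x - 1) * (wfun R M s * ∑ j ∈ range (s - 1), x ^ j)
        = wfun R M s * ((x - 1) * ∑ j ∈ range (s - 1), x ^ j) := by ring
      _ = wfun R M s * (x ^ (s - 1) - 1) := by rw [this]
      _ = wfun R M s * x ^ (s - 1) - wfun R M s := by ring
  rw [sum_congr rfl h3, sum_sub_distrib]
  have e1 := L1 hR hM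
  have e2 := L2 hR hM hk1 hk2
  rw [hsplit hR (fun s => wfun R M s)] at e1
  rw [hsplit hR (fun s => wfun R M s * x ^ (s - 1))] at e2
  simp only [Nat.sub_self, pow_zero, mul_one] at e2
  linarith

open Polynomial in
lemma uniq (hR : 2 ≤ R) (hM : 2 ≤ M) (E : ℕ → ℝ)
    (hE : ∀ k ∈ Icc 1 (R - 1), ∑ r ∈ Icc 2 R, E r * (((M : ℝ) ^ k)⁻¹) ^ (r - 2) = 0) :
    ∀ r ∈ Icc 2 R, E r = 0 := by
  set p : ℝ[X] := ∑ r ∈ Icc 2 R, C (E r) * X ^ (r - 2) with hp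
  have hvinj : Set.InjOn (fun k : ℕ => ((M : ℝ) ^ k)⁻¹) (Icc 1 (R - 1)) := by
    intro a _ b _ h
    exact powInj hM (inv_injective h)
  have hcard : #(Icc 1 (R - 1)) = R - 1 := by rw [Nat.card_Icc]; omega
  have hdeg : p.degree < (#(Icc 1 (R - 1)) : ℕ) := by
    rw [hcard]
    refine lt_of_le_of_lt (degree_sum_le _ _) ?_
    rw [Finset.sup_lt_iff (by exact_mod_cast WithBot.bot_lt_coe (R - 1))]
    intro r hr
    refine lt_of_le_of_lt (degree_C_mul_X_pow_le _ _) ?_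
    exact_mod_cast (show r - 2 < R - 1 by have := mem_Icc.mp hr; omega)
  have heval : ∀ k ∈ Icc 1 (R - 1), p.eval (((M : ℝ) ^ k)⁻¹) = 0 := by
    intro k hk
    rw [hp, eval_finset_sum]
    simpa using hE k hk
  have hp0 : p = 0 :=
    Polynomial.eq_zero_of_degree_lt_of_eval_index_eq_zero _ hvinj hdeg heval
  intro r hr
  obtain ⟨hr2, hrR⟩ := mem_Icc.mp hr
  have hco := congrArg (fun q : ℝ[X] => q.coeff (r - 2)) hp0
  simp only [hp, finset_sum_coeff, coeff_C_mul, coeff_X_pow, coeff_zero] at hco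
  rw [Finset.sum_eq_single_of_mem r hr] at hco
  · simpa using hco
  · intro b hb hbr
    have := mem_Icc.mp hb
    rw [if_neg (by omega), mul_zero]

lemma reduce (hR : 2 ≤ R) (hM : 2 ≤ M) (a : ℝ) (W : ℕ → ℝ) {ℓ : ℕ} (hℓ : ℓ ∈ Icc 2 R) :
    (W 1 * ((1 : ℝ) / R) ^ (-(a * ((ℓ : ℝ) - 1))) +
      ((M : ℝ) ^ ((1 : ℝ) - (ℓ : ℝ)) - 1) *
        ∑ r ∈ Icc 2 R, W r * (M : ℝ) ^ (-(((r : ℝ) - 2) * ((ℓ : ℝ) - 1))) *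
          ((1 : ℝ) / R) ^ (-(a * ((ℓ : ℝ) - 1))) = 0) ↔
    W 1 + ((((M : ℝ) ^ (ℓ - 1))⁻¹) - 1) *
      ∑ r ∈ Icc 2 R, W r * (((M : ℝ) ^ (ℓ - 1))⁻¹) ^ (r - 2) = 0 := by
  obtain ⟨hℓ2, hℓR⟩ := mem_Icc.mp hℓ
  have hRpos : (0 : ℝ) < (R : ℝ) := by
    have : (0 : ℕ) < R := by omega
    exact_mod_cast this
  set c₀ : ℝ := ((1 : ℝ) / R) ^ (-(a * ((ℓ : ℝ) - 1))) with hc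
  have hc₀ : 0 < c₀ := Real.rpow_pos_of_pos (by positivity) _
  have hA : (M : ℝ) ^ ((1 : ℝ) - (ℓ : ℝ)) = ((M : ℝ) ^ (ℓ - 1))⁻¹ := by
    have h1 : (1 : ℝ) - (ℓ : ℝ) = -(((ℓ - 1 : ℕ)) : ℝ) := by
      rw [Nat.cast_sub (by omega)]
      push_cast
      ring
    rw [h1, Real.rpow_neg (hMpos hM).le, Real.rpow_natCast]
  have hB : ∀ r ∈ Icc 2 R, (M : ℝ) ^ (-(((r : ℝ) - 2) * ((ℓ : ℝ) - 1)))
      = (((M : ℝ) ^ (ℓ - 1))⁻¹) ^ (r - 2) := by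
    intro r hr
    obtain ⟨hr2, hrR⟩ := mem_Icc.mp hr
    have h1 : -(((r : ℝ) - 2) * ((ℓ : ℝ) - 1)) = -((((r - 2) * (ℓ - 1) : ℕ)) : ℝ) := by
      rw [Nat.cast_mul, Nat.cast_sub (by omega : 2 ≤ r), Nat.cast_sub (by omega : 1 ≤ ℓ)]
      push_cast
      ring
    rw [h1, Real.rpow_neg (hMpos hM).le, Real.rpow_natCast, inv_pow, ← pow_mul,
      mul_comm (ℓ - 1) (r - 2)]
  have hsum : ∑ r ∈ Icc 2 R, W r * (M : ℝ) ^ (-(((r : ℝ) - 2) * ((ℓ : ℝ) - 1))) * c₀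
      = (∑ r ∈ Icc 2 R, W r * (((M : ℝ) ^ (ℓ - 1))⁻¹) ^ (r - 2)) * c₀ := by
    rw [sum_mul]
    exact sum_congr rfl fun r hr => by rw [hB r hr]
  rw [hA, hsum]
  rw [show W 1 * c₀ + (((M : ℝ) ^ (ℓ - 1))⁻¹ - 1) *
      ((∑ r ∈ Icc 2 R, W r * (((M : ℝ) ^ (ℓ - 1))⁻¹) ^ (r - 2)) * c₀)
      = (W 1 + (((M : ℝ) ^ (ℓ - 1))⁻¹ - 1) *
        ∑ r ∈ Icc 2 R, W r * (((M : ℝ) ^ (ℓ - 1))⁻¹) ^ (r - 2)) * c₀ from by ring]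
  rw [mul_eq_zero]
  simp [hc₀.ne']

lemma Wst_one (hR : 2 ≤ R) (hM : 2 ≤ M) : Wst R M 1 = 1 := by
  simp only [Wst]
  rw [if_pos (mem_Icc.mpr ⟨le_refl 1, by omega⟩)]
  exact L1 hR hM

lemma solEq (hR : 2 ≤ R) (hM : 2 ≤ M) (a : ℝ) (W : ℕ → ℝ)
    (h0 : ∀ r, r ∉ Icc 1 R → W r = 0) (h1 : W 1 = 1)
    (heq : ∀ ℓ ∈ Icc 2 R,
      W 1 * ((1 : ℝ) / R) ^ (-(a * ((ℓ : ℝ) - 1))) +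
        ((M : ℝ) ^ ((1 : ℝ) - (ℓ : ℝ)) - 1) *
          ∑ r ∈ Icc 2 R, W r * (M : ℝ) ^ (-(((r : ℝ) - 2) * ((ℓ : ℝ) - 1))) *
            ((1 : ℝ) / R) ^ (-(a * ((ℓ : ℝ) - 1))) = 0) :
    ∀ r, W r = Wst R M r := by
  have hnorm : ∀ k, 1 ≤ k → k ≤ R - 1 →
      1 + (((M : ℝ) ^ k)⁻¹ - 1) * ∑ r ∈ Icc 2 R, W r * (((M : ℝ) ^ k)⁻¹) ^ (r - 2) = 0 := by
    intro k hk1 hk2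
    have hℓ : k + 1 ∈ Icc 2 R := mem_Icc.mpr ⟨by omega, by omega⟩
    have h := (reduce hR hM a W hℓ).mp (heq _ hℓ)
    simpa [h1, Nat.add_sub_cancel] using h
  have hdiff : ∀ r ∈ Icc 2 R, W r - Wst R M r = 0 := by
    apply uniq hR hM
    intro k hk
    obtain ⟨hk1, hk2⟩ := mem_Icc.mp hk
    have e1 := hnorm k hk1 hk2
    have e2 := L3 hR hM hk1 hk2
    set x : ℝ := ((M : ℝ) ^ k)⁻¹ with hxdef
    have hgt : (1 : ℝ) < (M : ℝ) ^ k := by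
      have := hM1 hM
      calc (1 : ℝ) = 1 ^ k := (one_pow k).symm
        _ < (M : ℝ) ^ k := by
          apply pow_lt_pow_left₀ this zero_le_one (by omega)
    have hx : x - 1 ≠ 0 := by
      refine sub_ne_zero.mpr fun hxx => (ne_of_gt hgt) ?_
      rw [← inv_inv ((M : ℝ) ^ k), ← hxdef, hxx, inv_one]
    have hkey : (x - 1) * ((∑ r ∈ Icc 2 R, W r * x ^ (r - 2))
        - ∑ r ∈ Icc 2 R, Wst R M r * x ^ (r - 2)) = 0 := by
      linear_combination e1 - e2
    have hS := (mul_eq_zero.mp hkey).resolve_left hx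
    rw [show ∑ r ∈ Icc 2 R, (W r - Wst R M r) * x ^ (r - 2)
        = (∑ r ∈ Icc 2 R, W r * x ^ (r - 2)) - ∑ r ∈ Icc 2 R, Wst R M r * x ^ (r - 2) from by
      rw [← sum_sub_distrib]
      exact sum_congr rfl fun _ _ => by ring]
    exact hS
  intro r
  by_cases hr : r ∈ Icc 1 R
  · by_cases hr1 : r = 1
    · subst hr1
      rw [h1, Wst_one hR hM]
    · have hm := mem_Icc.mp hr
      have hr2 : r ∈ Icc 2 R := mem_Icc.mpr ⟨by omega, hm.2⟩
      have := hdiff r hr2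
      linarith
  · rw [h0 r hr]
    simp only [Wst]
    rw [if_neg hr]

lemma Wst_solves (hR : 2 ≤ R) (hM : 2 ≤ M) (a : ℝ) :
    ∀ ℓ ∈ Icc 2 R,
      Wst R M 1 * ((1 : ℝ) / R) ^ (-(a * ((ℓ : ℝ) - 1))) +
        ((M : ℝ) ^ ((1 : ℝ) - (ℓ : ℝ)) - 1) *
          ∑ r ∈ Icc 2 R, Wst R M r * (M : ℝ) ^ (-(((r : ℝ) - 2) * ((ℓ : ℝ) - 1))) *
            ((1 : ℝ) / R) ^ (-(a * ((ℓ : ℝ) - 1))) = 0 := by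
  intro ℓ hℓ
  rw [reduce hR hM a (Wst R M) hℓ, Wst_one hR hM]
  obtain ⟨h2, hRl⟩ := mem_Icc.mp hℓ
  exact L3 hR hM (show 1 ≤ ℓ - 1 by omega) (by omega)

end Main

/-- With uniform re-sizers `q_r = 1/R`, the weight system has a unique solution, given by
`W_r = w_r + ⋯ + w_R` with `w_s = ∏_{u ≠ s} (1 - M^{u-s})⁻¹`. -/
theorem stmt_4 (R M : ℕ) (hR : 2 ≤ R) (hM : 2 ≤ M) (a : ℝ) (ha : a ∈ Set.Ioo (0 : ℝ) 1) :
    (∃! W : ℕ → ℝ, (∀ r, r ∉ Icc 1 R → W r = 0) ∧ W 1 = 1 ∧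
      ∀ ℓ ∈ Icc 2 R,
        W 1 * ((1 : ℝ) / R) ^ (-(a * ((ℓ : ℝ) - 1))) +
          ((M : ℝ) ^ ((1 : ℝ) - (ℓ : ℝ)) - 1) *
            ∑ r ∈ Icc 2 R, W r * (M : ℝ) ^ (-(((r : ℝ) - 2) * ((ℓ : ℝ) - 1))) *
              ((1 : ℝ) / R) ^ (-(a * ((ℓ : ℝ) - 1))) = 0) ∧
    (∀ W : ℕ → ℝ,
      ((∀ r, r ∉ Icc 1 R → W r = 0) ∧ W 1 = 1 ∧
        ∀ ℓ ∈ Icc 2 R,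
          W 1 * ((1 : ℝ) / R) ^ (-(a * ((ℓ : ℝ) - 1))) +
            ((M : ℝ) ^ ((1 : ℝ) - (ℓ : ℝ)) - 1) *
              ∑ r ∈ Icc 2 R, W r * (M : ℝ) ^ (-(((r : ℝ) - 2) * ((ℓ : ℝ) - 1))) *
                ((1 : ℝ) / R) ^ (-(a * ((ℓ : ℝ) - 1))) = 0) →
      ∀ r ∈ Icc 1 R,
        W r = ∑ s ∈ Icc r R,
          ∏ u ∈ (Icc 1 R).erase s, (1 - (M : ℝ) ^ ((u : ℝ) - (s : ℝ)))⁻¹) := by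
  constructor
  · refine ⟨Wst R M, ⟨fun r hr => by simp only [Wst]; rw [if_neg hr], Wst_one hR hM,
      Wst_solves hR hM a⟩, ?_⟩
    intro y hy
    funext r
    exact solEq hR hM a y hy.1 hy.2.1 hy.2.2 r
  · intro W hW r hr
    have h := solEq hR hM a W hW.1 hW.2.1 hW.2.2 r
    rw [h]
    simp only [Wst, wfun]
    rw [if_pos hr]
end

section
/- Fix an integer M ≥ 2. For integers R ≥ 1 and 1 ≤ r ≤ R, define the uniform-re-sizer weights W_r^{(R)} = ∑_{s=r}^{R} w_s^{(R)} with w_s^{(R)} = ∏_{u=1, u≠s}^{R} 1/(1 − M^{u−s}). Then these weights are uniformly bounded: sup over all R ≥ 1 and all 1 ≤ r ≤ R of |W_r^{(R)}| is finite. -/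
open Finset

lemma aux_base (M : ℕ) (hM : 2 ≤ M) (x : ℝ) (hx : x ≤ 0) : (M:ℝ) ^ x ≤ (2:ℝ) ^ x := by
  have hM2 : (2:ℝ) ≤ (M:ℝ) := by exact_mod_cast hM
  have h1 : (2:ℝ) ^ (-x) ≤ (M:ℝ) ^ (-x) :=
    Real.rpow_le_rpow (by norm_num) hM2 (by linarith)
  have h2 : ((M:ℝ) ^ (-x))⁻¹ ≤ ((2:ℝ) ^ (-x))⁻¹ :=
    inv_anti₀ (Real.rpow_pos_of_pos (by norm_num) _) h1
  rwa [← Real.rpow_neg (by positivity), ← Real.rpow_neg (by norm_num), neg_neg] at h2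

-- base comparison for nonneg exponent
lemma aux_base' (M : ℕ) (hM : 2 ≤ M) (x : ℝ) (hx : 0 ≤ x) : (2:ℝ) ^ x ≤ (M:ℝ) ^ x :=
  Real.rpow_le_rpow (by norm_num) (by exact_mod_cast hM) hx

-- factor bound for u < s
lemma aux_lt (M : ℕ) (hM : 2 ≤ M) (u s : ℕ) (h : u < s) :
    |(1 - (M : ℝ) ^ ((u : ℝ) - (s : ℝ)))⁻¹| ≤
      Real.exp (2 * (2:ℝ) ^ ((u : ℝ) - (s : ℝ))) := by
  set x : ℝ := (u:ℝ) - (s:ℝ) with hx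
  have hx1 : x ≤ -1 := by
    have : (u:ℝ) + 1 ≤ (s:ℝ) := by exact_mod_cast h
    simp [hx]; linarith
  have ht0 : 0 < (M:ℝ) ^ x := Real.rpow_pos_of_pos (by positivity) _
  have ht2 : (2:ℝ) ^ x ≤ 1/2 := by
    have := Real.rpow_le_rpow_of_exponent_le (x := (2:ℝ)) (by norm_num) hx1
    rw [Real.rpow_neg_one] at this
    linarith
  have htle : (M:ℝ) ^ x ≤ (2:ℝ) ^ x := aux_base M hM x (by linarith)
  set t : ℝ := (M:ℝ) ^ x with htdef
  have ht : t ≤ 1/2 := le_trans htle ht2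
  have hpos : (0:ℝ) < 1 - t := by linarith
  have habs : |(1 - t)⁻¹| = (1 - t)⁻¹ := abs_of_pos (by positivity)
  rw [habs]
  have h1 : (1 - t)⁻¹ ≤ 1 + 2 * t := by
    rw [inv_le_iff_one_le_mul₀ hpos]
    nlinarith
  have h2 : (1:ℝ) + 2 * t ≤ Real.exp (2 * t) := by
    have := Real.add_one_le_exp (2 * t)
    linarith
  have h3 : Real.exp (2 * t) ≤ Real.exp (2 * (2:ℝ) ^ x) := by
    apply Real.exp_le_exp.2; linarith
  linarith

-- factor bound for u > s
lemma aux_gt (M : ℕ) (hM : 2 ≤ M) (u s : ℕ) (h : s < u) :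
    |(1 - (M : ℝ) ^ ((u : ℝ) - (s : ℝ)))⁻¹| ≤ 2 * ((2:ℝ) ^ ((u : ℝ) - (s : ℝ)))⁻¹ := by
  set x : ℝ := (u:ℝ) - (s:ℝ) with hx
  have hx1 : 1 ≤ x := by
    have : (s:ℝ) + 1 ≤ (u:ℝ) := by exact_mod_cast h
    simp [hx]; linarith
  have h2x : (2:ℝ) ≤ (2:ℝ) ^ x := by
    have := Real.rpow_le_rpow_of_exponent_le (x := (2:ℝ)) (by norm_num) hx1
    rwa [Real.rpow_one] at this
  have hMx : (2:ℝ) ^ x ≤ (M:ℝ) ^ x := aux_base' M hM x (by linarith)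
  set t : ℝ := (M:ℝ) ^ x with htdef
  have ht2 : (2:ℝ) ≤ t := le_trans h2x hMx
  have habs : |(1 - t)⁻¹| = (t - 1)⁻¹ := by
    rw [abs_inv, abs_of_neg (by linarith : (1:ℝ) - t < 0)]
    ring_nf
  rw [habs]
  have hkey : (t - 1)⁻¹ ≤ 2 * ((2:ℝ)^x)⁻¹ := by
    have hpos : (0:ℝ) < t - 1 := by linarith
    have h2pos : (0:ℝ) < (2:ℝ)^x := by positivity
    rw [inv_le_iff_one_le_mul₀ hpos]
    have heq : 2 * ((2:ℝ)^x)⁻¹ * (t-1) = 2*(t-1)/(2^x) := by ring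
    rw [heq, le_div_iff₀ h2pos]
    nlinarith
  exact hkey

lemma aux_gt_one (M : ℕ) (hM : 2 ≤ M) (u s : ℕ) (h : s < u) :
    |(1 - (M : ℝ) ^ ((u : ℝ) - (s : ℝ)))⁻¹| ≤ 1 := by
  refine le_trans (aux_gt M hM u s h) ?_
  have hx1 : (1:ℝ) ≤ (u:ℝ) - (s:ℝ) := by
    have : (s:ℝ) + 1 ≤ (u:ℝ) := by exact_mod_cast h
    linarith
  have h2x : (2:ℝ) ≤ (2:ℝ) ^ ((u:ℝ)-(s:ℝ)) := by
    have := Real.rpow_le_rpow_of_exponent_le (x := (2:ℝ)) (by norm_num) hx1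
    rwa [Real.rpow_one] at this
  have := inv_anti₀ (by norm_num : (0:ℝ) < 2) h2x
  calc 2 * ((2:ℝ) ^ ((u:ℝ)-(s:ℝ)))⁻¹ ≤ 2 * (2:ℝ)⁻¹ := by nlinarith [inv_pos.2 (lt_of_lt_of_le (by norm_num : (0:ℝ)<2) h2x)]
    _ = 1 := by norm_num

lemma aux_sum_pow (s : ℕ) : ∑ u ∈ Ico 1 s, (2:ℝ)^((u:ℝ)-(s:ℝ)) ≤ 1 := by
  have h1 : ∀ u ∈ Ico 1 s, (2:ℝ)^((u:ℝ)-(s:ℝ)) = (2:ℝ)^u * ((2:ℝ)^s)⁻¹ := by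
    intro u hu
    rw [Real.rpow_sub (by norm_num), Real.rpow_natCast, Real.rpow_natCast, div_eq_mul_inv]
  rw [Finset.sum_congr rfl h1, ← Finset.sum_mul]
  have h2 : ∑ u ∈ Ico 1 s, (2:ℝ)^u ≤ (2:ℝ)^s := by
    calc ∑ u ∈ Ico 1 s, (2:ℝ)^u
        ≤ ∑ u ∈ range s, (2:ℝ)^u := by
          apply Finset.sum_le_sum_of_subset_of_nonneg
          · intro a ha; simp only [mem_Ico] at ha; simp [mem_range]; omega
          · intro i _ _; positivity
      _ = ((2:ℝ)^s - 1)/(2-1) := geom_sum_eq (by norm_num) s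
      _ ≤ (2:ℝ)^s := by norm_num
  have hpos : (0:ℝ) < (2:ℝ)^s := by positivity
  calc (∑ u ∈ Ico 1 s, (2:ℝ)^u) * ((2:ℝ)^s)⁻¹
      ≤ (2:ℝ)^s * ((2:ℝ)^s)⁻¹ := by
        apply mul_le_mul_of_nonneg_right h2 (by positivity)
    _ = 1 := mul_inv_cancel₀ (ne_of_gt hpos)

lemma aux_w (M : ℕ) (hM : 2 ≤ M) (R s : ℕ) (hs : s ∈ Icc 1 R) :
    |∏ u ∈ (Icc 1 R).erase s, (1 - (M : ℝ) ^ ((u : ℝ) - (s : ℝ)))⁻¹| ≤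
      Real.exp 2 * (2 * ((2:ℝ) ^ ((R:ℝ) - (s:ℝ)))⁻¹) := by
  rw [mem_Icc] at hs
  obtain ⟨hs1, hsR⟩ := hs
  rw [Finset.abs_prod]
  have hsplit : (Icc 1 R).erase s = Ico 1 s ∪ Icc (s+1) R := by
    ext a
    simp only [mem_erase, mem_Icc, mem_Ico, mem_union]
    omega
  have hdisj : Disjoint (Ico 1 s) (Icc (s+1) R) := by
    rw [Finset.disjoint_left]
    intro a ha hb
    simp only [mem_Ico] at ha; simp only [mem_Icc] at hb; omega
  rw [hsplit, Finset.prod_union hdisj]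
  have hA : ∏ u ∈ Ico 1 s, |(1 - (M : ℝ) ^ ((u : ℝ) - (s : ℝ)))⁻¹| ≤ Real.exp 2 := by
    calc ∏ u ∈ Ico 1 s, |(1 - (M : ℝ) ^ ((u : ℝ) - (s : ℝ)))⁻¹|
        ≤ ∏ u ∈ Ico 1 s, Real.exp (2 * (2:ℝ) ^ ((u : ℝ) - (s : ℝ))) := by
          apply Finset.prod_le_prod (fun u _ => abs_nonneg _)
          intro u hu
          exact aux_lt M hM u s (by simp only [mem_Ico] at hu; omega)
      _ = Real.exp (∑ u ∈ Ico 1 s, 2 * (2:ℝ) ^ ((u : ℝ) - (s : ℝ))) := (Real.exp_sum _ _).symm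
      _ ≤ Real.exp 2 := by
          apply Real.exp_le_exp.2
          rw [← Finset.mul_sum]
          have := aux_sum_pow s
          linarith
  have hB : ∏ u ∈ Icc (s+1) R, |(1 - (M : ℝ) ^ ((u : ℝ) - (s : ℝ)))⁻¹| ≤
      2 * ((2:ℝ) ^ ((R:ℝ) - (s:ℝ)))⁻¹ := by
    rcases eq_or_lt_of_le hsR with heq | hlt
    · subst heq
      rw [Finset.Icc_eq_empty (by omega), Finset.prod_empty]
      rw [sub_self, Real.rpow_zero]
      norm_num
    · have hins : Icc (s+1) R = insert R (Ico (s+1) R) := (Finset.Ico_insert_right (by omega)).symm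
      rw [hins, Finset.prod_insert (by simp [mem_Ico])]
      have h1 := aux_gt M hM R s hlt
      have h2 : ∏ u ∈ Ico (s+1) R, |(1 - (M : ℝ) ^ ((u : ℝ) - (s : ℝ)))⁻¹| ≤ 1 := by
        apply Finset.prod_le_one (fun u _ => abs_nonneg _)
        intro u hu
        exact aux_gt_one M hM u s (by simp only [mem_Ico] at hu; omega)
      calc |(1 - (M : ℝ) ^ ((R : ℝ) - (s : ℝ)))⁻¹| * ∏ u ∈ Ico (s+1) R, |(1 - (M : ℝ) ^ ((u : ℝ) - (s : ℝ)))⁻¹|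
          ≤ (2 * ((2:ℝ) ^ ((R:ℝ) - (s:ℝ)))⁻¹) * 1 := by
            apply mul_le_mul h1 h2 (Finset.prod_nonneg (fun u _ => abs_nonneg _)) (by positivity)
        _ = 2 * ((2:ℝ) ^ ((R:ℝ) - (s:ℝ)))⁻¹ := mul_one _
  exact mul_le_mul hA hB (Finset.prod_nonneg (fun u _ => abs_nonneg _)) (le_of_lt (Real.exp_pos 2))

/-- The uniform-re-sizer weights `W_r^{(R)} = ∑_{s=r}^R ∏_{u ≠ s} (1 - M^{u-s})⁻¹`
are uniformly bounded over all `R ≥ 1` and `1 ≤ r ≤ R`. -/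
theorem stmt_5 (M : ℕ) (hM : 2 ≤ M) :
    ∃ C : ℝ, ∀ R : ℕ, 1 ≤ R → ∀ r ∈ Icc 1 R,
      |∑ s ∈ Icc r R,
          ∏ u ∈ (Icc 1 R).erase s, (1 - (M : ℝ) ^ ((u : ℝ) - (s : ℝ)))⁻¹| ≤ C := by
  refine ⟨Real.exp 2 * 4, ?_⟩
  intro R hR r hr
  rw [mem_Icc] at hr
  have hsum2 : ∑ s ∈ Icc r R, (2:ℝ)^s ≤ 2 * (2:ℝ)^R := by
    calc ∑ s ∈ Icc r R, (2:ℝ)^s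
        ≤ ∑ s ∈ range (R+1), (2:ℝ)^s := by
          apply Finset.sum_le_sum_of_subset_of_nonneg
          · intro a ha; simp only [mem_Icc] at ha; simp [mem_range]; omega
          · intro i _ _; positivity
      _ = ((2:ℝ)^(R+1) - 1)/(2-1) := geom_sum_eq (by norm_num) (R+1)
      _ ≤ 2 * (2:ℝ)^R := by
          have h0 : (0:ℝ) < (2:ℝ)^R := by positivity
          have he : ((2:ℝ)^(R+1) - 1)/(2-1) = 2 * 2^R - 1 := by rw [pow_succ]; ring
          rw [he]; linarith
  calc |∑ s ∈ Icc r R, ∏ u ∈ (Icc 1 R).erase s, (1 - (M : ℝ) ^ ((u : ℝ) - (s : ℝ)))⁻¹|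
      ≤ ∑ s ∈ Icc r R, |∏ u ∈ (Icc 1 R).erase s, (1 - (M : ℝ) ^ ((u : ℝ) - (s : ℝ)))⁻¹| :=
        Finset.abs_sum_le_sum_abs _ _
    _ ≤ ∑ s ∈ Icc r R, Real.exp 2 * (2 * ((2:ℝ) ^ ((R:ℝ) - (s:ℝ)))⁻¹) := by
        apply Finset.sum_le_sum
        intro s hs
        simp only [mem_Icc] at hs
        exact aux_w M hM R s (mem_Icc.2 ⟨by omega, hs.2⟩)
    _ = ∑ s ∈ Icc r R, Real.exp 2 * 2 * ((2:ℝ)^R)⁻¹ * (2:ℝ)^s := by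
        apply Finset.sum_congr rfl
        intro s hs
        rw [Real.rpow_sub (by norm_num), Real.rpow_natCast, Real.rpow_natCast, inv_div]
        have h1 : (0:ℝ) < (2:ℝ)^R := by positivity
        field_simp
    _ = Real.exp 2 * 2 * ((2:ℝ)^R)⁻¹ * ∑ s ∈ Icc r R, (2:ℝ)^s := by rw [Finset.mul_sum]
    _ ≤ Real.exp 2 * 2 * ((2:ℝ)^R)⁻¹ * (2 * (2:ℝ)^R) := by
        apply mul_le_mul_of_nonneg_left hsum2 (by positivity)
    _ = Real.exp 2 * 4 := by
        have h1 : ((2:ℝ)^R) ≠ 0 := by positivity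
        field_simp
        ring
end

section
/- Fix an integer R ≥ 2, an integer M ≥ 2 and a real a ∈ (0,1), and take uniform re-sizers q₁ = ⋯ = q_R = 1/R. Let (W₁,…,W_R) be the unique solution of the weight system (so W_r = w_r + ⋯ + w_R with w_s = ∏_{u≠s}(1 − M^{u−s})^{-1}). Then W̃_{R+1} := W₁ R^{aR} + (M^{−R} − 1) ∑_{r=2}^R W_r M^{−(r−2)R} R^{aR} equals (−1)^{R−1} R^{aR} M^{−R(R−1)/2}, and W̃_{R+2} := W₁ R^{a(R+1)} + (M^{−R−1} − 1) ∑_{r=2}^R W_r M^{−(r−2)(R+1)} R^{a(R+1)} equals (−1)^{R+1} R^{a(R+1)} M^{−R(R−1)/2} (1 − M^{−R})/(1 − M^{−1}). -/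
open Finset

noncomputable def wgt (c : ℝ) (n s : ℕ) : ℝ :=
  ∏ u ∈ (Icc 1 n).erase s, (1 - c ^ ((u : ℤ) - (s : ℤ)))⁻¹

lemma one_sub_zpow_ne {c : ℝ} (hc : 1 < c) {k : ℤ} (hk : k ≠ 0) : 1 - c ^ k ≠ 0 := by
  rcases hk.lt_or_gt with h | h
  · have : c ^ k < 1 := zpow_lt_one_of_neg₀ hc h
    intro h0; linarith
  · have : 1 < c ^ k := one_lt_zpow₀ hc h
    intro h0; linarith

lemma wgt_extend (c : ℝ) (n s : ℕ) (hs1 : 1 ≤ s) (hs : s ≤ n + 1) :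
    wgt c (n + 2) s = (1 - c ^ ((n : ℤ) + 2 - (s : ℤ)))⁻¹ * wgt c (n + 1) s := by
  unfold wgt
  have hset : (Icc 1 (n + 2)).erase s = insert (n + 2) ((Icc 1 (n + 1)).erase s) := by
    ext x; simp only [mem_erase, mem_insert, mem_Icc]; omega
  rw [hset, prod_insert (by simp only [mem_erase, mem_Icc]; omega)]
  have hcast : ((n + 2 : ℕ) : ℤ) - (s : ℤ) = (n : ℤ) + 2 - (s : ℤ) := by push_cast; ring
  rw [hcast]

lemma wgt_shift {c : ℝ} (hc : 1 < c) (m s : ℕ) (hs2 : 2 ≤ s) (hsm : s ≤ m) :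
    (1 - c ^ ((m : ℤ) + 1 - (s : ℤ))) * wgt c m (s - 1)
      = (1 - c ^ (1 - (s : ℤ))) * wgt c m s := by
  have h1 : wgt c m (s - 1) = ∏ v ∈ (Icc 2 (m + 1)).erase s, (1 - c ^ ((v : ℤ) - (s : ℤ)))⁻¹ := by
    unfold wgt
    refine prod_nbij' (fun u => u + 1) (fun v => v - 1) ?_ ?_ ?_ ?_ ?_
    · intro u hu; simp only [mem_erase, mem_Icc] at *; omega
    · intro v hv; simp only [mem_erase, mem_Icc] at *; omega
    · intro u _; show u + 1 - 1 = u; omega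
    · intro v hv; simp only [mem_erase, mem_Icc] at hv; show v - 1 + 1 = v; omega
    · intro u hu
      simp only [mem_erase, mem_Icc] at hu
      have : (u : ℤ) - ((s - 1 : ℕ) : ℤ) = ((u + 1 : ℕ) : ℤ) - (s : ℤ) := by
        push_cast [Nat.cast_sub (by omega : 1 ≤ s)]; ring
      rw [this]
  classical
  set A := ((Icc 1 m).erase s).erase 1 with hA
  have h2 : (Icc 2 (m + 1)).erase s = insert (m + 1) A := by
    ext x; simp only [hA, mem_erase, mem_insert, mem_Icc]; omega
  have h3 : (Icc 1 m).erase s = insert 1 A := by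
    ext x; simp only [hA, mem_erase, mem_insert, mem_Icc]; omega
  have hm1 : (m + 1) ∉ A := by simp only [hA, mem_erase, mem_Icc]; omega
  have h11 : (1 : ℕ) ∉ A := by simp only [hA, mem_erase, mem_Icc]; omega
  rw [h1, h2]
  unfold wgt
  rw [h3, prod_insert hm1, prod_insert h11, ← mul_assoc, ← mul_assoc]
  have e1 : (((m + 1 : ℕ) : ℤ) - (s : ℤ)) = (m : ℤ) + 1 - (s : ℤ) := by push_cast; ring
  have e2 : (((1 : ℕ) : ℤ) - (s : ℤ)) = 1 - (s : ℤ) := by push_cast; ring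
  rw [e1, e2, mul_inv_cancel₀ (one_sub_zpow_ne hc (by omega)),
    mul_inv_cancel₀ (one_sub_zpow_ne hc (by omega))]

lemma wgt_top {c : ℝ} (hc : 1 < c) (n : ℕ) :
    wgt c (n + 2) (n + 2) * (1 - c ^ (-(n : ℤ) - 1)) = wgt c (n + 1) (n + 1) := by
  classical
  have h0 : wgt c (n + 2) (n + 2)
      = ∏ u ∈ Icc 1 (n + 1), (1 - c ^ ((u : ℤ) - ((n + 2 : ℕ) : ℤ)))⁻¹ := by
    unfold wgt
    apply prod_congr _ (fun _ _ => rfl)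
    ext x; simp only [mem_erase, mem_Icc]; omega
  have h1 : Icc 1 (n + 1) = insert 1 (Icc 2 (n + 1)) := by
    ext x; simp only [mem_insert, mem_Icc]; omega
  have h2 : (1 : ℕ) ∉ Icc 2 (n + 1) := by simp
  have h3 : ∏ u ∈ Icc 2 (n + 1), (1 - c ^ ((u : ℤ) - ((n + 2 : ℕ) : ℤ)))⁻¹
      = wgt c (n + 1) (n + 1) := by
    unfold wgt
    have hset : (Icc 1 (n + 1)).erase (n + 1) = Icc 1 n := by
      ext x; simp only [mem_erase, mem_Icc]; omega
    rw [hset]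
    refine prod_nbij' (fun v => v - 1) (fun u => u + 1) ?_ ?_ ?_ ?_ ?_
    · intro v hv; simp only [mem_Icc] at *; omega
    · intro u hu; simp only [mem_Icc] at *; omega
    · intro v hv; simp only [mem_Icc] at hv; show v - 1 + 1 = v; omega
    · intro u _; show u + 1 - 1 = u; omega
    · intro v hv
      simp only [mem_Icc] at hv
      have : (v : ℤ) - ((n + 2 : ℕ) : ℤ) = ((v - 1 : ℕ) : ℤ) - ((n + 1 : ℕ) : ℤ) := by
        push_cast [Nat.cast_sub (by omega : 1 ≤ v)]; ring
      rw [this]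
  have e2 : (((1 : ℕ) : ℤ) - ((n + 2 : ℕ) : ℤ)) = -(n : ℤ) - 1 := by push_cast; ring
  rw [h0, h1, prod_insert h2, h3, e2, mul_comm, ← mul_assoc,
    mul_inv_cancel₀ (one_sub_zpow_ne hc (by omega)), one_mul]

lemma key {c : ℝ} (hc : 1 < c) (n : ℕ) (t : ℝ) :
    ∑ i ∈ range (n + 1), t ^ i * wgt c (n + 1) (i + 1)
      = ∏ j ∈ range n, (t - c ^ (-(j : ℤ) - 1)) / (1 - c ^ (-(j : ℤ) - 1)) := by
  have hc0 : (0 : ℝ) < c := lt_trans zero_lt_one hc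
  induction n with
  | zero => simp [wgt, Finset.Icc_self]
  | succ n ih =>
    rw [prod_range_succ, ← ih]
    set Q : ℝ := c ^ (-(n : ℤ) - 1) with hQdef
    have hQ : (1 : ℝ) - Q ≠ 0 := one_sub_zpow_ne hc (by omega)
    rw [mul_div_assoc', eq_div_iff hQ]
    -- boundary and middle identities
    have hb : wgt c (n + 2) (n + 2) * (1 - Q) = wgt c (n + 1) (n + 1) := wgt_top hc n
    have ha : wgt c (n + 2) 1 * (1 - Q) = -Q * wgt c (n + 1) 1 := by
      have hE := wgt_extend c n 1 le_rfl (by omega)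
      have ecast : (n : ℤ) + 2 - ((1 : ℕ) : ℤ) = (n : ℤ) + 1 := by push_cast; ring
      rw [ecast] at hE
      have hD : (1 : ℝ) - c ^ ((n : ℤ) + 1) ≠ 0 := one_sub_zpow_ne hc (by omega)
      have hq : Q * c ^ ((n : ℤ) + 1) = 1 := by
        rw [hQdef, ← zpow_add₀ hc0.ne']; norm_num
      rw [hE]
      apply mul_left_cancel₀ hD
      linear_combination (wgt c (n + 1) 1 * (1 - Q)) * mul_inv_cancel₀ hD
        - wgt c (n + 1) 1 * hq
    have hA : ∀ i < n, wgt c (n + 2) (i + 2) * (1 - Q)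
        = wgt c (n + 1) (i + 1) - Q * wgt c (n + 1) (i + 2) := by
      intro i hi
      have hE := wgt_extend c n (i + 2) (by omega) (by omega)
      have ecast : (n : ℤ) + 2 - ((i + 2 : ℕ) : ℤ) = (n : ℤ) - i := by push_cast; ring
      rw [ecast] at hE
      have hS := wgt_shift hc (n + 1) (i + 2) (by omega) (by omega)
      have e1 : ((n + 1 : ℕ) : ℤ) + 1 - ((i + 2 : ℕ) : ℤ) = (n : ℤ) - i := by push_cast; ring
      have e2 : 1 - ((i + 2 : ℕ) : ℤ) = -(i : ℤ) - 1 := by push_cast; ring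
      have e3 : i + 2 - 1 = i + 1 := by omega
      rw [e1, e2, e3] at hS
      have hD : (1 : ℝ) - c ^ ((n : ℤ) - i) ≠ 0 := one_sub_zpow_ne hc (by omega)
      have hz : Q * c ^ ((n : ℤ) - i) = c ^ (-(i : ℤ) - 1) := by
        rw [hQdef, ← zpow_add₀ hc0.ne']; congr 1; ring
      rw [hE]
      apply mul_left_cancel₀ hD
      linear_combination (wgt c (n + 1) (i + 2) * (1 - Q)) * mul_inv_cancel₀ hD
        - hS - wgt c (n + 1) (i + 2) * hz
    -- assemble
    have g1 : ∑ i ∈ range (n + 2), t ^ i * wgt c (n + 2) (i + 1)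
        = wgt c (n + 2) 1 + (∑ i ∈ range n, t ^ (i + 1) * wgt c (n + 2) (i + 2))
          + t ^ (n + 1) * wgt c (n + 2) (n + 2) := by
      rw [Finset.sum_range_succ' (fun i => t ^ i * wgt c (n + 2) (i + 1)) (n + 1),
        Finset.sum_range_succ]
      ring
    have g2 : ∑ i ∈ range (n + 1), t ^ i * wgt c (n + 1) (i + 1)
        = wgt c (n + 1) 1 + ∑ i ∈ range n, t ^ (i + 1) * wgt c (n + 1) (i + 2) := by
      rw [Finset.sum_range_succ' (fun i => t ^ i * wgt c (n + 1) (i + 1)) n]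
      ring
    have g3 : (∑ i ∈ range (n + 1), t ^ i * wgt c (n + 1) (i + 1)) * t
        = (∑ i ∈ range n, t ^ (i + 1) * wgt c (n + 1) (i + 1))
          + t ^ (n + 1) * wgt c (n + 1) (n + 1) := by
      rw [sum_mul]
      rw [show ∑ i ∈ range (n + 1), t ^ i * wgt c (n + 1) (i + 1) * t
          = ∑ i ∈ range (n + 1), t ^ (i + 1) * wgt c (n + 1) (i + 1) from
        sum_congr rfl fun i _ => by ring]
      rw [Finset.sum_range_succ]
    have f1 : (∑ i ∈ range n, t ^ (i + 1) * wgt c (n + 2) (i + 2)) * (1 - Q)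
        = (∑ i ∈ range n, t ^ (i + 1) * wgt c (n + 1) (i + 1))
          - Q * ∑ i ∈ range n, t ^ (i + 1) * wgt c (n + 1) (i + 2) := by
      rw [sum_mul, mul_sum, ← sum_sub_distrib]
      refine sum_congr rfl fun i hi => ?_
      have := hA i (mem_range.mp hi)
      linear_combination t ^ (i + 1) * this
    linear_combination (1 - Q) * g1 + f1 + ha + t ^ (n + 1) * hb - g3 + Q * g2

lemma abel (R : ℕ) (hR : 2 ≤ R) (c : ℝ) (W : ℕ → ℝ)
    (hWform : ∀ r ∈ Icc 1 R, W r = ∑ s ∈ Icc r R, wgt c R s) (x : ℝ) :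
    W 1 + (x - 1) * ∑ r ∈ Icc 2 R, W r * x ^ (r - 2)
      = ∑ s ∈ Icc 1 R, x ^ (s - 1) * wgt c R s := by
  classical
  have h1 : W 1 = ∑ s ∈ Icc 1 R, wgt c R s := by
    rw [hWform 1 (by simp only [mem_Icc]; omega)]
  have h2 : ∑ r ∈ Icc 2 R, W r * x ^ (r - 2)
      = ∑ s ∈ Icc 2 R, wgt c R s * ∑ r ∈ Icc 2 s, x ^ (r - 2) := by
    calc ∑ r ∈ Icc 2 R, W r * x ^ (r - 2)
        = ∑ r ∈ Icc 2 R, ∑ s ∈ Icc r R, wgt c R s * x ^ (r - 2) := by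
          refine sum_congr rfl fun r hr => ?_
          simp only [mem_Icc] at hr
          rw [hWform r (by simp only [mem_Icc]; omega), sum_mul]
      _ = ∑ r ∈ Icc 2 R, ∑ s ∈ Icc 2 R, if r ≤ s then wgt c R s * x ^ (r - 2) else 0 := by
          refine sum_congr rfl fun r hr => ?_
          simp only [mem_Icc] at hr
          rw [← sum_filter]
          refine sum_congr ?_ fun _ _ => rfl
          ext s; simp only [mem_filter, mem_Icc]; omega
      _ = ∑ s ∈ Icc 2 R, ∑ r ∈ Icc 2 R, if r ≤ s then wgt c R s * x ^ (r - 2) else 0 :=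
          sum_comm
      _ = ∑ s ∈ Icc 2 R, ∑ r ∈ Icc 2 s, wgt c R s * x ^ (r - 2) := by
          refine sum_congr rfl fun s hs => ?_
          simp only [mem_Icc] at hs
          rw [← sum_filter]
          refine sum_congr ?_ fun _ _ => rfl
          ext r; simp only [mem_filter, mem_Icc]; omega
      _ = ∑ s ∈ Icc 2 R, wgt c R s * ∑ r ∈ Icc 2 s, x ^ (r - 2) := by
          refine sum_congr rfl fun s _ => ?_
          rw [mul_sum]
  have h3 : ∀ s, 2 ≤ s → (x - 1) * ∑ r ∈ Icc 2 s, x ^ (r - 2) = x ^ (s - 1) - 1 := by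
    intro s hs
    have hre : ∑ r ∈ Icc 2 s, x ^ (r - 2) = ∑ i ∈ range (s - 1), x ^ i := by
      refine sum_nbij' (fun r => r - 2) (fun i => i + 2) ?_ ?_ ?_ ?_ ?_
      · intro r hr; simp only [mem_Icc, mem_range] at *; omega
      · intro i hi; simp only [mem_Icc, mem_range] at *; omega
      · intro r hr; simp only [mem_Icc] at hr; show r - 2 + 2 = r; omega
      · intro i _; show i + 2 - 2 = i; omega
      · intro r _; rfl
    rw [hre, mul_comm, geom_sum_mul]
  have hins : Icc 1 R = insert 1 (Icc 2 R) := by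
    ext y; simp only [mem_insert, mem_Icc]; omega
  have hnotmem : (1 : ℕ) ∉ Icc 2 R := by simp
  have hmul : (x - 1) * ∑ s ∈ Icc 2 R, wgt c R s * ∑ r ∈ Icc 2 s, x ^ (r - 2)
      = ∑ s ∈ Icc 2 R, wgt c R s * (x ^ (s - 1) - 1) := by
    rw [mul_sum]
    refine sum_congr rfl fun s hs => ?_
    simp only [mem_Icc] at hs
    rw [← h3 s hs.1]; ring
  have hcomb : ∑ s ∈ Icc 2 R, wgt c R s + ∑ s ∈ Icc 2 R, wgt c R s * (x ^ (s - 1) - 1)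
      = ∑ s ∈ Icc 2 R, x ^ (s - 1) * wgt c R s := by
    rw [← sum_add_distrib]
    refine sum_congr rfl fun s _ => ?_
    ring
  rw [h1, h2, hmul, hins, sum_insert hnotmem, sum_insert hnotmem]
  simp only [Nat.sub_self, pow_zero, one_mul]
  linear_combination hcomb

lemma zpow_neg_nat {c : ℝ} (hc0 : c ≠ 0) (j : ℕ) : c ^ (-(j : ℤ) - 1) = (c⁻¹) ^ (j + 1) := by
  rw [show -(j : ℤ) - 1 = -((j + 1 : ℕ) : ℤ) by push_cast; ring, zpow_neg, zpow_natCast, inv_pow]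

lemma sum_range_add_one (m : ℕ) : ∑ j ∈ range m, (j + 1) = m * (m + 1) / 2 := by
  have h1 : ∑ j ∈ range (m + 1), j = ∑ j ∈ range m, (j + 1) := by
    rw [Finset.sum_range_succ']; simp
  have h2 := Finset.sum_range_id_mul_two (m + 1)
  rw [h1] at h2
  simp only [Nat.add_sub_cancel] at h2
  have h3 : (∑ j ∈ range m, (j + 1)) * 2 = m * (m + 1) := by rw [h2]; ring
  exact (Nat.div_eq_of_eq_mul_left (by norm_num) h3.symm).symm

lemma prod_neg_pow {c : ℝ} (hc0 : c ≠ 0) (m : ℕ) :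
    ∏ j ∈ range m, (-(c ^ (-(j : ℤ) - 1))) = (-1) ^ m * (c⁻¹) ^ (m * (m + 1) / 2) := by
  have : ∀ j ∈ range m, (-(c ^ (-(j : ℤ) - 1))) = (-1) * (c⁻¹) ^ (j + 1) := by
    intro j _; rw [zpow_neg_nat hc0 j]; ring
  rw [prod_congr rfl this, prod_mul_distrib, prod_const, card_range,
    prod_pow_eq_pow_sum, sum_range_add_one]

lemma prodeval1 {c : ℝ} (hc : 1 < c) (m : ℕ) :
    ∏ j ∈ range m, (c ^ (-(m : ℤ) - 1) - c ^ (-(j : ℤ) - 1)) / (1 - c ^ (-(j : ℤ) - 1))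
      = (-1) ^ m * (c⁻¹) ^ (m * (m + 1) / 2) := by
  have hc0 : (0 : ℝ) < c := lt_trans zero_lt_one hc
  have hfac : ∀ j ∈ range m,
      (c ^ (-(m : ℤ) - 1) - c ^ (-(j : ℤ) - 1)) / (1 - c ^ (-(j : ℤ) - 1))
        = (-(c ^ (-(j : ℤ) - 1))) * ((1 - c ^ ((j : ℤ) - (m : ℤ))) / (1 - c ^ (-(j : ℤ) - 1))) := by
    intro j hj
    have hz : c ^ (-(j : ℤ) - 1) * c ^ ((j : ℤ) - (m : ℤ)) = c ^ (-(m : ℤ) - 1) := by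
      rw [← zpow_add₀ hc0.ne']; congr 1; ring
    rw [← mul_div_assoc]
    congr 1
    linear_combination -hz
  rw [prod_congr rfl hfac, prod_mul_distrib, prod_neg_pow hc0.ne', prod_div_distrib]
  have hrefl : ∏ j ∈ range m, (1 - c ^ ((j : ℤ) - (m : ℤ)))
      = ∏ j ∈ range m, (1 - c ^ (-(j : ℤ) - 1)) := by
    rw [← prod_range_reflect (fun j : ℕ => 1 - c ^ (-(j : ℤ) - 1)) m]
    refine prod_congr rfl fun j hj => ?_
    simp only [mem_range] at hj
    congr 1
    congr 1
    omega
  have hden : ∏ j ∈ range m, (1 - c ^ (-(j : ℤ) - 1)) ≠ 0 :=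
    prod_ne_zero_iff.mpr fun j _ => one_sub_zpow_ne hc (by omega)
  rw [hrefl, div_self hden, mul_one]

lemma prodeval2 {c : ℝ} (hc : 1 < c) (m : ℕ) :
    ∏ j ∈ range m, (c ^ (-(m : ℤ) - 2) - c ^ (-(j : ℤ) - 1)) / (1 - c ^ (-(j : ℤ) - 1))
      = (-1) ^ m * (c⁻¹) ^ (m * (m + 1) / 2)
        * ((1 - c ^ (-(m : ℤ) - 1)) / (1 - c ^ (-1 : ℤ))) := by
  have hc0 : (0 : ℝ) < c := lt_trans zero_lt_one hc
  have hfac : ∀ j ∈ range m,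
      (c ^ (-(m : ℤ) - 2) - c ^ (-(j : ℤ) - 1)) / (1 - c ^ (-(j : ℤ) - 1))
        = (-(c ^ (-(j : ℤ) - 1)))
          * ((1 - c ^ ((j : ℤ) - (m : ℤ) - 1)) / (1 - c ^ (-(j : ℤ) - 1))) := by
    intro j hj
    have hz : c ^ (-(j : ℤ) - 1) * c ^ ((j : ℤ) - (m : ℤ) - 1) = c ^ (-(m : ℤ) - 2) := by
      rw [← zpow_add₀ hc0.ne']; congr 1; ring
    rw [← mul_div_assoc]
    congr 1
    linear_combination -hz
  rw [prod_congr rfl hfac, prod_mul_distrib, prod_neg_pow hc0.ne', prod_div_distrib]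
  have hrefl : ∏ j ∈ range m, (1 - c ^ ((j : ℤ) - (m : ℤ) - 1))
      = ∏ j ∈ range m, (1 - c ^ (-((j : ℤ) + 1) - 1)) := by
    rw [← prod_range_reflect (fun j : ℕ => 1 - c ^ (-((j : ℤ) + 1) - 1)) m]
    refine prod_congr rfl fun j hj => ?_
    simp only [mem_range] at hj
    congr 1
    congr 1
    omega
  have hden : ∏ j ∈ range m, (1 - c ^ (-(j : ℤ) - 1)) ≠ 0 :=
    prod_ne_zero_iff.mpr fun j _ => one_sub_zpow_ne hc (by omega)
  have h0 : (1 : ℝ) - c ^ (-1 : ℤ) ≠ 0 := one_sub_zpow_ne hc (by omega)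
  have hB2 : (∏ j ∈ range m, (1 - c ^ (-((j : ℤ) + 1) - 1))) * (1 - c ^ (-1 : ℤ))
      = (∏ j ∈ range m, (1 - c ^ (-(j : ℤ) - 1))) * (1 - c ^ (-(m : ℤ) - 1)) := by
    have e1 := Finset.prod_range_succ' (fun j : ℕ => 1 - c ^ (-(j : ℤ) - 1)) m
    have e2 := Finset.prod_range_succ (fun j : ℕ => 1 - c ^ (-(j : ℤ) - 1)) m
    rw [e2] at e1
    have e3 : ∏ j ∈ range m, (1 - c ^ (-((j : ℤ) + 1) - 1))
        = ∏ j ∈ range m, (1 - c ^ (-((j + 1 : ℕ) : ℤ) - 1)) := by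
      refine prod_congr rfl fun j _ => ?_
      congr 2
      all_goals push_cast; ring
    have e4 : (1 : ℝ) - c ^ (-((0 : ℕ) : ℤ) - 1) = 1 - c ^ (-1 : ℤ) := by norm_num
    rw [e3]
    calc (∏ j ∈ range m, (1 - c ^ (-((j + 1 : ℕ) : ℤ) - 1))) * (1 - c ^ (-1 : ℤ))
        = (∏ j ∈ range m, (1 - c ^ (-((j + 1 : ℕ) : ℤ) - 1)))
            * (1 - c ^ (-((0 : ℕ) : ℤ) - 1)) := by rw [e4]
      _ = (∏ j ∈ range m, (1 - c ^ (-(j : ℤ) - 1))) * (1 - c ^ (-(m : ℤ) - 1)) := e1.symm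
  have hdiv : (∏ j ∈ range m, (1 - c ^ (-((j : ℤ) + 1) - 1)))
        / (∏ j ∈ range m, (1 - c ^ (-(j : ℤ) - 1)))
      = (1 - c ^ (-(m : ℤ) - 1)) / (1 - c ^ (-1 : ℤ)) := by
    rw [div_eq_div_iff hden h0]
    linear_combination hB2
  rw [hrefl, hdiv]

lemma sum_Icc_one (n : ℕ) (f : ℕ → ℝ) : ∑ s ∈ Icc 1 n, f s = ∑ i ∈ range n, f (i + 1) := by
  refine sum_nbij' (fun s => s - 1) (fun i => i + 1) ?_ ?_ ?_ ?_ ?_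
  · intro s hs; simp only [mem_Icc] at hs; show s - 1 ∈ range n; simp only [mem_range]; omega
  · intro i hi; simp only [mem_range] at hi; show i + 1 ∈ Icc 1 n; simp only [mem_Icc]; omega
  · intro s hs; simp only [mem_Icc] at hs; show s - 1 + 1 = s; omega
  · intro i _; show i + 1 - 1 = i; omega
  · intro s hs; simp only [mem_Icc] at hs
    show f s = f (s - 1 + 1)
    congr 1; omega

/-- For the (unique) solution of the weight system with uniform re-sizers `q_r = 1/R`,
closed forms of the coefficients `W̃_{R+1}` and `W̃_{R+2}`. -/
theorem stmt_6 (R M : ℕ) (hR : 2 ≤ R) (hM : 2 ≤ M) (a : ℝ) (ha : a ∈ Set.Ioo (0 : ℝ) 1)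
    (W : ℕ → ℝ) (hW1 : W 1 = 1)
    (hWsys : ∀ ℓ ∈ Icc 2 R,
      W 1 * ((1 : ℝ) / R) ^ (-(a * ((ℓ : ℝ) - 1))) +
        ((M : ℝ) ^ ((1 : ℝ) - (ℓ : ℝ)) - 1) *
          ∑ r ∈ Icc 2 R, W r * (M : ℝ) ^ (-(((r : ℝ) - 2) * ((ℓ : ℝ) - 1))) *
            ((1 : ℝ) / R) ^ (-(a * ((ℓ : ℝ) - 1))) = 0)
    (hWform : ∀ r ∈ Icc 1 R,
      W r = ∑ s ∈ Icc r R,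
        ∏ u ∈ (Icc 1 R).erase s, (1 - (M : ℝ) ^ ((u : ℝ) - (s : ℝ)))⁻¹) :
    W 1 * (R : ℝ) ^ (a * (R : ℝ)) +
      ((M : ℝ) ^ (-(R : ℝ)) - 1) *
        ∑ r ∈ Icc 2 R, W r * (M : ℝ) ^ (-(((r : ℝ) - 2) * (R : ℝ))) * (R : ℝ) ^ (a * (R : ℝ))
      = (-1 : ℝ) ^ (R - 1) * (R : ℝ) ^ (a * (R : ℝ)) *
          (M : ℝ) ^ (-((R : ℝ) * ((R : ℝ) - 1) / 2)) ∧
    W 1 * (R : ℝ) ^ (a * ((R : ℝ) + 1)) +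
      ((M : ℝ) ^ (-(R : ℝ) - 1) - 1) *
        ∑ r ∈ Icc 2 R, W r * (M : ℝ) ^ (-(((r : ℝ) - 2) * ((R : ℝ) + 1))) *
          (R : ℝ) ^ (a * ((R : ℝ) + 1))
      = (-1 : ℝ) ^ (R + 1) * (R : ℝ) ^ (a * ((R : ℝ) + 1)) *
          (M : ℝ) ^ (-((R : ℝ) * ((R : ℝ) - 1) / 2)) *
          ((1 - (M : ℝ) ^ (-(R : ℝ))) / (1 - (M : ℝ) ^ (-(1 : ℝ)))) := by
  clear hW1 hWsys ha
  obtain ⟨n, rfl⟩ : ∃ n, R = n + 2 := ⟨R - 2, by omega⟩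
  have hc : (1 : ℝ) < (M : ℝ) := by exact_mod_cast (by omega : 1 < M)
  have hc0 : (0 : ℝ) < (M : ℝ) := lt_trans zero_lt_one hc
  have hWform' : ∀ r ∈ Icc 1 (n + 2), W r = ∑ s ∈ Icc r (n + 2), wgt (M : ℝ) (n + 2) s := by
    intro r hr
    rw [hWform r hr]
    refine sum_congr rfl fun s _ => ?_
    unfold wgt
    refine prod_congr rfl fun u _ => ?_
    congr 1
    rw [show ((u : ℝ) - (s : ℝ)) = (((u : ℤ) - (s : ℤ) : ℤ) : ℝ) by push_cast; ring,
      Real.rpow_intCast]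
  have hval : ∀ x : ℝ, W 1 + (x - 1) * ∑ r ∈ Icc 2 (n + 2), W r * x ^ (r - 2)
      = ∏ j ∈ range (n + 1),
          (x - (M : ℝ) ^ (-(j : ℤ) - 1)) / (1 - (M : ℝ) ^ (-(j : ℤ) - 1)) := by
    intro x
    rw [abel (n + 2) (by omega) (M : ℝ) W hWform' x,
      sum_Icc_one (n + 2) (fun s => x ^ (s - 1) * wgt (M : ℝ) (n + 2) s)]
    have hk := key hc (n + 1) x
    simp only [show n + 1 + 1 = n + 2 from rfl] at hk
    rw [← hk]
    refine sum_congr rfl fun i _ => ?_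
    norm_num
  -- cast for the exponent K
  have hKnat : ((n + 1) * (n + 2) / 2 : ℕ) * 2 = (n + 1) * (n + 2) :=
    Nat.div_mul_cancel (Nat.even_mul_succ_self (n + 1)).two_dvd
  have hKr : (M : ℝ) ^ (-(((n + 2 : ℕ) : ℝ) * (((n + 2 : ℕ) : ℝ) - 1) / 2))
      = ((M : ℝ)⁻¹) ^ ((n + 1) * (n + 2) / 2) := by
    have hc2 : ((((n + 1) * (n + 2) / 2 : ℕ)) : ℝ) * 2
        = (((n + 1) * (n + 2) : ℕ) : ℝ) := by exact_mod_cast hKnat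
    have hcast : (-(((n + 2 : ℕ) : ℝ) * (((n + 2 : ℕ) : ℝ) - 1) / 2))
        = -((((n + 1) * (n + 2) / 2 : ℕ)) : ℝ) := by
      push_cast at hc2 ⊢
      linear_combination ((1 : ℝ)/2) * hc2
    rw [hcast, Real.rpow_neg hc0.le, Real.rpow_natCast, inv_pow]
  have hm1 : (M : ℝ) ^ (-(1 : ℝ)) = (M : ℝ) ^ (-1 : ℤ) := by
    rw [show (-(1 : ℝ)) = ((-1 : ℤ) : ℝ) by norm_num, Real.rpow_intCast]
  constructor
  · -- first identity
    set x1 : ℝ := (M : ℝ) ^ (-((n + 1 : ℕ) : ℤ) - 1) with hx1def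
    have hx1 : (M : ℝ) ^ (-((n + 2 : ℕ) : ℝ)) = x1 := by
      rw [hx1def, show (-((n + 2 : ℕ) : ℝ)) = ((-((n + 1 : ℕ) : ℤ) - 1 : ℤ) : ℝ) by
        push_cast; ring, Real.rpow_intCast]
    have hG1 : W 1 + (x1 - 1) * ∑ r ∈ Icc 2 (n + 2), W r * x1 ^ (r - 2)
        = (-1 : ℝ) ^ (n + 1) * ((M : ℝ)⁻¹) ^ ((n + 1) * (n + 2) / 2) := by
      rw [hval x1, hx1def]
      exact prodeval1 hc (n + 1)
    have hsum1 : ∑ r ∈ Icc 2 (n + 2),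
          W r * (M : ℝ) ^ (-(((r : ℝ) - 2) * ((n + 2 : ℕ) : ℝ)))
            * ((n + 2 : ℕ) : ℝ) ^ (a * ((n + 2 : ℕ) : ℝ))
        = (∑ r ∈ Icc 2 (n + 2), W r * x1 ^ (r - 2))
            * ((n + 2 : ℕ) : ℝ) ^ (a * ((n + 2 : ℕ) : ℝ)) := by
      rw [sum_mul]
      refine sum_congr rfl fun r hr => ?_
      simp only [mem_Icc] at hr
      have he : (-(((r : ℝ) - 2) * ((n + 2 : ℕ) : ℝ)))
          = (((-((n + 1 : ℕ) : ℤ) - 1) * ((r - 2 : ℕ) : ℤ) : ℤ) : ℝ) := by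
        push_cast [Nat.cast_sub hr.1]; ring
      rw [he, Real.rpow_intCast, zpow_mul, zpow_natCast, hx1def]
    rw [hx1, show n + 2 - 1 = n + 1 from rfl, hKr]
    linear_combination ((n + 2 : ℕ) : ℝ) ^ (a * ((n + 2 : ℕ) : ℝ)) * hG1 + (x1 - 1) * hsum1
  · -- second identity
    set x2 : ℝ := (M : ℝ) ^ (-((n + 1 : ℕ) : ℤ) - 2) with hx2def
    have hx2 : (M : ℝ) ^ (-((n + 2 : ℕ) : ℝ) - 1) = x2 := by
      rw [hx2def, show (-((n + 2 : ℕ) : ℝ) - 1) = ((-((n + 1 : ℕ) : ℤ) - 2 : ℤ) : ℝ) by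
        push_cast; ring, Real.rpow_intCast]
    have hG2 : W 1 + (x2 - 1) * ∑ r ∈ Icc 2 (n + 2), W r * x2 ^ (r - 2)
        = (-1 : ℝ) ^ (n + 1) * ((M : ℝ)⁻¹) ^ ((n + 1) * (n + 2) / 2)
          * ((1 - (M : ℝ) ^ (-((n + 1 : ℕ) : ℤ) - 1)) / (1 - (M : ℝ) ^ (-1 : ℤ))) := by
      rw [hval x2, hx2def]
      exact prodeval2 hc (n + 1)
    have hx1' : (M : ℝ) ^ (-((n + 2 : ℕ) : ℝ)) = (M : ℝ) ^ (-((n + 1 : ℕ) : ℤ) - 1) := by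
      rw [show (-((n + 2 : ℕ) : ℝ)) = ((-((n + 1 : ℕ) : ℤ) - 1 : ℤ) : ℝ) by
        push_cast; ring, Real.rpow_intCast]
    have hsum2 : ∑ r ∈ Icc 2 (n + 2),
          W r * (M : ℝ) ^ (-(((r : ℝ) - 2) * (((n + 2 : ℕ) : ℝ) + 1)))
            * ((n + 2 : ℕ) : ℝ) ^ (a * (((n + 2 : ℕ) : ℝ) + 1))
        = (∑ r ∈ Icc 2 (n + 2), W r * x2 ^ (r - 2))
            * ((n + 2 : ℕ) : ℝ) ^ (a * (((n + 2 : ℕ) : ℝ) + 1)) := by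
      rw [sum_mul]
      refine sum_congr rfl fun r hr => ?_
      simp only [mem_Icc] at hr
      have he : (-(((r : ℝ) - 2) * (((n + 2 : ℕ) : ℝ) + 1)))
          = (((-((n + 1 : ℕ) : ℤ) - 2) * ((r - 2 : ℕ) : ℤ) : ℤ) : ℝ) := by
        push_cast [Nat.cast_sub hr.1]; ring
      rw [he, Real.rpow_intCast, zpow_mul, zpow_natCast, hx2def]
    rw [hx2, hKr, hm1, hx1']
    have hsign : (-1 : ℝ) ^ (n + 2 + 1) = (-1 : ℝ) ^ (n + 1) := by
      rw [pow_succ, pow_succ, pow_succ]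
      ring
    rw [hsign]
    linear_combination ((n + 2 : ℕ) : ℝ) ^ (a * (((n + 2 : ℕ) : ℝ) + 1)) * hG2
      + (x2 - 1) * hsum2
end

section
/- Let R ≥ 1 be an integer, let x₁,…,x_R be pairwise distinct real numbers, let c be a real number, and let (y₁,…,y_R) be the unique solution of the Vandermonde system ∑_{r=1}^{R} x_r^{ℓ−1} y_r = c^{ℓ−1}, ℓ = 1,…,R. Then ∑_{r=1}^{R} y_r x_r^{R} = c^{R} − ∏_{r=1}^{R} (c − x_r). -/
open Finset Polynomial

/-- For the solution of the Vandermonde system with right-hand side `(1, c, …, c^{R-1})`,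
one has `∑_r y_r x_r^R = c^R - ∏_r (c - x_r)`. -/
theorem stmt_9 (R : ℕ) (hR : 1 ≤ R) (x : Fin R → ℝ) (hx : Function.Injective x) (c : ℝ)
    (y : Fin R → ℝ) (hy : ∀ ℓ : Fin R, ∑ r, x r ^ (ℓ : ℕ) * y r = c ^ (ℓ : ℕ)) :
    ∑ r, y r * x r ^ R = c ^ R - ∏ r, (c - x r) := by
  set p : Polynomial ℝ := ∏ r, (X - C (x r)) with hp
  have hmonic : p.Monic := monic_prod_of_monic _ _ fun r _ => monic_X_sub_C _
  have hdegp : p.natDegree = R := by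
    simp [hp, natDegree_prod_of_monic _ _ fun r _ => monic_X_sub_C (x r)]
  set q : Polynomial ℝ := X ^ R - p with hq
  have hqdeg : q.natDegree < R := by
    rcases eq_or_ne q 0 with h | h
    · rw [h, natDegree_zero]; exact hR
    · rw [Polynomial.natDegree_lt_iff_degree_lt h]
      have := Polynomial.degree_sub_lt (p := X ^ R) (q := p)
        (by rw [degree_X_pow, Polynomial.degree_eq_natDegree hmonic.ne_zero, hdegp])
        (pow_ne_zero _ X_ne_zero)
        (by simp [hmonic.leadingCoeff, leadingCoeff_X_pow])
      simpa [degree_X_pow] using this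
  have hqeval : ∀ t : ℝ, q.eval t = ∑ ℓ ∈ range R, q.coeff ℓ * t ^ ℓ := fun t =>
    Polynomial.eval_eq_sum_range' hqdeg t
  have hpeval : ∀ r, p.eval (x r) = 0 := by
    intro r
    simp [hp, eval_prod]
    exact Finset.prod_eq_zero (mem_univ r) (by simp)
  have key : ∀ r, x r ^ R = q.eval (x r) := by
    intro r
    have := hpeval r
    simp [hq, eval_sub, eval_pow, eval_X, this]
  calc ∑ r, y r * x r ^ R = ∑ r, y r * q.eval (x r) := by
        simp_rw [key]
    _ = ∑ r, ∑ ℓ ∈ range R, y r * (q.coeff ℓ * x r ^ ℓ) := by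
        simp_rw [hqeval, Finset.mul_sum]
    _ = ∑ ℓ ∈ range R, q.coeff ℓ * ∑ r, x r ^ ℓ * y r := by
        rw [Finset.sum_comm]
        congr 1; ext ℓ
        rw [Finset.mul_sum]
        congr 1; ext r; ring
    _ = ∑ ℓ ∈ range R, q.coeff ℓ * c ^ ℓ := by
        refine Finset.sum_congr rfl fun ℓ hℓ => ?_
        rw [hy ⟨ℓ, mem_range.mp hℓ⟩]
    _ = q.eval c := (hqeval c).symm
    _ = c ^ R - ∏ r, (c - x r) := by
        simp [hq, eval_sub, eval_pow, eval_X, hp, eval_prod]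
end

section
/- Let R ≥ 1 be an integer, let x₁,…,x_R be pairwise distinct real numbers, let c be a real number, and let (y₁,…,y_R) be the unique solution of the Vandermonde system ∑_{r=1}^{R} x_r^{ℓ−1} y_r = c^{ℓ−1}, ℓ = 1,…,R. Then ∑_{r=1}^{R} y_r x_r^{R+1} = c^{R+1} − (c + ∑_{r=1}^{R} x_r) · ∏_{r=1}^{R} (c − x_r). -/
open Finset Polynomial

/-- For the solution of the Vandermonde system with right-hand side `(1, c, …, c^{R-1})`,
one has `∑_r y_r x_r^{R+1} = c^{R+1} - (c + ∑_r x_r) ∏_r (c - x_r)`. -/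

theorem stmt_10 (R : ℕ) (hR : 1 ≤ R) (x : Fin R → ℝ) (hx : Function.Injective x) (c : ℝ)
    (y : Fin R → ℝ) (hy : ∀ ℓ : Fin R, ∑ r, x r ^ (ℓ : ℕ) * y r = c ^ (ℓ : ℕ)) :
    ∑ r, y r * x r ^ (R + 1) = c ^ (R + 1) - (c + ∑ r, x r) * ∏ r, (c - x r) := by
  set e₁ := ∑ r, x r with he₁
  set P : Polynomial ℝ := ∏ r, (X - C (x r)) with hP
  set D : Polynomial ℝ := X ^ (R + 1) - (X + C e₁) * P with hD
  have hPm : P.Monic := monic_prod_of_monic _ _ fun r _ => monic_X_sub_C _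
  have hPdeg : P.natDegree = R := by
    rw [hP, natDegree_prod _ _ fun r _ => X_sub_C_ne_zero _]
    simp
  have hcoeffR : P.coeff R = 1 := by simpa [hPdeg] using hPm.coeff_natDegree
  have hcoeffR1 : P.coeff (R - 1) = -e₁ := by
    have := prod_X_sub_C_coeff_card_pred (univ : Finset (Fin R)) x (by simp; omega)
    simpa using this
  have hDdeglt : D.degree < (R : ℕ) := by
    rw [degree_lt_iff_coeff_zero]
    intro m hm
    have hm' : R ≤ m := by exact_mod_cast hm
    obtain ⟨k, rfl⟩ : ∃ k, m = k + 1 := ⟨m - 1, by omega⟩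
    have hXP : ((X + C e₁) * P) = X * P + C e₁ * P := by ring
    rw [hD, coeff_sub, hXP, coeff_add, coeff_X_mul, coeff_C_mul, coeff_X_pow]
    rcases eq_or_lt_of_le hm' with hEq | hlt
    · have hk : k = R - 1 := by omega
      have hRk : R - 1 + 1 = R := by omega
      rw [hk, hcoeffR1, hRk, hcoeffR]
      have hne : ¬ (R = R + 1) := by omega
      simp [hne]
    · rcases eq_or_lt_of_le (Nat.succ_le_of_lt hlt) with hEq2 | hlt2
      · have h1 : P.coeff k = 1 := by
          have : k = R := by omega
          rw [this, hcoeffR]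
        have h2 : P.coeff (k + 1) = 0 := by
          apply coeff_eq_zero_of_natDegree_lt; omega
        have h3 : P.coeff (R + 1) = 0 := by
          apply coeff_eq_zero_of_natDegree_lt; omega
        simp [h1, h2, h3, ← hEq2]
      · have h1 : P.coeff k = 0 := by
          apply coeff_eq_zero_of_natDegree_lt; omega
        have h2 : P.coeff (k + 1) = 0 := by
          apply coeff_eq_zero_of_natDegree_lt; omega
        have h3 : R + 1 ≠ k + 1 := by omega
        have h4 : k ≠ R := by omega
        simp [h1, h2, h3, h4]
  have hDnat : D.natDegree < R := by
    by_cases h0 : D = 0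
    · simp [h0]; omega
    · exact (natDegree_lt_iff_degree_lt h0).2 hDdeglt
  have hevalP : ∀ t : ℝ, P.eval t = ∏ r, (t - x r) := by
    intro t; simp [hP, eval_prod]
  have hkey : ∀ t : ℝ, t ^ (R + 1) = (t + e₁) * P.eval t + D.eval t := by
    intro t; simp [hD]; try ring
  have hPx : ∀ r : Fin R, P.eval (x r) = 0 := by
    intro r
    rw [hevalP]
    exact Finset.prod_eq_zero (mem_univ r) (by ring)
  have hsum : ∑ r, y r * x r ^ (R + 1) = ∑ r, y r * D.eval (x r) := by
    apply Finset.sum_congr rfl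
    intro r _
    rw [hkey (x r), hPx r]; ring
  rw [hsum]
  have hDev : ∀ t : ℝ, D.eval t = ∑ i ∈ range R, D.coeff i * t ^ i := fun t =>
    eval_eq_sum_range' hDnat t
  have : ∑ r, y r * D.eval (x r) = ∑ i ∈ range R, D.coeff i * c ^ i := by
    simp_rw [hDev, Finset.mul_sum]
    rw [Finset.sum_comm]
    apply Finset.sum_congr rfl
    intro i hi
    have hiR : i < R := mem_range.mp hi
    have := hy ⟨i, hiR⟩
    simp only at this
    calc ∑ r, y r * (D.coeff i * x r ^ i) = D.coeff i * ∑ r, x r ^ i * y r := by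
          rw [Finset.mul_sum]; apply Finset.sum_congr rfl; intro r _; ring
      _ = D.coeff i * c ^ i := by rw [this]
  rw [this, ← hDev c]
  have := hkey c
  rw [hevalP] at this
  linarith [this]
end

section
/- Let (Ω, F, P) be a probability space, let (Y_k)_{k≥0} be real random variables with ‖Y_k‖_{L²} ≤ C for all k ≥ 0, and let (θ_k)_{k≥1} be a nonincreasing sequence of positive real numbers. Then for every n ≥ 1, ‖∑_{k=1}^{n} θ_k (Y_k − Y_{k−1})‖_{L²} ≤ 2 C θ₁. -/
open MeasureTheory

/-- Abel summation identity (pointwise). -/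
lemma abel_id (θ : ℕ → ℝ) (y : ℕ → ℝ) (n : ℕ) (hn : 1 ≤ n) :
    ∑ k ∈ Finset.Icc 1 n, θ k * (y k - y (k - 1)) =
      θ n * y n - θ 1 * y 0 +
        ∑ k ∈ Finset.Icc 1 (n - 1), (θ k - θ (k + 1)) * y k := by
  induction n, hn using Nat.le_induction with
  | base => simp; ring
  | succ n hn ih =>
    rw [Finset.sum_Icc_succ_top (by omega : 1 ≤ n + 1), ih]
    have hn1 : n - 1 + 1 = n := by omega
    rw [Nat.add_sub_cancel]
    conv_rhs => rw [← hn1, Finset.sum_Icc_succ_top (by omega : 1 ≤ n - 1 + 1)]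
    rw [hn1]
    ring

/-- telescoping. -/
lemma telescope_θ (θ : ℕ → ℝ) (m : ℕ) :
    ∑ k ∈ Finset.Icc 1 m, (θ k - θ (k + 1)) = θ 1 - θ (m + 1) := by
  induction m with
  | zero => simp
  | succ m ih =>
    rw [Finset.sum_Icc_succ_top (by omega : 1 ≤ m + 1), ih]
    ring

lemma θ_le (θ : ℕ → ℝ) (hθmono : ∀ k, 1 ≤ k → θ (k + 1) ≤ θ k)
    (n : ℕ) (hn : 1 ≤ n) : θ n ≤ θ 1 := by
  induction n, hn using Nat.le_induction with
  | base => exact le_rfl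
  | succ n hn ih => exact le_trans (hθmono n hn) ih

set_option maxHeartbeats 1000000 in
/-- Abel-type bound: if `‖Y_k‖_{L²} ≤ C` and `(θ_k)_{k ≥ 1}` is a nonincreasing sequence of
positive reals, then `‖∑_{k=1}^n θ_k (Y_k - Y_{k-1})‖_{L²} ≤ 2 C θ₁`. -/
theorem stmt_11 {Ω : Type*} [MeasurableSpace Ω] (P : Measure Ω) [IsProbabilityMeasure P]
    (Y : ℕ → Ω → ℝ) (hYmeas : ∀ k, Measurable (Y k)) (C : ℝ)
    (hYbound : ∀ k, eLpNorm (Y k) 2 P ≤ ENNReal.ofReal C)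
    (θ : ℕ → ℝ) (hθpos : ∀ k, 1 ≤ k → 0 < θ k)
    (hθmono : ∀ k, 1 ≤ k → θ (k + 1) ≤ θ k)
    (n : ℕ) (hn : 1 ≤ n) :
    eLpNorm (fun ω => ∑ k ∈ Finset.Icc 1 n, θ k * (Y k ω - Y (k - 1) ω)) 2 P ≤
      ENNReal.ofReal (2 * C * θ 1) := by
  rcases le_or_gt C 0 with hC | hC
  · -- then all Y k are a.e. zero
    have hzero : ∀ k, Y k =ᵐ[P] 0 := by
      intro k
      have h0 : eLpNorm (Y k) 2 P = 0 := le_antisymm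
        (by simpa [ENNReal.ofReal_eq_zero.2 hC] using hYbound k) (zero_le)
      exact (eLpNorm_eq_zero_iff (hYmeas k).aestronglyMeasurable two_ne_zero).1 h0
    have hall : ∀ᵐ ω ∂P, ∀ k, Y k ω = 0 := ae_all_iff.2 hzero
    have hsum : (fun ω => ∑ k ∈ Finset.Icc 1 n, θ k * (Y k ω - Y (k - 1) ω)) =ᵐ[P]
        (0 : Ω → ℝ) := by
      filter_upwards [hall] with ω hω
      simp [hω]
    rw [eLpNorm_congr_ae hsum, eLpNorm_zero]
    exact zero_le
  -- main case C > 0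
  have hCC := hC.le
  have hid : (fun ω => ∑ k ∈ Finset.Icc 1 n, θ k * (Y k ω - Y (k - 1) ω)) =
      fun ω => (θ n * Y n ω + (-(θ 1) * Y 0 ω)) +
        ∑ k ∈ Finset.Icc 1 (n - 1), (θ k - θ (k + 1)) * Y k ω := by
    funext ω
    rw [abel_id θ (fun k => Y k ω) n hn]
    ring
  rw [hid]
  have hsmul : ∀ c : ℝ, ∀ k : ℕ, AEStronglyMeasurable (fun ω => c * Y k ω) P :=
    fun c k => (aestronglyMeasurable_const.mul (hYmeas k).aestronglyMeasurable)
  have hbnd : ∀ c : ℝ, 0 ≤ c → ∀ k : ℕ,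
      eLpNorm (fun ω => c * Y k ω) 2 P ≤ ENNReal.ofReal (c * C) := by
    intro c hc k
    have : (fun ω => c * Y k ω) = c • Y k := by funext ω; simp
    rw [this, eLpNorm_const_smul, Real.enorm_eq_ofReal hc]
    exact (mul_le_mul_right (hYbound k) _).trans_eq (ENNReal.ofReal_mul hc).symm
  -- triangle inequalities
  have h1 : eLpNorm (fun ω => (θ n * Y n ω + (-(θ 1) * Y 0 ω)) +
        ∑ k ∈ Finset.Icc 1 (n - 1), (θ k - θ (k + 1)) * Y k ω) 2 P ≤
      (eLpNorm (fun ω => θ n * Y n ω) 2 P + eLpNorm (fun ω => -(θ 1) * Y 0 ω) 2 P) +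
      eLpNorm (fun ω => ∑ k ∈ Finset.Icc 1 (n - 1), (θ k - θ (k + 1)) * Y k ω) 2 P := by
    refine le_trans (eLpNorm_add_le ?_ ?_ one_le_two) ?_
    · exact (hsmul _ _).add (hsmul _ _)
    · exact Finset.aestronglyMeasurable_fun_sum _ (fun k _ => hsmul _ _)
    gcongr
    exact eLpNorm_add_le (hsmul _ _) (hsmul _ _) one_le_two
  have hθn0 : 0 ≤ θ n := (hθpos n hn).le
  have hθ10 : 0 ≤ θ 1 := (hθpos 1 le_rfl).le
  have h2 : eLpNorm (fun ω => θ n * Y n ω) 2 P ≤ ENNReal.ofReal (θ n * C) := hbnd _ hθn0 _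
  have h3 : eLpNorm (fun ω => -(θ 1) * Y 0 ω) 2 P ≤ ENNReal.ofReal (θ 1 * C) := by
    have : (fun ω => -(θ 1) * Y 0 ω) = -(fun ω => θ 1 * Y 0 ω) := by funext ω; simp [neg_mul]
    rw [this, eLpNorm_neg]
    exact hbnd _ hθ10 _
  have h4 : eLpNorm (fun ω => ∑ k ∈ Finset.Icc 1 (n - 1), (θ k - θ (k + 1)) * Y k ω) 2 P ≤
      ENNReal.ofReal ((θ 1 - θ n) * C) := by
    have hfun : (fun ω => ∑ k ∈ Finset.Icc 1 (n - 1), (θ k - θ (k + 1)) * Y k ω) =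
        ∑ k ∈ Finset.Icc 1 (n - 1), (fun ω => (θ k - θ (k + 1)) * Y k ω) := by
      funext ω; simp [Finset.sum_apply]
    have hstep : eLpNorm (fun ω => ∑ k ∈ Finset.Icc 1 (n - 1), (θ k - θ (k + 1)) * Y k ω) 2 P ≤
        ∑ k ∈ Finset.Icc 1 (n - 1), ENNReal.ofReal ((θ k - θ (k + 1)) * C) := by
      rw [hfun]
      refine le_trans (eLpNorm_sum_le (fun k _ => hsmul _ _) one_le_two) ?_
      refine Finset.sum_le_sum fun k hk => ?_
      have hk1 : 1 ≤ k := (Finset.mem_Icc.1 hk).1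
      exact hbnd _ (sub_nonneg.2 (hθmono k hk1)) _
    refine le_trans hstep ?_
    rw [← ENNReal.ofReal_sum_of_nonneg
      (fun k hk => mul_nonneg (sub_nonneg.2 (hθmono k (Finset.mem_Icc.1 hk).1)) hCC)]
    apply ENNReal.ofReal_le_ofReal
    rw [← Finset.sum_mul, telescope_θ θ (n - 1)]
    have : n - 1 + 1 = n := by omega
    rw [this]
  refine le_trans h1 (le_trans (add_le_add (add_le_add h2 h3) h4) (le_of_eq ?_))
  rw [← ENNReal.ofReal_add (mul_nonneg hθn0 hCC) (mul_nonneg hθ10 hCC),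
    ← ENNReal.ofReal_add (add_nonneg (mul_nonneg hθn0 hCC) (mul_nonneg hθ10 hCC))
      (mul_nonneg (sub_nonneg.2 (θ_le θ hθmono n hn)) hCC)]
  congr 1
  ring
end

section
/- Let γ₁ > 0 and a ∈ (0,1), set γ_k = γ₁ k^{−a}, Γ_n^{(ℓ)} = ∑_{k=1}^{n} γ_k^{ℓ} and Γ_n = Γ_n^{(1)}. Let χ ∈ (0,1) and let ℓ ≥ 1 be an integer with aℓ < 1. Then for every integer n ≥ ⌈6^{1/(1−a)}/χ⌉, | Γ^{(ℓ)}_{⌊χn⌋}/Γ_{⌊χn⌋} − χ^{−a(ℓ−1)} Γ^{(ℓ)}_{n}/Γ_{n} | ≤ 6 · ((2 − aℓ)/(1 − aℓ)) · γ₁^{ℓ−1} · χ^{−1−a(ℓ−1)} · n^{−(1−a)}. -/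
open Finset


private lemma key_up {p : ℝ} (hp0 : 0 < p) (hp1 : p ≤ 1) {k : ℕ} (hk : 1 ≤ k) :
    ((k : ℝ) - 1) ^ p ≤ (k : ℝ) ^ p - p * (k : ℝ) ^ (p - 1) := by
  have hk0 : (0:ℝ) < k := by exact_mod_cast hk
  have hs : (-1:ℝ) ≤ -1 / (k:ℝ) := by
    rw [neg_div, neg_le_neg_iff, div_le_one hk0]
    exact_mod_cast hk
  have hber := rpow_one_add_le_one_add_mul_self hs hp0.le hp1
  have h1 : (k:ℝ) - 1 = (k:ℝ) * (1 + -1 / k) := by field_simp; ring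
  have h2 : (0:ℝ) ≤ 1 + -1/(k:ℝ) := by
    have : 1/(k:ℝ) ≤ 1 := by rw [div_le_one hk0]; exact_mod_cast hk
    rw [neg_div] at *; linarith
  have hpk : (k:ℝ) ^ (p - 1) = (k:ℝ) ^ p / (k:ℝ) := by
    rw [Real.rpow_sub hk0, Real.rpow_one]
  rw [h1, Real.mul_rpow hk0.le h2, hpk]
  have h3 := mul_le_mul_of_nonneg_left hber (Real.rpow_nonneg hk0.le p)
  calc (k:ℝ)^p * (1 + -1/k)^p ≤ (k:ℝ)^p * (1 + p * (-1/k)) := h3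
    _ = (k:ℝ)^p - p * ((k:ℝ)^p / k) := by ring

private lemma key_down {p : ℝ} (hp0 : 0 < p) (hp1 : p ≤ 1) {k : ℕ} (hk : 1 ≤ k) :
    ((k : ℝ) + 1) ^ p ≤ (k : ℝ) ^ p + p * (k : ℝ) ^ (p - 1) := by
  have hk0 : (0:ℝ) < k := by exact_mod_cast hk
  have hs : (-1:ℝ) ≤ 1 / (k:ℝ) := by
    have : (0:ℝ) ≤ 1/(k:ℝ) := by positivity
    linarith
  have hber := rpow_one_add_le_one_add_mul_self hs hp0.le hp1
  have h1 : (k:ℝ) + 1 = (k:ℝ) * (1 + 1 / k) := by field_simp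
  have h2 : (0:ℝ) ≤ 1 + 1/(k:ℝ) := by positivity
  have hpk : (k:ℝ) ^ (p - 1) = (k:ℝ) ^ p / (k:ℝ) := by
    rw [Real.rpow_sub hk0, Real.rpow_one]
  rw [h1, Real.mul_rpow hk0.le h2, hpk]
  have h3 := mul_le_mul_of_nonneg_left hber (Real.rpow_nonneg hk0.le p)
  calc (k:ℝ)^p * (1 + 1/k)^p ≤ (k:ℝ)^p * (1 + p * (1/k)) := h3
    _ = (k:ℝ)^p + p * ((k:ℝ)^p / k) := by ring

private lemma sum_upper {b : ℝ} (hb0 : 0 < b) (hb1 : b < 1) (N : ℕ) :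
    (1 - b) * ∑ k ∈ Icc 1 N, (k:ℝ) ^ (-b) ≤ (N:ℝ) ^ (1 - b) := by
  induction N with
  | zero => simp [Real.zero_rpow (by linarith : (1:ℝ) - b ≠ 0)]
  | succ N ih =>
    rw [Finset.sum_Icc_succ_top (by omega : 1 ≤ N + 1)]
    have hkey := key_up (by linarith : (0:ℝ) < 1 - b) (by linarith : (1:ℝ) - b ≤ 1)
      (by omega : 1 ≤ N + 1)
    rw [show (1:ℝ) - b - 1 = -b by ring] at hkey
    push_cast at hkey ⊢
    have h1 : ((N:ℝ) + 1 - 1) = (N:ℝ) := by ring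
    rw [h1] at hkey
    nlinarith [ih]

private lemma sum_lower {b : ℝ} (hb0 : 0 < b) (hb1 : b < 1) (N : ℕ) :
    ((N:ℝ) + 1) ^ (1 - b) - 1 ≤ (1 - b) * ∑ k ∈ Icc 1 N, (k:ℝ) ^ (-b) := by
  induction N with
  | zero => simp
  | succ N ih =>
    rw [Finset.sum_Icc_succ_top (by omega : 1 ≤ N + 1)]
    have hkey := key_down (by linarith : (0:ℝ) < 1 - b) (by linarith : (1:ℝ) - b ≤ 1)
      (by omega : 1 ≤ N + 1)
    rw [show (1:ℝ) - b - 1 = -b by ring] at hkey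
    push_cast at hkey ⊢
    nlinarith [ih]


private lemma rpow_sub_rpow_le {x y q : ℝ} (hx : 1 ≤ x) (hxy : x ≤ y) (hq0 : 0 ≤ q)
    (hq1 : q ≤ 1) : x ^ (-q) - y ^ (-q) ≤ q * (y - x) * x ^ (-q - 1) := by
  have hx0 : (0:ℝ) < x := by linarith
  have hy0 : (0:ℝ) < y := by linarith
  set t := y / x with htdef
  have ht1 : 1 ≤ t := (one_le_div hx0).mpr hxy
  have ht0 : 0 < t := by linarith
  have key : 1 - t ^ (-q) ≤ q * (t - 1) := by
    have htq : t ^ q ≤ 1 + q * (t - 1) := by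
      have h := rpow_one_add_le_one_add_mul_self (s := t - 1) (by linarith) hq0 hq1
      simpa using h
    have htqpos : 0 < t ^ q := Real.rpow_pos_of_pos ht0 q
    have hneg : t ^ (-q) = (t ^ q)⁻¹ := Real.rpow_neg ht0.le q
    by_cases hc : q * (t - 1) ≤ 1
    · have h2 : 1 - q * (t - 1) ≤ t ^ (-q) := by
        rw [hneg, ← one_div, le_div_iff₀ htqpos]
        nlinarith [sq_nonneg (q * (t - 1))]
      linarith
    · have h3 := Real.rpow_nonneg ht0.le (-q)
      linarith
  have hxq := Real.rpow_nonneg hx0.le (-q)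
  have hmul := mul_le_mul_of_nonneg_left key hxq
  have hxy2 : x * t = y := by rw [htdef]; field_simp
  have hxt : x ^ (-q) * t ^ (-q) = y ^ (-q) := by
    rw [← Real.mul_rpow hx0.le ht0.le, hxy2]
  have hx1 : x ^ (-q - 1) = x ^ (-q) / x := by
    rw [Real.rpow_sub hx0, Real.rpow_one]
  have hr : x ^ (-q) * (q * (t - 1)) = q * (y - x) * (x ^ (-q) / x) := by
    rw [htdef]; field_simp
  calc x ^ (-q) - y ^ (-q) = x ^ (-q) * (1 - t ^ (-q)) := by rw [mul_sub, mul_one, hxt]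
    _ ≤ x ^ (-q) * (q * (t - 1)) := hmul
    _ = q * (y - x) * x ^ (-q - 1) := by rw [hx1, hr]

set_option maxHeartbeats 1000000 in
private lemma dev_bound (t : ℝ) {a b : ℝ} (ha0 : 0 < a) (hab : a ≤ b) (hb1 : b < 1)
    (ht : 2 ≤ t) {N : ℕ} (hN1 : 1 ≤ N) (hN : t ≤ (N : ℝ) ^ (1 - a)) :
    |(∑ k ∈ Icc 1 N, (k:ℝ) ^ (-b)) / (∑ k ∈ Icc 1 N, (k:ℝ) ^ (-a)) -
        (1 - a) / (1 - b) * (N:ℝ) ^ (a - b)| ≤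
      t / (t - 1) * ((1 - a) / (1 - b)) * (N:ℝ) ^ (a - 1) := by
  have ha1 : a < 1 := lt_of_le_of_lt hab hb1
  have hb0 : 0 < b := lt_of_lt_of_le ha0 hab
  have h1a : (0:ℝ) < 1 - a := by linarith
  have h1b : (0:ℝ) < 1 - b := by linarith
  have ht1 : (0:ℝ) < t - 1 := by linarith
  have hN0 : (0:ℝ) < N := by exact_mod_cast hN1
  have hN1' : (1:ℝ) ≤ N := by exact_mod_cast hN1
  set Sa := ∑ k ∈ Icc 1 N, (k:ℝ) ^ (-a) with hSadef
  set Sb := ∑ k ∈ Icc 1 N, (k:ℝ) ^ (-b) with hSbdef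
  set P := (N:ℝ) ^ (1 - a) with hPdef
  set Q := (N:ℝ) ^ (1 - b) with hQdef
  set c := (1 - a) / (1 - b) with hcdef
  have hc0 : 0 < c := hcdef ▸ div_pos h1a h1b
  have hua : (1 - a) * Sa ≤ P := sum_upper ha0 ha1 N
  have hla : P - 1 ≤ (1 - a) * Sa := by
    refine le_trans ?_ (sum_lower ha0 ha1 N)
    have h := Real.rpow_le_rpow hN0.le (by linarith : (N:ℝ) ≤ (N:ℝ) + 1) h1a.le
    rw [hPdef]; linarith
  have hub : (1 - b) * Sb ≤ Q := sum_upper hb0 hb1 N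
  have hlb : Q - 1 ≤ (1 - b) * Sb := by
    refine le_trans ?_ (sum_lower hb0 hb1 N)
    have h := Real.rpow_le_rpow hN0.le (by linarith : (N:ℝ) ≤ (N:ℝ) + 1) h1b.le
    rw [hQdef]; linarith
  have hP2 : 2 ≤ P := le_trans ht hN
  have hP0 : 0 < P := by linarith
  have hP1 : 0 < P - 1 := by linarith
  have hSapos : 0 < Sa := by nlinarith
  have hQ1 : 1 ≤ Q := by
    have h := Real.rpow_le_rpow zero_le_one hN1' h1b.le
    rwa [Real.one_rpow] at h
  set u := (N:ℝ) ^ (a - b) with hudef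
  have hid1 : u * P = Q := by
    rw [hudef, hPdef, hQdef, ← Real.rpow_add hN0]
    congr 1; ring
  have hNa1 : (N:ℝ) ^ (a - 1) = 1 / P := by
    rw [eq_div_iff hP0.ne', hPdef, ← Real.rpow_add hN0,
      show a - 1 + (1 - a) = 0 by ring, Real.rpow_zero]
  have hu1 : u ≤ 1 := Real.rpow_le_one_of_one_le_of_nonpos hN1' (by linarith)
  have hu0 : 0 < u := Real.rpow_pos_of_pos hN0 _
  have htP : t ≤ P := hN
  have hup : Sb / Sa - c * u ≤ t / (t - 1) * c * (N:ℝ) ^ (a - 1) := by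
    have hSb_le : Sb ≤ Q / (1 - b) := by rw [le_div_iff₀ h1b]; linarith
    have hSa_ge : (P - 1) / (1 - a) ≤ Sa := by rw [div_le_iff₀ h1a]; linarith
    have h1 : Sb / Sa ≤ (Q / (1 - b)) / ((P - 1) / (1 - a)) :=
      div_le_div₀ (div_nonneg (by linarith) h1b.le) hSb_le (div_pos hP1 h1a) hSa_ge
    have h2 : (Q / (1 - b)) / ((P - 1) / (1 - a)) = c * Q / (P - 1) := by
      rw [hcdef]; field_simp
    have h3 : c * Q / (P - 1) - c * u = c * u / (P - 1) := by
      rw [← hid1]; field_simp; ring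
    have h4 : c * u / (P - 1) ≤ c / (P - 1) := by
      have h : c * u ≤ c := by nlinarith
      rw [div_le_div_iff₀ hP1 hP1]
      exact mul_le_mul_of_nonneg_right h hP1.le
    have h5 : c / (P - 1) ≤ t / (t - 1) * c * (N:ℝ) ^ (a - 1) := by
      rw [hNa1]
      have hrr : t / (t - 1) * c * (1 / P) = t * c / ((t - 1) * P) := by
        field_simp
      rw [hrr, div_le_div_iff₀ hP1 (mul_pos ht1 hP0)]
      nlinarith [mul_le_mul_of_nonneg_left htP hc0.le]
    rw [h2] at h1
    linarith
  have hlow : c * u - Sb / Sa ≤ t / (t - 1) * c * (N:ℝ) ^ (a - 1) := by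
    have hSb_ge : (Q - 1) / (1 - b) ≤ Sb := by rw [div_le_iff₀ h1b]; linarith
    have hSbnn : 0 ≤ Sb := le_trans (div_nonneg (by linarith) h1b.le) hSb_ge
    have hSa_le : Sa ≤ P / (1 - a) := by rw [le_div_iff₀ h1a]; linarith
    have h1 : (Q - 1) / (1 - b) / (P / (1 - a)) ≤ Sb / Sa :=
      div_le_div₀ hSbnn hSb_ge hSapos hSa_le
    have h2 : (Q - 1) / (1 - b) / (P / (1 - a)) = c * (Q - 1) / P := by
      rw [hcdef]; field_simp
    have h3 : c * u - c * (Q - 1) / P = c * (N:ℝ) ^ (a - 1) := by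
      rw [← hid1, hNa1]; field_simp; ring
    have h4 : c * (N:ℝ) ^ (a - 1) ≤ t / (t - 1) * c * (N:ℝ) ^ (a - 1) := by
      have hone : 1 ≤ t / (t - 1) := by rw [le_div_iff₀ ht1]; linarith
      have hpos : (0:ℝ) < c * (N:ℝ) ^ (a - 1) := by
        have := Real.rpow_pos_of_pos hN0 (a - 1); positivity
      nlinarith
    rw [h2] at h1
    linarith
  rw [abs_le]
  constructor
  · linarith
  · linarith


set_option maxHeartbeats 2000000 in
/-- Quantitative comparison between `Γ^{(ℓ)}_{⌊χn⌋}/Γ_{⌊χn⌋}` and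
`χ^{-a(ℓ-1)} Γ^{(ℓ)}_n/Γ_n` for the polynomial step sequence `γ_k = γ₁ k^{-a}`. -/
theorem stmt_16 (γ₁ a : ℝ) (hγ₁ : 0 < γ₁) (ha : a ∈ Set.Ioo (0 : ℝ) 1)
    (χ : ℝ) (hχ : χ ∈ Set.Ioo (0 : ℝ) 1) (ℓ : ℕ) (hℓ : 1 ≤ ℓ) (haℓ : a * ℓ < 1)
    (Γ : ℕ → ℕ → ℝ)
    (hΓ : ∀ L n, Γ L n = ∑ k ∈ Icc 1 n, (γ₁ * (k : ℝ) ^ (-a)) ^ L)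
    (n : ℕ) (hn : ⌈(6 : ℝ) ^ (1 / (1 - a)) / χ⌉₊ ≤ n) :
    |Γ ℓ ⌊χ * (n : ℝ)⌋₊ / Γ 1 ⌊χ * (n : ℝ)⌋₊ -
        χ ^ (-(a * ((ℓ : ℝ) - 1))) * (Γ ℓ n / Γ 1 n)| ≤
      6 * ((2 - a * ℓ) / (1 - a * ℓ)) * γ₁ ^ (ℓ - 1) *
        χ ^ (-1 - a * ((ℓ : ℝ) - 1)) * (n : ℝ) ^ (-(1 - a)) := by
  obtain ⟨ha0, ha1⟩ := ha
  obtain ⟨hχ0, hχ1⟩ := hχ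
  set b := a * (ℓ:ℝ) with hbdef
  have hl1 : (1:ℝ) ≤ (ℓ:ℝ) := by exact_mod_cast hℓ
  have hab : a ≤ b := by nlinarith
  have hb0 : 0 < b := lt_of_lt_of_le ha0 hab
  have hb1 : b < 1 := haℓ
  have h1a : (0:ℝ) < 1 - a := by linarith
  have h1b : (0:ℝ) < 1 - b := by linarith
  set m := ⌊χ * (n:ℝ)⌋₊ with hmdef
  -- numeric facts
  have hcn : (6:ℝ) ^ (1 / (1 - a)) ≤ χ * n := by
    have h := Nat.ceil_le.mp hn
    rw [div_le_iff₀ hχ0] at h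
    nlinarith
  have h61 : (6:ℝ) ≤ (6:ℝ) ^ (1 / (1 - a)) := by
    nth_rewrite 1 [show (6:ℝ) = 6 ^ (1:ℝ) by rw [Real.rpow_one]]
    apply Real.rpow_le_rpow_of_exponent_le (by norm_num)
    rw [le_div_iff₀ h1a]; nlinarith
  have hcn6 : (6:ℝ) ≤ χ * n := le_trans h61 hcn
  have hn0 : (0:ℝ) < n := by nlinarith
  have hcnpos : (0:ℝ) < χ * n := by nlinarith
  have hpow6 : (6:ℝ) ≤ (χ * n) ^ (1 - a) := by
    have h1 : ((6:ℝ) ^ (1/(1-a))) ^ (1 - a) ≤ (χ * n) ^ (1 - a) :=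
      Real.rpow_le_rpow (Real.rpow_nonneg (by norm_num) _) hcn h1a.le
    rwa [← Real.rpow_mul (by norm_num : (0:ℝ) ≤ 6), one_div_mul_cancel h1a.ne',
      Real.rpow_one] at h1
  -- floor facts
  have hmle : (m:ℝ) ≤ χ * n := Nat.floor_le hcnpos.le
  have hmge : χ * n - 1 ≤ (m:ℝ) := (Nat.sub_one_lt_floor _).le
  have hm56 : 5/6 * (χ * n) ≤ (m:ℝ) := by nlinarith
  have hm5 : (5:ℝ) ≤ (m:ℝ) := by nlinarith
  have hm1 : 1 ≤ m := by
    have h : (1:ℝ) ≤ (m:ℝ) := by linarith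
    exact_mod_cast h
  have hm1' : (1:ℝ) ≤ (m:ℝ) := by linarith
  have hm0 : (0:ℝ) < m := by linarith
  have hn6 : (6:ℝ) ≤ (n:ℝ) := by nlinarith
  have hn1 : 1 ≤ n := by
    have h : (1:ℝ) ≤ (n:ℝ) := by linarith
    exact_mod_cast h
  have hn1' : (1:ℝ) ≤ (n:ℝ) := by linarith
  -- power facts
  have hmpow : (5:ℝ) ≤ (m:ℝ) ^ (1 - a) := by
    have h1 : ((5/6:ℝ) * (χ * n)) ^ (1 - a) ≤ (m:ℝ) ^ (1 - a) :=
      Real.rpow_le_rpow (by positivity) hm56 h1a.le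
    have h2 : ((5/6:ℝ) * (χ * n)) ^ (1 - a)
        = (5/6:ℝ) ^ (1 - a) * (χ * n) ^ (1 - a) :=
      Real.mul_rpow (by norm_num) hcnpos.le
    have h3 : (5/6:ℝ) ≤ (5/6:ℝ) ^ (1 - a) := by
      nth_rewrite 1 [show (5/6:ℝ) = (5/6:ℝ) ^ (1:ℝ) by rw [Real.rpow_one]]
      exact Real.rpow_le_rpow_of_exponent_ge (by norm_num) (by norm_num) (by linarith)
    nlinarith [Real.rpow_nonneg (show (0:ℝ) ≤ 5/6 by norm_num) (1 - a)]
  have hnpow : (6:ℝ) ≤ (n:ℝ) ^ (1 - a) := by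
    have h : (χ * n) ^ (1 - a) ≤ (n:ℝ) ^ (1 - a) :=
      Real.rpow_le_rpow hcnpos.le (by nlinarith) h1a.le
    linarith
  -- Γ rewriting
  have hSapos : ∀ N : ℕ, 1 ≤ N → 0 < ∑ k ∈ Icc 1 N, (k:ℝ) ^ (-a) := by
    intro N hN
    apply Finset.sum_pos
    · intro k hk
      have hk0 : (0:ℝ) < k := by exact_mod_cast (Finset.mem_Icc.mp hk).1
      positivity
    · exact ⟨1, Finset.mem_Icc.mpr ⟨le_refl 1, hN⟩⟩
  have hG1 : ∀ N : ℕ, Γ 1 N = γ₁ * ∑ k ∈ Icc 1 N, (k:ℝ) ^ (-a) := by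
    intro N
    rw [hΓ, Finset.mul_sum]
    exact Finset.sum_congr rfl fun k _ => by rw [pow_one]
  have hGl : ∀ N : ℕ, Γ ℓ N = γ₁ ^ ℓ * ∑ k ∈ Icc 1 N, (k:ℝ) ^ (-b) := by
    intro N
    rw [hΓ, Finset.mul_sum]
    refine Finset.sum_congr rfl fun k hk => ?_
    have hk1 : 1 ≤ k := (Finset.mem_Icc.mp hk).1
    have hk0 : (0:ℝ) ≤ k := by positivity
    rw [mul_pow, ← Real.rpow_natCast ((k:ℝ) ^ (-a)) ℓ, ← Real.rpow_mul hk0,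
      show -a * (ℓ:ℝ) = -b by rw [hbdef]; ring]
  have hγl : γ₁ ^ ℓ = γ₁ ^ (ℓ - 1) * γ₁ := by
    conv_lhs => rw [← Nat.sub_add_cancel hℓ]
    rw [pow_succ]
  have hratio : ∀ N : ℕ, 1 ≤ N →
      Γ ℓ N / Γ 1 N = γ₁ ^ (ℓ - 1) *
        ((∑ k ∈ Icc 1 N, (k:ℝ) ^ (-b)) / (∑ k ∈ Icc 1 N, (k:ℝ) ^ (-a))) := by
    intro N hN
    have hpos := hSapos N hN
    rw [hG1, hGl, hγl]
    field_simp
  -- deviation bounds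
  set c := (1 - a) / (1 - b) with hcdef
  have hc0 : 0 < c := hcdef ▸ div_pos h1a h1b
  have hdevm := dev_bound 5 ha0 hab hb1 (by norm_num) hm1 (le_trans (by norm_num) hmpow)
  have hdevn := dev_bound 6 ha0 hab hb1 (by norm_num) hn1 hnpow
  -- third term
  have hqle : b - a ≤ 1 := by linarith
  have hq0 : 0 ≤ b - a := by linarith
  have hthird0 : (m:ℝ) ^ (a - b) - (χ * n) ^ (a - b)
      ≤ (b - a) * (χ * n - m) * (m:ℝ) ^ (a - b - 1) := by
    have h := rpow_sub_rpow_le hm1' hmle hq0 hqle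
    rw [show -(b - a) = a - b by ring] at h
    exact h
  -- auxiliary power comparison facts
  have hχpos : (0:ℝ) < χ ^ (a - b) := Real.rpow_pos_of_pos hχ0 _
  have hnn1 : (0:ℝ) ≤ (n:ℝ) ^ (a - 1) := Real.rpow_nonneg hn0.le _
  have hχa : χ ^ (a - 1) ≤ χ ^ (a - b - 1) :=
    Real.rpow_le_rpow_of_exponent_ge hχ0 hχ1.le (by linarith)
  have hχe : χ ^ (a - b) ≤ χ ^ (a - b - 1) :=
    Real.rpow_le_rpow_of_exponent_ge hχ0 hχ1.le (by linarith)
  have hn_e1 : (n:ℝ) ^ (a - b - 1) ≤ (n:ℝ) ^ (a - 1) :=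
    Real.rpow_le_rpow_of_exponent_le hn1' (by linarith)
  have hm_a1 : (m:ℝ) ^ (a - 1) ≤ 6/5 * (χ ^ (a - 1) * (n:ℝ) ^ (a - 1)) := by
    have h1 : (m:ℝ) ^ (a - 1) ≤ ((5/6:ℝ) * (χ * n)) ^ (a - 1) :=
      Real.rpow_le_rpow_of_nonpos (by positivity) hm56 (by linarith)
    have h2 : ((5/6:ℝ) * (χ * n)) ^ (a - 1) = (5/6:ℝ) ^ (a - 1) * (χ * n) ^ (a - 1) :=
      Real.mul_rpow (by norm_num) hcnpos.le
    have h3 : (χ * n) ^ (a - 1) = χ ^ (a - 1) * (n:ℝ) ^ (a - 1) :=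
      Real.mul_rpow hχ0.le hn0.le
    have h4 : (5/6:ℝ) ^ (a - 1) ≤ 6/5 := by
      have h5 : (5/6:ℝ) ^ (a - 1) ≤ (5/6:ℝ) ^ (-1:ℝ) :=
        Real.rpow_le_rpow_of_exponent_ge (by norm_num) (by norm_num) (by linarith)
      have h6 : (5/6:ℝ) ^ (-1:ℝ) = 6/5 := by
        rw [Real.rpow_neg (by norm_num), Real.rpow_one]; norm_num
      linarith
    have h7 : (0:ℝ) ≤ (χ * n) ^ (a - 1) := Real.rpow_nonneg hcnpos.le _
    calc (m:ℝ) ^ (a - 1) ≤ (5/6:ℝ) ^ (a - 1) * (χ * n) ^ (a - 1) := by rw [← h2]; exact h1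
      _ ≤ 6/5 * (χ * n) ^ (a - 1) := mul_le_mul_of_nonneg_right h4 h7
      _ = 6/5 * (χ ^ (a - 1) * (n:ℝ) ^ (a - 1)) := by rw [h3]
  have hm_e1 : (m:ℝ) ^ (a - b - 1) ≤ 36/25 * (χ ^ (a - b - 1) * (n:ℝ) ^ (a - b - 1)) := by
    have h1 : (m:ℝ) ^ (a - b - 1) ≤ ((5/6:ℝ) * (χ * n)) ^ (a - b - 1) :=
      Real.rpow_le_rpow_of_nonpos (by positivity) hm56 (by linarith)
    have h2 : ((5/6:ℝ) * (χ * n)) ^ (a - b - 1)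
        = (5/6:ℝ) ^ (a - b - 1) * (χ * n) ^ (a - b - 1) :=
      Real.mul_rpow (by norm_num) hcnpos.le
    have h3 : (χ * n) ^ (a - b - 1) = χ ^ (a - b - 1) * (n:ℝ) ^ (a - b - 1) :=
      Real.mul_rpow hχ0.le hn0.le
    have h4 : (5/6:ℝ) ^ (a - b - 1) ≤ 36/25 := by
      have h5 : (5/6:ℝ) ^ (a - b - 1) ≤ (5/6:ℝ) ^ (-2:ℝ) :=
        Real.rpow_le_rpow_of_exponent_ge (by norm_num) (by norm_num) (by linarith)
      have h6 : (5/6:ℝ) ^ (-2:ℝ) = 36/25 := by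
        rw [show (-2:ℝ) = -(2:ℝ) by norm_num, Real.rpow_neg (by norm_num),
          show (2:ℝ) = ((2:ℕ):ℝ) by norm_num, Real.rpow_natCast]
        norm_num
      linarith
    have h7 : (0:ℝ) ≤ (χ * n) ^ (a - b - 1) := Real.rpow_nonneg hcnpos.le _
    calc (m:ℝ) ^ (a - b - 1) ≤ (5/6:ℝ) ^ (a - b - 1) * (χ * n) ^ (a - b - 1) := by
          rw [← h2]; exact h1
      _ ≤ 36/25 * (χ * n) ^ (a - b - 1) := mul_le_mul_of_nonneg_right h4 h7
      _ = 36/25 * (χ ^ (a - b - 1) * (n:ℝ) ^ (a - b - 1)) := by rw [h3]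
  have hχee : χ ^ (a - b) * (n:ℝ) ^ (a - b) = (χ * n) ^ (a - b) :=
    (Real.mul_rpow hχ0.le hn0.le).symm
  have hCnn : 0 ≤ (m:ℝ) ^ (a - b) - χ ^ (a - b) * (n:ℝ) ^ (a - b) := by
    rw [hχee]
    have h := Real.rpow_le_rpow_of_nonpos hm0 hmle (by linarith : a - b ≤ 0)
    linarith
  -- combined abstract estimate
  have hW : (0:ℝ) < χ ^ (a - b - 1) * (n:ℝ) ^ (a - 1) :=
    mul_pos (Real.rpow_pos_of_pos hχ0 _) (Real.rpow_pos_of_pos hn0 _)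
  have hK : (3/2 + 6/5 + 36/25 * (b - a)) * (1 - a) ≤ 6 * (2 - b) := by
    nlinarith [mul_nonneg hq0 ha0.le]
  have hconst : (3/2 + 6/5 + 36/25 * (b - a)) * c ≤ 6 * ((2 - b) / (1 - b)) := by
    rw [hcdef, show (3/2 + 6/5 + 36/25 * (b - a)) * ((1 - a) / (1 - b))
        = ((3/2 + 6/5 + 36/25 * (b - a)) * (1 - a)) / (1 - b) from by ring,
      show (6:ℝ) * ((2 - b) / (1 - b)) = (6 * (2 - b)) / (1 - b) from by ring,
      div_le_div_iff₀ h1b h1b]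
    exact mul_le_mul_of_nonneg_right hK h1b.le
  have hfinal : ∀ X Y : ℝ,
      |X - c * (m:ℝ) ^ (a - b)| ≤ 5 / (5 - 1) * c * (m:ℝ) ^ (a - 1) →
      |Y - c * (n:ℝ) ^ (a - b)| ≤ 6 / (6 - 1) * c * (n:ℝ) ^ (a - 1) →
      |X - χ ^ (a - b) * Y| ≤ 6 * ((2 - b) / (1 - b)) * (χ ^ (a - b - 1) * (n:ℝ) ^ (a - 1)) := by
    intro X Y hX hY
    have hXA : |X - c * (m:ℝ) ^ (a - b)| ≤ 3/2 * (c * (χ ^ (a - b - 1) * (n:ℝ) ^ (a - 1))) := by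
      calc |X - c * (m:ℝ) ^ (a - b)| ≤ 5 / (5 - 1) * c * (m:ℝ) ^ (a - 1) := hX
        _ = 5/4 * c * (m:ℝ) ^ (a - 1) := by norm_num
        _ ≤ 5/4 * c * (6/5 * (χ ^ (a - 1) * (n:ℝ) ^ (a - 1))) :=
            mul_le_mul_of_nonneg_left hm_a1 (by positivity)
        _ = 3/2 * (c * (χ ^ (a - 1) * (n:ℝ) ^ (a - 1))) := by ring
        _ ≤ 3/2 * (c * (χ ^ (a - b - 1) * (n:ℝ) ^ (a - 1))) :=
            mul_le_mul_of_nonneg_left (mul_le_mul_of_nonneg_left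
              (mul_le_mul_of_nonneg_right hχa hnn1) hc0.le) (by norm_num)
    have hYB : χ ^ (a - b) * |Y - c * (n:ℝ) ^ (a - b)|
        ≤ 6/5 * (c * (χ ^ (a - b - 1) * (n:ℝ) ^ (a - 1))) := by
      calc χ ^ (a - b) * |Y - c * (n:ℝ) ^ (a - b)|
          ≤ χ ^ (a - b) * (6 / (6 - 1) * c * (n:ℝ) ^ (a - 1)) :=
            mul_le_mul_of_nonneg_left hY hχpos.le
        _ = (6/5 * c * (n:ℝ) ^ (a - 1)) * χ ^ (a - b) := by ring
        _ ≤ (6/5 * c * (n:ℝ) ^ (a - 1)) * χ ^ (a - b - 1) :=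
            mul_le_mul_of_nonneg_left hχe (by positivity)
        _ = 6/5 * (c * (χ ^ (a - b - 1) * (n:ℝ) ^ (a - 1))) := by ring
    have hCC : c * ((m:ℝ) ^ (a - b) - χ ^ (a - b) * (n:ℝ) ^ (a - b))
        ≤ 36/25 * ((b - a) * (c * (χ ^ (a - b - 1) * (n:ℝ) ^ (a - 1)))) := by
      rw [hχee]
      have hmp : (0:ℝ) ≤ (m:ℝ) ^ (a - b - 1) := Real.rpow_nonneg hm0.le _
      have hd1 : χ * n - m ≤ 1 := by linarith
      have hχp1 : (0:ℝ) ≤ χ ^ (a - b - 1) := (Real.rpow_pos_of_pos hχ0 _).le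
      calc c * ((m:ℝ) ^ (a - b) - (χ * n) ^ (a - b))
          ≤ c * ((b - a) * (χ * n - m) * (m:ℝ) ^ (a - b - 1)) :=
            mul_le_mul_of_nonneg_left hthird0 hc0.le
        _ ≤ c * ((b - a) * 1 * (m:ℝ) ^ (a - b - 1)) :=
            mul_le_mul_of_nonneg_left
              (mul_le_mul_of_nonneg_right (mul_le_mul_of_nonneg_left hd1 hq0) hmp) hc0.le
        _ = (c * (b - a)) * (m:ℝ) ^ (a - b - 1) := by ring
        _ ≤ (c * (b - a)) * (36/25 * (χ ^ (a - b - 1) * (n:ℝ) ^ (a - b - 1))) :=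
            mul_le_mul_of_nonneg_left hm_e1 (mul_nonneg hc0.le hq0)
        _ ≤ (c * (b - a)) * (36/25 * (χ ^ (a - b - 1) * (n:ℝ) ^ (a - 1))) := by
            apply mul_le_mul_of_nonneg_left ?_ (mul_nonneg hc0.le hq0)
            apply mul_le_mul_of_nonneg_left ?_ (by norm_num : (0:ℝ) ≤ 36/25)
            exact mul_le_mul_of_nonneg_left hn_e1 hχp1
        _ = 36/25 * ((b - a) * (c * (χ ^ (a - b - 1) * (n:ℝ) ^ (a - 1)))) := by ring
    have hsplit : X - χ ^ (a - b) * Y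
        = (X - c * (m:ℝ) ^ (a - b)) - χ ^ (a - b) * (Y - c * (n:ℝ) ^ (a - b))
          + c * ((m:ℝ) ^ (a - b) - χ ^ (a - b) * (n:ℝ) ^ (a - b)) := by ring
    have htri : |X - χ ^ (a - b) * Y|
        ≤ |X - c * (m:ℝ) ^ (a - b)| + χ ^ (a - b) * |Y - c * (n:ℝ) ^ (a - b)|
          + c * ((m:ℝ) ^ (a - b) - χ ^ (a - b) * (n:ℝ) ^ (a - b)) := by
      rw [hsplit]
      set A := X - c * (m:ℝ) ^ (a - b)
      set B := Y - c * (n:ℝ) ^ (a - b)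
      set C := (m:ℝ) ^ (a - b) - χ ^ (a - b) * (n:ℝ) ^ (a - b)
      have h1 : |A - χ ^ (a - b) * B + c * C| ≤ |A - χ ^ (a - b) * B| + |c * C| :=
        abs_add_le _ _
      have h2 : |A - χ ^ (a - b) * B| ≤ |A| + |χ ^ (a - b) * B| := abs_sub _ _
      have h3 : |χ ^ (a - b) * B| = χ ^ (a - b) * |B| := by
        rw [abs_mul, abs_of_pos hχpos]
      have h4 : |c * C| = c * C := abs_of_nonneg (mul_nonneg hc0.le hCnn)
      rw [h3] at h2
      rw [h4] at h1
      linarith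
    have hsum : |X - χ ^ (a - b) * Y|
        ≤ (3/2 + 6/5 + 36/25 * (b - a)) * (c * (χ ^ (a - b - 1) * (n:ℝ) ^ (a - 1))) := by
      have hexp : (3/2 + 6/5 + 36/25 * (b - a)) * (c * (χ ^ (a - b - 1) * (n:ℝ) ^ (a - 1)))
          = 3/2 * (c * (χ ^ (a - b - 1) * (n:ℝ) ^ (a - 1)))
            + 6/5 * (c * (χ ^ (a - b - 1) * (n:ℝ) ^ (a - 1)))
            + 36/25 * ((b - a) * (c * (χ ^ (a - b - 1) * (n:ℝ) ^ (a - 1)))) := by ring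
      rw [hexp]
      linarith only [htri, hXA, hYB, hCC]
    calc |X - χ ^ (a - b) * Y|
        ≤ (3/2 + 6/5 + 36/25 * (b - a)) * (c * (χ ^ (a - b - 1) * (n:ℝ) ^ (a - 1))) := hsum
      _ = ((3/2 + 6/5 + 36/25 * (b - a)) * c) * (χ ^ (a - b - 1) * (n:ℝ) ^ (a - 1)) := by
          ring
      _ ≤ (6 * ((2 - b) / (1 - b))) * (χ ^ (a - b - 1) * (n:ℝ) ^ (a - 1)) :=
          mul_le_mul_of_nonneg_right hconst hW.le
  -- put everything together
  rw [hratio m hm1, hratio n hn1,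
    show -(a * ((ℓ:ℝ) - 1)) = a - b from by rw [hbdef]; ring,
    show (-1:ℝ) - a * ((ℓ:ℝ) - 1) = a - b - 1 from by rw [hbdef]; ring,
    show -(1 - a) = a - 1 from by ring]
  have hmain := hfinal _ _ hdevm hdevn
  have hfact : γ₁ ^ (ℓ - 1) * ((∑ k ∈ Icc 1 m, (k:ℝ) ^ (-b)) / (∑ k ∈ Icc 1 m, (k:ℝ) ^ (-a)))
      - χ ^ (a - b) * (γ₁ ^ (ℓ - 1) *
        ((∑ k ∈ Icc 1 n, (k:ℝ) ^ (-b)) / (∑ k ∈ Icc 1 n, (k:ℝ) ^ (-a))))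
      = γ₁ ^ (ℓ - 1) * (((∑ k ∈ Icc 1 m, (k:ℝ) ^ (-b)) / (∑ k ∈ Icc 1 m, (k:ℝ) ^ (-a)))
        - χ ^ (a - b) * ((∑ k ∈ Icc 1 n, (k:ℝ) ^ (-b)) / (∑ k ∈ Icc 1 n, (k:ℝ) ^ (-a)))) := by
    ring
  rw [hfact, abs_mul, abs_of_pos (pow_pos hγ₁ (ℓ - 1))]
  calc γ₁ ^ (ℓ - 1) * |((∑ k ∈ Icc 1 m, (k:ℝ) ^ (-b)) / (∑ k ∈ Icc 1 m, (k:ℝ) ^ (-a)))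
        - χ ^ (a - b) * ((∑ k ∈ Icc 1 n, (k:ℝ) ^ (-b)) / (∑ k ∈ Icc 1 n, (k:ℝ) ^ (-a)))|
      ≤ γ₁ ^ (ℓ - 1) * (6 * ((2 - b) / (1 - b)) * (χ ^ (a - b - 1) * (n:ℝ) ^ (a - 1))) :=
        mul_le_mul_of_nonneg_left hmain (pow_pos hγ₁ _).le
    _ = 6 * ((2 - b) / (1 - b)) * γ₁ ^ (ℓ - 1) * χ ^ (a - b - 1) * (n:ℝ) ^ (a - 1) := by ring
end
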